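/- arXiv:2502.13517 — 5 statements merged into one kernel-verified Lean document; each statement's English description precedes it below -/
import Mathlib

section
/- Let 0<p<∞, φ∈𝒢_p(𝔻), φ(1)=1, sup_k φ(2^k)=∞, and lim_{k→∞} 2^{−kd/p}φ(2^k)=0. Let m_{φ,p}^{00} be the closure of the finitely supported sequences in m_{φ,p}(ℤ^d) and m_{φ,p}^0 = m_{φ,p}(ℤ^d) ∩ c₀(ℤ^d). Then m_{φ,p}^0 is closed in m_{φ,p}(ℤ^d), and m_{φ,p}^{00} ⊊ m_{φ,p}^0 ⊊ m_{φ,p}(ℤ^d): all three inclusions are strict. -/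
open ENNReal Filter

noncomputable section

/-- `Q_{0,k} ⊂ Q_{-j,m}` for dyadic cubes `Q_{-j,m} = 2^j([0,1)^d + m)`. -/
def inCube (d j : ℕ) (m k : Fin d → ℤ) : Prop :=
  ∀ i, 2 ^ j * m i ≤ k i ∧ k i < 2 ^ j * (m i + 1)

/-- the local quantity `(Σ_{k : Q_{0,k} ⊂ Q_{-j,m}} |λ_k|^p)^{1/p}`, in `ℝ≥0∞`. -/
def localSum (d : ℕ) (p : ℝ) (j : ℕ) (m : Fin d → ℤ)
    (lam : (Fin d → ℤ) → ℂ) : ℝ≥0∞ :=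
  (∑' k : {k : Fin d → ℤ // inCube d j m k}, ENNReal.ofReal ‖lam k.1‖ ^ p) ^ (1 / p)

/-- quasi-norm of the generalised Morrey sequence space `m_{φ,p}(ℤ^d)`;
`φ j` stands for `φ(2^j)`. -/
def mNorm (d : ℕ) (p : ℝ) (φ : ℕ → ℝ) (lam : (Fin d → ℤ) → ℂ) : ℝ≥0∞ :=
  ⨆ (j : ℕ) (m : Fin d → ℤ),
    ENNReal.ofReal (φ j) * (2 : ℝ≥0∞) ^ (-((j : ℝ) * d) / p) * localSum d p j m lam

def ellpNorm (d : ℕ) (p : ℝ) (lam : (Fin d → ℤ) → ℂ) : ℝ≥0∞ :=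
  (∑' k : Fin d → ℤ, ENNReal.ofReal ‖lam k‖ ^ p) ^ (1 / p)

def linftyNorm (d : ℕ) (lam : (Fin d → ℤ) → ℂ) : ℝ≥0∞ :=
  ⨆ k : Fin d → ℤ, ENNReal.ofReal ‖lam k‖

/-- the class `𝒢_p(𝔻)`: `φ(2^k)` is positive, nondecreasing and
`2^{-kd/p} φ(2^k)` is nonincreasing. -/
def Gp (d : ℕ) (p : ℝ) (φ : ℕ → ℝ) : Prop :=
  (∀ k, 0 < φ k) ∧
  ∀ j k : ℕ, j ≤ k → φ j ≤ φ k ∧ φ k ≤ φ j * 2 ^ (((k : ℝ) - j) * d / p)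

attribute [local instance 10] Classical.propDecidable

lemma inCube_iff (d j : ℕ) (m k : Fin d → ℤ) :
    inCube d j m k ↔
      ∀ t, ((2^j:ℕ):ℤ) * m t ≤ k t ∧ k t < ((2^j:ℕ):ℤ) * m t + ((2^j:ℕ):ℤ) := by
  unfold inCube
  push_cast
  exact forall_congr' fun t => by constructor <;> rintro ⟨h1, h2⟩ <;>
    exact ⟨h1, by linarith⟩

-- box equiv
def cubeEquiv (d j : ℕ) (m : Fin d → ℤ) :
    {k : Fin d → ℤ // inCube d j m k} ≃ (Fin d → Fin (2 ^ j)) where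
  toFun k t := ⟨(k.1 t - ((2^j:ℕ):ℤ) * m t).toNat, by
    have h := (inCube_iff d j m k.1).1 k.2 t
    omega⟩
  invFun v := ⟨fun t => ((2^j:ℕ):ℤ) * m t + (v t : ℤ), by
    rw [inCube_iff]
    intro t
    have h2 : ((v t : ℕ) : ℤ) < ((2^j : ℕ) : ℤ) := by exact_mod_cast (v t).2
    constructor <;> omega⟩
  left_inv k := by
    ext t
    have h := (inCube_iff d j m k.1).1 k.2 t
    simp only
    omega
  right_inv v := by
    funext t
    have h2 : ((v t : ℕ) : ℤ) < ((2^j : ℕ) : ℤ) := by exact_mod_cast (v t).2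
    ext
    simp only
    omega

lemma tsum_cube_const (d j : ℕ) (m : Fin d → ℤ) (c : ℝ≥0∞) :
    ∑' _ : {k : Fin d → ℤ // inCube d j m k}, c = 2 ^ (j * d) * c := by
  classical
  rw [← Equiv.tsum_eq (cubeEquiv d j m).symm (fun _ => c), tsum_fintype]
  simp [Finset.sum_const, Fintype.card_fun, nsmul_eq_mul, pow_mul]

lemma cube_finite (d j : ℕ) (m : Fin d → ℤ) : {k | inCube d j m k}.Finite := by
  have : Finite {k : Fin d → ℤ // inCube d j m k} :=
    Finite.of_equiv _ (cubeEquiv d j m).symm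
  exact Set.finite_coe_iff.mp this

lemma tsum_cube_ite (d j : ℕ) (m : Fin d → ℤ) (f : (Fin d → ℤ) → ℝ≥0∞) :
    ∑' k : {k : Fin d → ℤ // inCube d j m k}, f k.1
      = ∑' k : Fin d → ℤ, if inCube d j m k then f k else 0 := by
  refine (tsum_subtype {k | inCube d j m k} f).trans (tsum_congr fun k => ?_)
  by_cases h : inCube d j m k <;> simp [Set.indicator_apply, h]

lemma tsum_ite_cube_const (d j : ℕ) (m : Fin d → ℤ) (c : ℝ≥0∞) :
    ∑' k : Fin d → ℤ, (if inCube d j m k then c else 0) = 2 ^ (j * d) * c := by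
  rw [← tsum_cube_ite d j m (fun _ => c), tsum_cube_const]

lemma localSum_rpow (d : ℕ) {p : ℝ} (hp : 0 < p) (j : ℕ) (m : Fin d → ℤ)
    (lam : (Fin d → ℤ) → ℂ) :
    localSum d p j m lam ^ p
      = ∑' k : Fin d → ℤ, if inCube d j m k then ENNReal.ofReal ‖lam k‖ ^ p else 0 := by
  rw [localSum, ← ENNReal.rpow_mul, one_div, inv_mul_cancel₀ hp.ne', ENNReal.rpow_one,
    tsum_cube_ite d j m (fun k => ENNReal.ofReal ‖lam k‖ ^ p)]

lemma pointwise_le_mNorm (d : ℕ) {p : ℝ} (hp : 0 < p) (φ : ℕ → ℝ) (hφ1 : φ 0 = 1)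
    (lam : (Fin d → ℤ) → ℂ) (k : Fin d → ℤ) :
    ENNReal.ofReal ‖lam k‖ ≤ mNorm d p φ lam := by
  have hk : inCube d 0 k k := fun t => by constructor <;> simp
  have h1 : ENNReal.ofReal ‖lam k‖ ^ p
      ≤ ∑' k' : {k' : Fin d → ℤ // inCube d 0 k k'}, ENNReal.ofReal ‖lam k'.1‖ ^ p :=
    ENNReal.le_tsum (f := fun k' : {k' : Fin d → ℤ // inCube d 0 k k'} =>
      ENNReal.ofReal ‖lam k'.1‖ ^ p) ⟨k, hk⟩
  have h2 : ENNReal.ofReal ‖lam k‖ ≤ localSum d p 0 k lam := by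
    have h := ENNReal.rpow_le_rpow h1 (by positivity : (0:ℝ) ≤ 1/p)
    rwa [← ENNReal.rpow_mul, mul_one_div, div_self hp.ne', ENNReal.rpow_one] at h
  have h3 : ENNReal.ofReal (φ 0) * (2:ℝ≥0∞) ^ (-((0:ℕ):ℝ) * d / p) * localSum d p 0 k lam
      ≤ mNorm d p φ lam := by
    refine le_trans ?_ (le_iSup _ 0)
    refine le_trans ?_ (le_iSup _ k)
    simp [neg_div]
  refine le_trans ?_ h3
  have : ENNReal.ofReal (φ 0) * (2:ℝ≥0∞) ^ (-((0:ℕ):ℝ) * d / p) = 1 := by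
    simp [hφ1]
  rw [this, one_mul]
  exact h2

lemma approx_tendsto (d : ℕ) {p : ℝ} (hp : 0 < p) (φ : ℕ → ℝ) (hφ1 : φ 0 = 1)
    (lam : (Fin d → ℤ) → ℂ)
    (h : ∀ ε : ℝ, 0 < ε → ∃ mu : (Fin d → ℤ) → ℂ,
      Tendsto mu cofinite (nhds 0) ∧ mNorm d p φ (lam - mu) < ENNReal.ofReal ε) :
    Tendsto lam cofinite (nhds 0) := by
  rw [Metric.tendsto_nhds]
  intro ε hε
  obtain ⟨mu, hmu, hnorm⟩ := h (ε/2) (by linarith)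
  have hptw : ∀ k, ‖lam k - mu k‖ < ε/2 := by
    intro k
    have hle := lt_of_le_of_lt (pointwise_le_mNorm d hp φ hφ1 (lam - mu) k) hnorm
    by_contra hcon
    push_neg at hcon
    exact absurd (ENNReal.ofReal_le_ofReal hcon) (not_le.mpr hle)
  have hev := Metric.tendsto_nhds.mp hmu (ε/2) (by linarith)
  filter_upwards [hev] with k hk
  have htri : dist (lam k) 0 ≤ ‖lam k - mu k‖ + dist (mu k) 0 := by
    rw [dist_zero_right, dist_zero_right]
    calc ‖lam k‖ = ‖(lam k - mu k) + mu k‖ := by ring_nf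
      _ ≤ ‖lam k - mu k‖ + ‖mu k‖ := norm_add_le _ _
  calc dist (lam k) 0 ≤ ‖lam k - mu k‖ + dist (mu k) 0 := htri
    _ < ε/2 + ε/2 := add_lt_add (hptw k) hk
    _ = ε := by ring

def mi (d : ℕ) (s L : ℕ → ℕ) (i : ℕ) : Fin d → ℤ :=
  fun t => if (t : ℕ) = 0 then 2 ^ (L i - s i) else 0

lemma inQ_coord0 {d : ℕ} (hd : 0 < d) {s L : ℕ → ℕ} {i : ℕ} (hsL : s i ≤ L i)
    {k : Fin d → ℤ} (hk : inCube d (s i) (mi d s L i) k) :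
    (2:ℤ)^(L i) ≤ k ⟨0,hd⟩ ∧ k ⟨0,hd⟩ < 2^(L i) + 2^(s i) := by
  have h := hk ⟨0, hd⟩
  rw [show mi d s L i ⟨0,hd⟩ = 2^(L i - s i) from if_pos rfl] at h
  have hmul : (2:ℤ)^(s i) * 2^(L i - s i) = 2^(L i) := by
    rw [← pow_add]; congr 1; omega
  rw [mul_add, mul_one, hmul] at h
  exact h

lemma sep_lemma {d : ℕ} (hd : 0 < d) {s L : ℕ → ℕ} (hsL : ∀ i, s i ≤ L i)
    (hgap : ∀ i, L i + 2 ≤ L (i+1)) {i₀ i j : ℕ} (hlt : i₀ < i) {m : Fin d → ℤ}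
    {k k' : Fin d → ℤ} (hk : inCube d j m k) (hq : inCube d (s i₀) (mi d s L i₀) k)
    (hk' : inCube d j m k') (hq' : inCube d (s i) (mi d s L i) k') : L i ≤ j := by
  have hLmono : Monotone L := monotone_nat_of_le_succ (fun n => by linarith [hgap n])
  have hL2 : L i₀ + 2 ≤ L i := le_trans (hgap i₀) (hLmono hlt)
  obtain ⟨hb1, hb2⟩ := inQ_coord0 hd (hsL i₀) hq
  obtain ⟨hc1, _⟩ := inQ_coord0 hd (hsL i) hq'
  have hk0 := hk ⟨0, hd⟩
  have hk'0 := hk' ⟨0, hd⟩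
  rw [mul_add, mul_one] at hk0 hk'0
  have ha : (2:ℤ)^(s i₀) ≤ 2^(L i₀) := pow_le_pow_right₀ (by norm_num) (hsL i₀)
  have h2b : 2 * (2:ℤ)^(L i₀) ≤ 2^(L i - 1) := by
    calc 2 * (2:ℤ)^(L i₀) = 2^(L i₀ + 1) := by rw [pow_succ]; ring
      _ ≤ 2^(L i - 1) := pow_le_pow_right₀ (by norm_num) (by omega)
  have hc : (2:ℤ)^(L i) = 2 * 2^(L i - 1) := by
    rw [← pow_succ']; congr 1; omega
  have hkey : (2:ℤ)^(L i - 1) < 2^j := by omega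
  have : L i - 1 < j := by
    by_contra hcon
    push_neg at hcon
    exact absurd (pow_le_pow_right₀ (by norm_num : (1:ℤ) ≤ 2) hcon) (not_le.mpr hkey)
  omega

lemma e2pow (n : ℕ) : (2:ℝ≥0∞)^n = ENNReal.ofReal ((2:ℝ)^n) := by
  rw [ENNReal.ofReal_pow (by norm_num : (0:ℝ) ≤ 2), ENNReal.ofReal_ofNat]

lemma e2pow_inv (n : ℕ) : ((2:ℝ≥0∞)^n)⁻¹ = ENNReal.ofReal (((2:ℝ)^n)⁻¹) := by
  rw [e2pow, ← ENNReal.ofReal_inv_of_pos (by positivity)]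

lemma e_two_rpow {p : ℝ} (hp : 0 < p) (n : ℕ) :
    ((2:ℝ≥0∞) ^ (-((n:ℝ)) / p)) ^ p = ((2:ℝ≥0∞)^n)⁻¹ := by
  rw [← ENNReal.rpow_natCast 2 n, ← ENNReal.rpow_neg, ← ENNReal.rpow_mul]
  congr 1
  field_simp

lemma einv_geom (i : ℕ) : ENNReal.ofReal (((2:ℝ)^i)⁻¹) = (2⁻¹:ℝ≥0∞)^i := by
  rw [← e2pow_inv, ENNReal.inv_pow]

lemma rineq2 {X Y Bj Bs K : ℝ} (hX : 0 < X) (hY : 0 < Y) (hBj : 0 < Bj) (hBs : 0 < Bs)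
    (hK : X * Bj⁻¹ ≤ K * (Y * Bs⁻¹)) : X * Bj⁻¹ * Bs * Y⁻¹ ≤ K := by
  calc X * Bj⁻¹ * Bs * Y⁻¹ = (X * Bj⁻¹) * (Bs * Y⁻¹) := by ring
    _ ≤ (K * (Y * Bs⁻¹)) * (Bs * Y⁻¹) := mul_le_mul_of_nonneg_right hK (by positivity)
    _ = K := by field_simp

section Main

lemma mainBound {d : ℕ} (hd : 0 < d) {p : ℝ} (hp : 0 < p) (φ : ℕ → ℝ)
    (hpos : ∀ k, 0 < φ k) (s L : ℕ → ℕ)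
    (hmono : ∀ j k : ℕ, j ≤ k → φ j ≤ φ k)
    (hamono : ∀ j k : ℕ, j ≤ k → φ k ^ p * ((2:ℝ)^(k*d))⁻¹ ≤ φ j ^ p * ((2:ℝ)^(j*d))⁻¹)
    (hsL : ∀ i, s i ≤ L i) (hgap : ∀ i, L i + 2 ≤ L (i+1))
    (hdecay : ∀ i, φ (L i) ^ p * ((2:ℝ)^(L i * d))⁻¹
      ≤ ((2:ℝ)^i)⁻¹ * (φ (s i) ^ p * ((2:ℝ)^(s i * d))⁻¹))
    (lam : (Fin d → ℤ) → ℂ)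
    (hlamQ : ∀ i k, inCube d (s i) (mi d s L i) k → lam k = (((φ (s i))⁻¹ : ℝ) : ℂ))
    (hlam0 : ∀ k, (∀ i, ¬ inCube d (s i) (mi d s L i) k) → lam k = 0) :
    mNorm d p φ lam ≤ (3:ℝ≥0∞) ^ (1/p) := by
  have hφp : ∀ n, (0:ℝ) < φ n ^ p := fun n => Real.rpow_pos_of_pos (hpos n) p
  rw [mNorm]
  refine iSup_le fun j => iSup_le fun m => ?_
  have hkey : (ENNReal.ofReal (φ j) * (2:ℝ≥0∞) ^ (-((j:ℝ)*d)/p) * localSum d p j m lam) ^ p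
      ≤ 3 := by
    rw [ENNReal.mul_rpow_of_nonneg _ _ hp.le, ENNReal.mul_rpow_of_nonneg _ _ hp.le,
      localSum_rpow d hp j m lam]
    have h2 : ((2:ℝ≥0∞) ^ (-((j:ℝ)*d)/p)) ^ p = ((2:ℝ≥0∞)^(j*d))⁻¹ := by
      rw [← ENNReal.rpow_mul, div_mul_cancel₀ _ hp.ne', ENNReal.rpow_neg,
        ← ENNReal.rpow_natCast 2 (j*d)]
      congr 2
      push_cast
      ring
    rw [h2, ENNReal.ofReal_rpow_of_pos (hpos j)]
    set c : ℕ → ℝ≥0∞ := fun i => ENNReal.ofReal ((φ (s i) ^ p)⁻¹) with hc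
    set A : ℝ≥0∞ := ENNReal.ofReal (φ j ^ p) * ((2:ℝ≥0∞)^(j*d))⁻¹ with hA
    set S : ℕ → ℝ≥0∞ := fun i => ∑' k : Fin d → ℤ,
      if inCube d j m k ∧ inCube d (s i) (mi d s L i) k then c i else 0 with hSdef
    -- pointwise bound of the local sum by the i-sum
    have hS : (∑' k : Fin d → ℤ, if inCube d j m k then ENNReal.ofReal ‖lam k‖ ^ p else 0)
        ≤ ∑' i, S i := by
      rw [hSdef, ENNReal.tsum_comm (f := fun i k => if inCube d j m k ∧
        inCube d (s i) (mi d s L i) k then c i else 0)]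
      refine ENNReal.tsum_le_tsum fun k => ?_
      by_cases hk : inCube d j m k
      · rw [if_pos hk]
        by_cases hq : ∃ i, inCube d (s i) (mi d s L i) k
        · obtain ⟨i, hi⟩ := hq
          have hv : ENNReal.ofReal ‖lam k‖ ^ p = c i := by
            rw [hlamQ i k hi, Complex.norm_real, Real.norm_eq_abs,
              abs_of_pos (inv_pos.mpr (hpos (s i))),
              ENNReal.ofReal_rpow_of_pos (inv_pos.mpr (hpos (s i))),
              Real.inv_rpow (hpos (s i)).le]
          rw [hv]
          refine le_trans ?_ (ENNReal.le_tsum (f := fun i' => if inCube d j m k ∧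
            inCube d (s i') (mi d s L i') k then c i' else 0) i)
          rw [if_pos ⟨hk, hi⟩]
        · rw [hlam0 k (not_exists.mp hq)]
          simp [ENNReal.zero_rpow_of_pos hp]
      · rw [if_neg hk]
        exact zero_le
    -- sub-bounds for each S i
    have hSi1 : ∀ i, S i ≤ 2^(j*d) * c i := by
      intro i
      refine le_trans (ENNReal.tsum_le_tsum fun k => ?_)
        (le_of_eq (tsum_ite_cube_const d j m (c i)))
      split_ifs with h1 h2 <;> simp_all
    have hSi2 : ∀ i, S i ≤ 2^(s i * d) * c i := by
      intro i
      refine le_trans (ENNReal.tsum_le_tsum fun k => ?_)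
        (le_of_eq (tsum_ite_cube_const d (s i) (mi d s L i) (c i)))
      split_ifs with h1 h2 <;> simp_all
    have h2ne : ∀ n : ℕ, ((2:ℝ≥0∞)^n ≠ 0 ∧ (2:ℝ≥0∞)^n ≠ ⊤) := by
      intro n
      exact ⟨pow_ne_zero _ (by norm_num), ENNReal.pow_ne_top (by norm_num)⟩
    -- case (b) bound
    have hb2 : ∀ i (K : ℝ), s i ≤ j →
        (φ j ^ p * ((2:ℝ)^(j*d))⁻¹ ≤ K * (φ (s i) ^ p * ((2:ℝ)^(s i * d))⁻¹)) →
        A * S i ≤ ENNReal.ofReal K := by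
      intro i K hsij hK
      calc A * S i ≤ A * (2^(s i * d) * c i) := mul_le_mul_right (hSi2 i) _
        _ = ENNReal.ofReal (φ j ^ p) * ENNReal.ofReal (((2:ℝ)^(j*d))⁻¹)
            * ENNReal.ofReal ((2:ℝ)^(s i * d)) * ENNReal.ofReal ((φ (s i) ^ p)⁻¹) := by
            rw [hA, e2pow_inv, e2pow, hc]
            ring
        _ = ENNReal.ofReal (φ j ^ p * ((2:ℝ)^(j*d))⁻¹ * (2:ℝ)^(s i * d) * (φ (s i) ^ p)⁻¹) := by
            rw [← ENNReal.ofReal_mul (hφp j).le,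
              ← ENNReal.ofReal_mul (mul_nonneg (hφp j).le (by positivity)),
              ← ENNReal.ofReal_mul (mul_nonneg (mul_nonneg (hφp j).le (by positivity))
                (by positivity))]
        _ ≤ ENNReal.ofReal K := ENNReal.ofReal_le_ofReal
            (rineq2 (hφp j) (hφp (s i)) (by positivity) (by positivity) hK)
    -- case (a) bound
    have hb1 : ∀ i, j ≤ s i → A * S i ≤ 1 := by
      intro i hji
      calc A * S i ≤ A * (2^(j*d) * c i) := mul_le_mul_right (hSi1 i) _
        _ = ENNReal.ofReal (φ j ^ p) * (((2:ℝ≥0∞)^(j*d))⁻¹ * 2^(j*d)) * c i := by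
            rw [hA]; ring
        _ = ENNReal.ofReal (φ j ^ p) * c i := by
            rw [ENNReal.inv_mul_cancel (h2ne (j*d)).1 (h2ne (j*d)).2, mul_one]
        _ = ENNReal.ofReal (φ j ^ p * (φ (s i) ^ p)⁻¹) := by
            rw [hc, ← ENNReal.ofReal_mul (hφp j).le]
        _ ≤ 1 := by
            rw [← ENNReal.ofReal_one]
            refine ENNReal.ofReal_le_ofReal ?_
            rw [← div_eq_mul_inv]
            exact div_le_one_of_le₀
              (Real.rpow_le_rpow (hpos j).le (hmono j (s i) hji) hp.le) (hφp (s i)).le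
    -- trivial case: no cube meets the support
    by_cases hP : ∃ i, ∃ k, inCube d j m k ∧ inCube d (s i) (mi d s L i) k
    · set i₀ := Nat.find hP with hi₀def
      have hper : ∀ i, A * S i ≤ (if i = i₀ then 1 else 0) + (2⁻¹:ℝ≥0∞)^i := by
        intro i
        by_cases hw : ∃ k, inCube d j m k ∧ inCube d (s i) (mi d s L i) k
        · by_cases hii : i = i₀
          · refine le_trans ?_ le_self_add
            rw [if_pos hii]
            rcases le_total j (s i) with hji | hsij
            · exact hb1 i hji
            · have := hb2 i 1 hsij (by rw [one_mul]; exact hamono (s i) j hsij)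
              rwa [ENNReal.ofReal_one] at this
          · have hlt : i₀ < i := lt_of_le_of_ne (Nat.find_le hw) (Ne.symm hii)
            obtain ⟨k₀, hk₀, hq₀⟩ := Nat.find_spec hP
            obtain ⟨k₁, hk₁, hq₁⟩ := hw
            have hLj : L i ≤ j := sep_lemma hd hsL hgap hlt hk₀ hq₀ hk₁ hq₁
            have hsij : s i ≤ j := le_trans (hsL i) hLj
            have hK : φ j ^ p * ((2:ℝ)^(j*d))⁻¹
                ≤ ((2:ℝ)^i)⁻¹ * (φ (s i) ^ p * ((2:ℝ)^(s i * d))⁻¹) :=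
              le_trans (hamono (L i) j hLj) (hdecay i)
            have := hb2 i ((2:ℝ)^i)⁻¹ hsij hK
            rw [einv_geom] at this
            exact le_trans this (by rw [if_neg hii, zero_add])
        · have hS0 : S i = 0 := by
            rw [hSdef]
            refine ENNReal.tsum_eq_zero.mpr fun k => if_neg fun hcon => hw ⟨k, hcon⟩
          simp [hS0]
      calc A * (∑' k : Fin d → ℤ, if inCube d j m k then ENNReal.ofReal ‖lam k‖ ^ p else 0)
          ≤ A * ∑' i, S i := mul_le_mul_right hS _
        _ = ∑' i, A * S i := ENNReal.tsum_mul_left.symm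
        _ ≤ ∑' i, ((if i = i₀ then 1 else 0) + (2⁻¹:ℝ≥0∞)^i) := ENNReal.tsum_le_tsum hper
        _ = 1 + 2 := by
            rw [ENNReal.tsum_add, tsum_ite_eq, ENNReal.tsum_geometric]
            congr 1
            rw [ENNReal.one_sub_inv_two, inv_inv]
        _ ≤ 3 := by norm_num
    · push_neg at hP
      have hS0 : (∑' k : Fin d → ℤ, if inCube d j m k then ENNReal.ofReal ‖lam k‖ ^ p else 0)
          = 0 := by
        refine ENNReal.tsum_eq_zero.mpr fun k => ?_
        by_cases hk : inCube d j m k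
        · rw [if_pos hk, hlam0 k (fun i hcon => hP i k hk hcon)]
          simp [ENNReal.zero_rpow_of_pos hp]
        · exact if_neg hk
      rw [hS0, mul_zero]
      exact zero_le
  have hfin := ENNReal.rpow_le_rpow hkey (by positivity : (0:ℝ) ≤ 1/p)
  rwa [← ENNReal.rpow_mul, mul_one_div, div_self hp.ne', ENNReal.rpow_one] at hfin

end Main

lemma lowerBound {d : ℕ} {p : ℝ} (hp : 0 < p) (φ : ℕ → ℝ) (hpos : ∀ k, 0 < φ k)
    (s L : ℕ → ℕ) (i : ℕ) (nu : (Fin d → ℤ) → ℂ)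
    (hnu : ∀ k, inCube d (s i) (mi d s L i) k → nu k = (((φ (s i))⁻¹ : ℝ) : ℂ)) :
    (1:ℝ≥0∞) ≤ mNorm d p φ nu := by
  have hval : ∀ k : {k : Fin d → ℤ // inCube d (s i) (mi d s L i) k},
      ENNReal.ofReal ‖nu k.1‖ ^ p = ENNReal.ofReal ((φ (s i))⁻¹) ^ p := by
    intro k
    rw [hnu k.1 k.2, Complex.norm_real, Real.norm_eq_abs,
      abs_of_pos (inv_pos.mpr (hpos (s i)))]
  have hls : localSum d p (s i) (mi d s L i) nu
      = ((2:ℝ≥0∞)^(s i * d) * ENNReal.ofReal ((φ (s i))⁻¹) ^ p) ^ (1/p) := by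
    rw [localSum]
    congr 1
    rw [tsum_congr hval, tsum_cube_const]
  have h1 : ((2:ℝ≥0∞)^(s i * d) * ENNReal.ofReal ((φ (s i))⁻¹) ^ p) ^ (1/p)
      = (2:ℝ≥0∞)^(((s i : ℝ) * d)/p) * ENNReal.ofReal ((φ (s i))⁻¹) := by
    rw [ENNReal.mul_rpow_of_nonneg _ _ (by positivity)]
    congr 1
    · rw [← ENNReal.rpow_natCast 2 (s i * d), ← ENNReal.rpow_mul]
      congr 1
      push_cast
      ring
    · rw [← ENNReal.rpow_mul, mul_one_div, div_self hp.ne', ENNReal.rpow_one]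
  have h2 : (2:ℝ≥0∞)^(-((s i : ℝ) * d)/p) * (2:ℝ≥0∞)^(((s i : ℝ) * d)/p) = 1 := by
    rw [← ENNReal.rpow_add _ _ (by norm_num) (by norm_num), neg_div, neg_add_cancel,
      ENNReal.rpow_zero]
  have h3 : ENNReal.ofReal (φ (s i)) * ENNReal.ofReal ((φ (s i))⁻¹) = 1 := by
    rw [← ENNReal.ofReal_mul (hpos _).le, mul_inv_cancel₀ (hpos _).ne', ENNReal.ofReal_one]
  have key : ENNReal.ofReal (φ (s i)) * (2:ℝ≥0∞)^(-((s i : ℝ) * d)/p)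
      * localSum d p (s i) (mi d s L i) nu = 1 := by
    rw [hls, h1]
    calc ENNReal.ofReal (φ (s i)) * (2:ℝ≥0∞)^(-((s i : ℝ) * d)/p)
        * ((2:ℝ≥0∞)^(((s i : ℝ) * d)/p) * ENNReal.ofReal ((φ (s i))⁻¹))
        = (ENNReal.ofReal (φ (s i)) * ENNReal.ofReal ((φ (s i))⁻¹))
          * ((2:ℝ≥0∞)^(-((s i : ℝ) * d)/p) * (2:ℝ≥0∞)^(((s i : ℝ) * d)/p)) := by ring
      _ = 1 := by rw [h2, h3, one_mul]
  calc (1:ℝ≥0∞) = ENNReal.ofReal (φ (s i)) * (2:ℝ≥0∞)^(-((s i : ℝ) * d)/p)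
        * localSum d p (s i) (mi d s L i) nu := key.symm
    _ ≤ ⨆ m : Fin d → ℤ, ENNReal.ofReal (φ (s i)) * (2:ℝ≥0∞)^(-((s i : ℝ) * d)/p)
        * localSum d p (s i) m nu :=
        le_iSup (fun m : Fin d → ℤ => ENNReal.ofReal (φ (s i))
          * (2:ℝ≥0∞)^(-((s i : ℝ) * d)/p) * localSum d p (s i) m nu) (mi d s L i)
    _ ≤ mNorm d p φ nu := le_iSup (fun j => ⨆ m : Fin d → ℤ, ENNReal.ofReal (φ j)
        * (2:ℝ≥0∞)^(-((j : ℝ) * d)/p) * localSum d p j m nu) (s i)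

-- the canonical construction
def lamC (d : ℕ) (φ : ℕ → ℝ) (s L : ℕ → ℕ) : (Fin d → ℤ) → ℂ :=
  fun k => if h : ∃ i, inCube d (s i) (mi d s L i) k
    then (((φ (s (Nat.find h)))⁻¹ : ℝ) : ℂ) else 0

lemma Q_disj {d : ℕ} (hd : 0 < d) {s L : ℕ → ℕ} (hsL : ∀ i, s i ≤ L i)
    (hgap : ∀ i, L i + 2 ≤ L (i+1)) {i i' : ℕ} {k : Fin d → ℤ}
    (h : inCube d (s i) (mi d s L i) k) (h' : inCube d (s i') (mi d s L i') k) :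
    i = i' := by
  have hLmono : Monotone L := monotone_nat_of_le_succ (fun n => by linarith [hgap n])
  have aux : ∀ a b : ℕ, a < b → inCube d (s a) (mi d s L a) k →
      inCube d (s b) (mi d s L b) k → False := by
    intro a b hab ha hb
    obtain ⟨ha1, ha2⟩ := inQ_coord0 hd (hsL a) ha
    obtain ⟨hb1, _⟩ := inQ_coord0 hd (hsL b) hb
    have h1 : (2:ℤ)^(s a) ≤ 2^(L a) := pow_le_pow_right₀ (by norm_num) (hsL a)
    have h2 : (2:ℤ)^(L a + 1) ≤ 2^(L b) := by
      refine pow_le_pow_right₀ (by norm_num) ?_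
      have h3 := hgap a
      have h4 := hLmono (show a + 1 ≤ b from hab)
      omega
    rw [pow_succ] at h2
    omega
  rcases lt_trichotomy i i' with h1 | h1 | h1
  · exact (aux i i' h1 h h').elim
  · exact h1
  · exact (aux i' i h1 h' h).elim

lemma lamC_Q {d : ℕ} (hd : 0 < d) (φ : ℕ → ℝ) {s L : ℕ → ℕ} (hsL : ∀ i, s i ≤ L i)
    (hgap : ∀ i, L i + 2 ≤ L (i+1)) (i : ℕ) (k : Fin d → ℤ)
    (hk : inCube d (s i) (mi d s L i) k) :
    lamC d φ s L k = (((φ (s i))⁻¹ : ℝ) : ℂ) := by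
  have hex : ∃ i, inCube d (s i) (mi d s L i) k := ⟨i, hk⟩
  rw [lamC, dif_pos hex, Q_disj hd hsL hgap (Nat.find_spec hex) hk]

lemma lamC_0 {d : ℕ} (φ : ℕ → ℝ) (s L : ℕ → ℕ) (k : Fin d → ℤ)
    (h : ∀ i, ¬ inCube d (s i) (mi d s L i) k) : lamC d φ s L k = 0 := by
  rw [lamC, dif_neg (not_exists.mpr h)]

lemma hamono_aux {d : ℕ} {p : ℝ} (hp : 0 < p) {φ : ℕ → ℝ} (hpos : ∀ n, 0 < φ n)
    (hG2 : ∀ j k : ℕ, j ≤ k → φ k ≤ φ j * 2 ^ (((k:ℝ) - j) * d / p)) :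
    ∀ j k : ℕ, j ≤ k → φ k ^ p * ((2:ℝ)^(k*d))⁻¹ ≤ φ j ^ p * ((2:ℝ)^(j*d))⁻¹ := by
  intro j k hjk
  have h1 : φ k ^ p ≤ φ j ^ p * (2:ℝ)^((k-j)*d) := by
    have h2 := Real.rpow_le_rpow (hpos k).le (hG2 j k hjk) hp.le
    rw [Real.mul_rpow (hpos j).le (by positivity)] at h2
    refine le_trans h2 (mul_le_mul_of_nonneg_left (le_of_eq ?_)
      (Real.rpow_nonneg (hpos j).le p))
    rw [← Real.rpow_natCast 2 ((k-j)*d), ← Real.rpow_mul (by norm_num : (0:ℝ) ≤ 2),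
      div_mul_cancel₀ _ hp.ne']
    congr 1
    push_cast [Nat.cast_sub hjk]
    ring
  have hkd : (2:ℝ)^(k*d) = 2^((k-j)*d) * 2^(j*d) := by
    rw [← pow_add]
    congr 1
    have := Nat.mul_le_mul_right d hjk
    rw [Nat.sub_mul]
    omega
  rw [hkd, mul_inv]
  calc φ k ^ p * (((2:ℝ)^((k-j)*d))⁻¹ * ((2:ℝ)^(j*d))⁻¹)
      ≤ (φ j ^ p * 2^((k-j)*d)) * (((2:ℝ)^((k-j)*d))⁻¹ * ((2:ℝ)^(j*d))⁻¹) :=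
        mul_le_mul_of_nonneg_right h1 (by positivity)
    _ = φ j ^ p * ((2:ℝ)^(j*d))⁻¹ := by
        field_simp

lemma chooseL {d : ℕ} {p : ℝ} (hp : 0 < p) {φ : ℕ → ℝ} (hpos : ∀ n, 0 < φ n)
    (hlim : Tendsto (fun k : ℕ => φ k * (2:ℝ) ^ (-((k:ℝ)*d)/p)) atTop (nhds 0))
    (s : ℕ → ℕ) :
    ∃ L : ℕ → ℕ, (∀ i, s i ≤ L i) ∧ (∀ i, L i + 2 ≤ L (i+1)) ∧ (∀ i, i ≤ L i) ∧
      (∀ i, φ (L i) ^ p * ((2:ℝ)^(L i * d))⁻¹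
        ≤ ((2:ℝ)^i)⁻¹ * (φ (s i) ^ p * ((2:ℝ)^(s i * d))⁻¹)) := by
  have hconv : ∀ N : ℕ, (φ N * (2:ℝ)^(-((N:ℝ)*d)/p)) ^ p = φ N ^ p * ((2:ℝ)^(N*d))⁻¹ := by
    intro N
    rw [Real.mul_rpow (hpos N).le (by positivity)]
    congr 1
    rw [← Real.rpow_mul (by norm_num : (0:ℝ) ≤ 2), div_mul_cancel₀ _ hp.ne',
      Real.rpow_neg (by norm_num), ← Real.rpow_natCast 2 (N*d)]
    congr 2
    push_cast
    ring
  have hTex : ∀ i : ℕ, ∃ T : ℕ, ∀ N, T ≤ N →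
      φ N ^ p * ((2:ℝ)^(N*d))⁻¹ ≤ ((2:ℝ)^i)⁻¹ * (φ (s i) ^ p * ((2:ℝ)^(s i * d))⁻¹) := by
    intro i
    set ε : ℝ := ((2:ℝ)^i)⁻¹ * (φ (s i) ^ p * ((2:ℝ)^(s i * d))⁻¹) with hεdef
    have hε : 0 < ε := by
      refine mul_pos (by positivity) (mul_pos (Real.rpow_pos_of_pos (hpos _) p) (by positivity))
    have hev := hlim.eventually (gt_mem_nhds
      (show (0:ℝ) < ε ^ (1/p) from Real.rpow_pos_of_pos hε _))
    rw [eventually_atTop] at hev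
    obtain ⟨T, hTspec⟩ := hev
    refine ⟨T, fun N hN => ?_⟩
    have h1 : φ N * (2:ℝ)^(-((N:ℝ)*d)/p) ≤ ε ^ (1/p) := (hTspec N hN).le
    have h2 := Real.rpow_le_rpow
      (mul_nonneg (hpos N).le (by positivity)) h1 hp.le
    rwa [hconv N, ← Real.rpow_mul hε.le, one_div, inv_mul_cancel₀ hp.ne',
      Real.rpow_one] at h2
  choose T hT using hTex
  set F : ℕ → ℕ := fun i' => max (T i') (s i') with hF
  have hFle : ∀ i, F i ≤ Finset.sup (Finset.range (i+1)) F :=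
    fun i => Finset.le_sup (f := F) (Finset.self_mem_range_succ i)
  refine ⟨fun i => 2*i + Finset.sup (Finset.range (i+1)) F, ?_, ?_, ?_, ?_⟩
  · intro i
    show s i ≤ 2*i + Finset.sup (Finset.range (i+1)) F
    have h1 : s i ≤ F i := le_max_right _ _
    have h2 := hFle i
    omega
  · intro i
    show 2*i + Finset.sup (Finset.range (i+1)) F + 2
      ≤ 2*(i+1) + Finset.sup (Finset.range (i+1+1)) F
    have h2 : Finset.sup (Finset.range (i+1)) F ≤ Finset.sup (Finset.range (i+1+1)) F :=
      Finset.sup_mono (Finset.range_subset_range.mpr (by omega))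
    omega
  · intro i
    show i ≤ 2*i + Finset.sup (Finset.range (i+1)) F
    omega
  · intro i
    refine hT i _ ?_
    show T i ≤ 2*i + Finset.sup (Finset.range (i+1)) F
    have h1 : T i ≤ F i := le_max_left _ _
    have h2 := hFle i
    omega

lemma finite_support_tendsto {d : ℕ} (mu : (Fin d → ℤ) → ℂ) (h : {k | mu k ≠ 0}.Finite) :
    Tendsto mu cofinite (nhds 0) := by
  rw [Metric.tendsto_nhds]
  intro ε hε
  rw [eventually_cofinite]
  refine h.subset fun k hk => ?_
  simp only [Set.mem_setOf_eq] at hk ⊢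
  intro h0
  apply hk
  rw [h0, dist_self]
  exact hε

theorem stmt_12 (d : ℕ) (hd : 0 < d) (p : ℝ) (hp : 0 < p)
    (φ : ℕ → ℝ) (hGp : Gp d p φ) (hφ1 : φ 0 = 1)
    (hunb : ∀ C : ℝ, ∃ k, C < φ k)
    (hlim : Tendsto (fun k : ℕ => φ k * (2 : ℝ) ^ (-((k : ℝ) * d) / p))
      atTop (nhds 0))
    (M M0 M00 : Set ((Fin d → ℤ) → ℂ))
    (hM : M = {lam | mNorm d p φ lam < ⊤})
    (hM0 : M0 = {lam | mNorm d p φ lam < ⊤ ∧ Tendsto lam cofinite (nhds 0)})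
    (hM00 : M00 = {lam | mNorm d p φ lam < ⊤ ∧
      ∀ ε : ℝ≥0∞, 0 < ε → ∃ mu : (Fin d → ℤ) → ℂ,
        {k | mu k ≠ 0}.Finite ∧ mNorm d p φ (lam - mu) < ε}) :
    (∀ lam : (Fin d → ℤ) → ℂ,
      (∀ ε : ℝ≥0∞, 0 < ε → ∃ mu ∈ M0, mNorm d p φ (lam - mu) < ε) →
      mNorm d p φ lam < ⊤ → lam ∈ M0) ∧
    M00 ⊂ M0 ∧ M0 ⊂ M := by
  subst hM hM0 hM00
  have hpos : ∀ k, 0 < φ k := hGp.1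
  have hmono : ∀ j k : ℕ, j ≤ k → φ j ≤ φ k := fun j k h => (hGp.2 j k h).1
  have hamono := hamono_aux hp hpos (fun j k h => (hGp.2 j k h).2)
  have hpow2 : ∀ x y : ℕ, (2:ℤ)^x = 2^y → x = y := by
    intro x y hxy
    rcases lt_trichotomy x y with h|h|h
    · exact absurd hxy (ne_of_lt (pow_lt_pow_right₀ (by norm_num) h))
    · exact h
    · exact absurd hxy.symm (ne_of_lt (pow_lt_pow_right₀ (by norm_num) h))
  -- part 1 : M0 is closed
  have part1 : ∀ lam : (Fin d → ℤ) → ℂ,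
      (∀ ε : ℝ≥0∞, 0 < ε → ∃ mu ∈ {lam | mNorm d p φ lam < ⊤ ∧
        Tendsto lam cofinite (nhds 0)}, mNorm d p φ (lam - mu) < ε) →
      mNorm d p φ lam < ⊤ →
      lam ∈ {lam | mNorm d p φ lam < ⊤ ∧ Tendsto lam cofinite (nhds 0)} := by
    intro lam happrox hfin
    refine ⟨hfin, approx_tendsto d hp φ hφ1 lam (fun ε hε => ?_)⟩
    obtain ⟨mu, hmu0, hlt⟩ := happrox (ENNReal.ofReal ε) (ENNReal.ofReal_pos.mpr hε)
    exact ⟨mu, hmu0.2, hlt⟩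
  -- M00 ⊆ M0
  have hsub00 : {lam : (Fin d → ℤ) → ℂ | mNorm d p φ lam < ⊤ ∧
      ∀ ε : ℝ≥0∞, 0 < ε → ∃ mu : (Fin d → ℤ) → ℂ,
        {k | mu k ≠ 0}.Finite ∧ mNorm d p φ (lam - mu) < ε}
      ⊆ {lam | mNorm d p φ lam < ⊤ ∧ Tendsto lam cofinite (nhds 0)} := by
    intro lam hmem
    refine ⟨hmem.1, approx_tendsto d hp φ hφ1 lam (fun ε hε => ?_)⟩
    obtain ⟨mu, hfin, hlt⟩ := hmem.2 (ENNReal.ofReal ε) (ENNReal.ofReal_pos.mpr hε)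
    exact ⟨mu, finite_support_tendsto mu hfin, hlt⟩
  -- example 3 : in M but not in M0
  obtain ⟨L3, hsL3, hgap3, hLi3, hdecay3⟩ := chooseL hp hpos hlim (fun _ => 0)
  set lam3 := lamC d φ (fun _ => 0) L3 with hlam3
  have hm3 : mNorm d p φ lam3 ≤ (3:ℝ≥0∞) ^ (1/p) :=
    mainBound hd hp φ hpos _ L3 hmono hamono hsL3 hgap3 hdecay3 lam3
      (lamC_Q hd φ hsL3 hgap3) (lamC_0 φ _ L3)
  have hm3fin : mNorm d p φ lam3 < ⊤ :=
    lt_of_le_of_lt hm3 (ENNReal.rpow_lt_top_of_nonneg (by positivity) (by norm_num))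
  have hnot3 : ¬ Tendsto lam3 cofinite (nhds 0) := by
    intro hT
    have hev := Metric.tendsto_nhds.mp hT 1 one_pos
    rw [eventually_cofinite] at hev
    refine (Set.infinite_of_injective_forall_mem
      (f := fun i => mi d (fun _ => 0) L3 i) ?_ ?_) hev
    · intro a b hab
      have h0 := congrFun hab ⟨0, hd⟩
      simp only [mi, Fin.val_mk, if_pos rfl] at h0
      have hL : L3 a - 0 = L3 b - 0 := hpow2 _ _ h0
      have hsm : StrictMono L3 := strictMono_nat_of_lt_succ (fun n => by
        have := hgap3 n; omega)
      exact hsm.injective (by omega)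
    · intro i
      simp only [Set.mem_setOf_eq]
      have hmem : inCube d ((fun _ => 0) i) (mi d (fun _ => 0) L3 i)
          (mi d (fun _ => 0) L3 i) := by
        intro t
        constructor <;> simp
      have hval := lamC_Q hd φ hsL3 hgap3 i _ hmem
      rw [← hlam3] at hval
      rw [hval, hφ1]
      norm_num
  -- example 2 : in M0 but not in M00
  have hs2ex : ∀ i : ℕ, ∃ n, ((i:ℝ)+1) < φ n := fun i => hunb _
  choose s2 hs2 using hs2ex
  obtain ⟨L2, hsL2, hgap2, hLi2, hdecay2⟩ := chooseL hp hpos hlim s2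
  set lam2 := lamC d φ s2 L2 with hlam2
  have hm2 : mNorm d p φ lam2 ≤ (3:ℝ≥0∞) ^ (1/p) :=
    mainBound hd hp φ hpos s2 L2 hmono hamono hsL2 hgap2 hdecay2 lam2
      (lamC_Q hd φ hsL2 hgap2) (lamC_0 φ s2 L2)
  have hm2fin : mNorm d p φ lam2 < ⊤ :=
    lt_of_le_of_lt hm2 (ENNReal.rpow_lt_top_of_nonneg (by positivity) (by norm_num))
  have htendsto2 : Tendsto lam2 cofinite (nhds 0) := by
    rw [Metric.tendsto_nhds]
    intro ε hε
    rw [eventually_cofinite]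
    obtain ⟨N, hN⟩ := exists_nat_gt (1/ε)
    refine Set.Finite.subset (Set.Finite.biUnion (Set.finite_lt_nat N)
      (fun i _ => cube_finite d (s2 i) (mi d s2 L2 i))) ?_
    intro k hk
    simp only [Set.mem_setOf_eq] at hk
    have hne : lam2 k ≠ 0 := by
      intro h0
      apply hk
      rw [h0, dist_self]
      exact hε
    have hex : ∃ i, inCube d (s2 i) (mi d s2 L2 i) k := by
      by_contra hcon
      push_neg at hcon
      exact hne (lamC_0 φ s2 L2 k hcon)
    obtain ⟨i, hi⟩ := hex
    have hval := lamC_Q hd φ hsL2 hgap2 i k hi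
    rw [← hlam2] at hval
    have hlt : i < N := by
      by_contra hge
      push_neg at hge
      apply hk
      rw [hval, dist_zero_right, Complex.norm_real, Real.norm_eq_abs,
        abs_of_pos (inv_pos.mpr (hpos _))]
      have h3 : 0 < φ (s2 i) := hpos _
      have h2 : 1/ε < φ (s2 i) := by
        refine lt_of_lt_of_le hN (le_trans ?_ (hs2 i).le)
        push_cast
        have : (N:ℝ) ≤ i := by exact_mod_cast hge
        linarith
      have h4 : ε * (1/ε) < ε * φ (s2 i) := mul_lt_mul_of_pos_left h2 hε
      rw [mul_one_div, div_self hε.ne'] at h4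
      rw [← one_div, div_lt_iff₀ h3]
      linarith
    exact Set.mem_biUnion hlt hi
  have hnot2 : ¬ (∀ ε : ℝ≥0∞, 0 < ε → ∃ mu : (Fin d → ℤ) → ℂ,
      {k | mu k ≠ 0}.Finite ∧ mNorm d p φ (lam2 - mu) < ε) := by
    intro happrox
    obtain ⟨mu, hfin, hlt1⟩ := happrox 1 zero_lt_one
    obtain ⟨B, hB⟩ := (hfin.image (fun k => k ⟨0,hd⟩)).bddAbove
    set i := B.toNat + 1 with hidef
    have hBi : B < (2:ℤ)^(L2 i) := by
      have h1 : B ≤ (B.toNat : ℤ) := Int.self_le_toNat B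
      have h2 : (B.toNat : ℤ) < 2^(B.toNat) := by exact_mod_cast (Nat.lt_two_pow_self (n := B.toNat))
      have h3 : (2:ℤ)^(B.toNat) ≤ 2^(L2 i) :=
        pow_le_pow_right₀ (by norm_num) (le_trans (by omega) (hLi2 i))
      omega
    have hmu0 : ∀ k, inCube d (s2 i) (mi d s2 L2 i) k → mu k = 0 := by
      intro k hk
      by_contra hne
      have hkB : k ⟨0,hd⟩ ≤ B := hB (Set.mem_image_of_mem _ hne)
      have hk0 := (inQ_coord0 hd (hsL2 i) hk).1
      omega
    have hnu : ∀ k, inCube d (s2 i) (mi d s2 L2 i) k →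
        (lam2 - mu) k = (((φ (s2 i))⁻¹ : ℝ) : ℂ) := by
      intro k hk
      have := lamC_Q hd φ hsL2 hgap2 i k hk
      rw [← hlam2] at this
      simp [Pi.sub_apply, hmu0 k hk, this]
    exact absurd hlt1 (not_lt.mpr (lowerBound hp φ hpos s2 L2 i (lam2 - mu) hnu))
  refine ⟨part1, ?_, ?_⟩
  · rw [Set.ssubset_iff_of_subset hsub00]
    exact ⟨lam2, ⟨hm2fin, htendsto2⟩, fun hmem => hnot2 hmem.2⟩
  · rw [Set.ssubset_iff_of_subset (fun lam hl => hl.1)]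
    exact ⟨lam3, hm3fin, fun hmem => hnot3 hmem.2⟩
end
end

section
/- Let 0<p_i<∞, φ_i∈𝒢_{p_i}(𝔻) with φ_i(1)=1 and sup_k φ_i(2^k)=∞ for i=1,2, and set ϱ = min(1, p₁/p₂). Then the embedding m_{φ₁,p₁}(ℤ^d) ↪ m_{φ₂,p₂}(ℤ^d) is continuous if, and only if, sup_{j∈ℕ₀} φ₂(2^j)/φ₁(2^j)^ϱ < ∞. Moreover, the embedding is never compact. -/
open ENNReal Filter

noncomputable section

namespace Morrey

lemma two_rpow_mul (a b : ℝ) : (2:ℝ≥0∞)^a * (2:ℝ≥0∞)^b = 2^(a+b) :=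
  (ENNReal.rpow_add a b two_ne_zero ENNReal.ofNat_ne_top).symm

lemma two_rpow_ofReal (x : ℝ) : (2:ℝ≥0∞)^x = ENNReal.ofReal ((2:ℝ)^x) := by
  rw [show (2:ℝ≥0∞) = ENNReal.ofReal 2 from (ENNReal.ofReal_ofNat 2).symm,
    ENNReal.ofReal_rpow_of_pos two_pos]

lemma two_rpow_ne_top (x : ℝ) : (2:ℝ≥0∞)^x ≠ ⊤ := by
  rw [two_rpow_ofReal]; exact ENNReal.ofReal_ne_top

/-- counting bound for a `tsum` with terms `≤ 1` whose support injects into a fintype -/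
lemma tsum_le_card {ι κ : Type*} [Fintype κ] (f : ι → ℝ≥0∞) (hf : ∀ k, f k ≤ 1)
    (emb : Function.support f → κ) (hemb : Function.Injective emb) :
    ∑' k, f k ≤ (Fintype.card κ : ℝ≥0∞) := by
  rw [← tsum_subtype_eq_of_support_subset (le_refl (Function.support f))]
  calc ∑' k : Function.support f, f k ≤ ∑' _k : Function.support f, 1 :=
        ENNReal.tsum_le_tsum fun k => hf k
    _ ≤ ∑' _c : κ, 1 := ENNReal.tsum_comp_le_tsum_of_injective hemb (fun _ => 1)
    _ = (Fintype.card κ : ℝ≥0∞) := by simp [tsum_fintype]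

/-- the dyadic cube `Q_{-j,m}` has exactly `2^{jd}` integer points -/
def cubeEquiv (d j : ℕ) (m : Fin d → ℤ) :
    {k : Fin d → ℤ // inCube d j m k} ≃ (Fin d → Fin (2 ^ j)) where
  toFun k i := ⟨(k.1 i - 2 ^ j * m i).toNat, by
    have h := k.2 i
    have h2 : (2:ℤ)^j * (m i + 1) = 2^j * m i + 2^j := by ring
    have h3 : (0:ℤ) ≤ k.1 i - 2^j * m i := by linarith [h.1]
    have h4 : k.1 i - 2^j * m i < 2^j := by linarith [h.2]
    have h5 : ((2:ℤ)^j) = ((2^j : ℕ) : ℤ) := by push_cast; ring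
    omega⟩
  invFun v := ⟨fun i => 2 ^ j * m i + (v i : ℕ), fun i => by
    have h := (v i).2
    have h2 : (2:ℤ)^j * (m i + 1) = 2^j * m i + 2^j := by ring
    have h5 : ((2:ℤ)^j) = ((2^j : ℕ) : ℤ) := by push_cast; ring
    dsimp only
    omega⟩
  left_inv k := by
    ext i
    have h := k.2 i
    simp only
    have h3 : (0:ℤ) ≤ k.1 i - 2^j * m i := by linarith [h.1]
    omega
  right_inv v := by
    funext i
    have h := (v i).2
    have h5 : ((2:ℤ)^j) = ((2^j : ℕ) : ℤ) := by push_cast; ring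
    apply Fin.ext
    simp only
    omega

lemma tsum_cube_const (d j : ℕ) (m : Fin d → ℤ) (c : ℝ≥0∞) :
    ∑' _k : {k : Fin d → ℤ // inCube d j m k}, c = (2:ℝ≥0∞) ^ ((j:ℝ) * d) * c := by
  rw [← (cubeEquiv d j m).symm.tsum_eq (fun _ => c)]
  rw [tsum_fintype, Finset.sum_const, Finset.card_univ]
  rw [show ((j:ℝ) * d) = ((j*d : ℕ):ℝ) by push_cast; ring, ENNReal.rpow_natCast, pow_mul]
  simp [nsmul_eq_mul]


variable {d : ℕ} {p : ℝ} {φ : ℕ → ℝ} {lam : (Fin d → ℤ) → ℂ}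

lemma inCube_zero {m k : Fin d → ℤ} : inCube d 0 m k ↔ k = m := by
  constructor
  · intro h; funext i; have := h i; simp at this; omega
  · rintro rfl i; simp

lemma localSum_zero (hp : 0 < p) (m : Fin d → ℤ) :
    localSum d p 0 m lam = ENNReal.ofReal ‖lam m‖ := by
  unfold localSum
  have hm : inCube d 0 m m := inCube_zero.2 rfl
  have h1 : ∑' k : {k : Fin d → ℤ // inCube d 0 m k}, ENNReal.ofReal ‖lam k.1‖ ^ p
      = ENNReal.ofReal ‖lam m‖ ^ p := by
    rw [tsum_eq_single (⟨m, hm⟩ : {k // inCube d 0 m k})]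
    intro b hb
    exact absurd (Subtype.ext (inCube_zero.1 b.2)) hb
  rw [h1, ← ENNReal.rpow_mul, mul_one_div_cancel hp.ne', ENNReal.rpow_one]

lemma term_le_mNorm (j : ℕ) (m : Fin d → ℤ) :
    ENNReal.ofReal (φ j) * (2:ℝ≥0∞) ^ (-((j:ℝ)*d)/p) * localSum d p j m lam
      ≤ mNorm d p φ lam :=
  le_iSup₂_of_le j m (le_refl _)

lemma point_le_mNorm (hp : 0 < p) (hφ0 : φ 0 = 1) (k : Fin d → ℤ) :
    ENNReal.ofReal ‖lam k‖ ≤ mNorm d p φ lam := by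
  have h := term_le_mNorm (d:=d) (p:=p) (φ:=φ) (lam:=lam) 0 k
  rw [localSum_zero hp, hφ0] at h
  simpa using h

lemma mNorm_le {Z : ℝ≥0∞}
    (h : ∀ (j : ℕ) (m : Fin d → ℤ),
      ENNReal.ofReal (φ j) * (2:ℝ≥0∞) ^ (-((j:ℝ)*d)/p) * localSum d p j m lam ≤ Z) :
    mNorm d p φ lam ≤ Z := iSup₂_le h

lemma prefactor_le (hG : Gp d p φ) (hφ0 : φ 0 = 1) (j : ℕ) :
    ENNReal.ofReal (φ j) * (2:ℝ≥0∞) ^ (-((j:ℝ)*d)/p) ≤ 1 := by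
  have h := (hG.2 0 j (Nat.zero_le j)).2
  rw [hφ0, one_mul, Nat.cast_zero, sub_zero] at h
  calc ENNReal.ofReal (φ j) * (2:ℝ≥0∞) ^ (-((j:ℝ)*d)/p)
      ≤ ENNReal.ofReal ((2:ℝ) ^ ((j:ℝ)*d/p)) * (2:ℝ≥0∞) ^ (-((j:ℝ)*d)/p) := by
        gcongr
    _ = 1 := by
        rw [← two_rpow_ofReal, two_rpow_mul,
          show ((j:ℝ)*d/p + -((j:ℝ)*d)/p) = 0 by ring, ENNReal.rpow_zero]

lemma finset_holder {κ : Type*} [Fintype κ] (b : κ → ℝ≥0∞) {q p : ℝ}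
    (hq : 0 < q) (hp : 0 < p) (hpq : q ≤ p) :
    (∑ v, b v ^ q) ^ (1/q) ≤
      (Fintype.card κ : ℝ≥0∞) ^ (1/q - 1/p) * (∑ v, b v ^ p) ^ (1/p) := by
  rcases isEmpty_or_nonempty κ with he | he
  · have h0 : (∑ v, b v ^ q) = 0 := by simp
    rw [h0, ENNReal.zero_rpow_of_pos (by positivity)]
    exact zero_le
  set N : ℕ := Fintype.card κ with hN
  have hN0 : (N:ℝ≥0∞) ≠ 0 := by
    simp [hN, Fintype.card_ne_zero]
  have hNtop : (N:ℝ≥0∞) ≠ ⊤ := ENNReal.natCast_ne_top N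
  have hw : ∑ _v : κ, ((N:ℝ≥0∞))⁻¹ = 1 := by
    rw [Finset.sum_const, Finset.card_univ, ← hN, nsmul_eq_mul,
      ENNReal.mul_inv_cancel hN0 hNtop]
  have key := ENNReal.rpow_arith_mean_le_arith_mean_rpow Finset.univ
    (fun _ => ((N:ℝ≥0∞))⁻¹) (fun v => b v ^ q) hw
    ((one_le_div hq).2 hpq)
  -- key : (∑ N⁻¹ * b^q)^(p/q) ≤ ∑ N⁻¹ * (b^q)^(p/q)
  have hqp : q * (p/q) = p := by field_simp
  have key2 : ((N:ℝ≥0∞))⁻¹ * (∑ v, b v ^ q) ≤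
      (((N:ℝ≥0∞))⁻¹ * (∑ v, b v ^ p)) ^ (q/p) := by
    have l1 : (∑ v, ((N:ℝ≥0∞))⁻¹ * b v ^ q) = ((N:ℝ≥0∞))⁻¹ * (∑ v, b v ^ q) := by
      rw [Finset.mul_sum]
    have l2 : (∑ v : κ, ((N:ℝ≥0∞))⁻¹ * (b v ^ q) ^ (p/q)) =
        ((N:ℝ≥0∞))⁻¹ * (∑ v, b v ^ p) := by
      rw [Finset.mul_sum]
      congr 1; funext v
      rw [← ENNReal.rpow_mul, hqp]
    rw [l1, l2] at key
    calc ((N:ℝ≥0∞))⁻¹ * (∑ v, b v ^ q)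
        = ((((N:ℝ≥0∞))⁻¹ * (∑ v, b v ^ q)) ^ (p/q)) ^ (q/p) := by
          rw [← ENNReal.rpow_mul, show (p/q)*(q/p) = 1 by field_simp, ENNReal.rpow_one]
      _ ≤ (((N:ℝ≥0∞))⁻¹ * (∑ v, b v ^ p)) ^ (q/p) :=
          ENNReal.rpow_le_rpow key (by positivity)
  -- now multiply by N and take 1/q powers
  have hNfact : (N:ℝ≥0∞) * ((N:ℝ≥0∞)⁻¹) ^ (q/p) = (N:ℝ≥0∞) ^ (1 - q/p) := by
    rw [ENNReal.inv_rpow, ← ENNReal.rpow_neg]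
    nth_rewrite 1 [← ENNReal.rpow_one (N:ℝ≥0∞)]
    rw [← ENNReal.rpow_add _ _ hN0 hNtop]
    congr 1
  have key3 : (∑ v, b v ^ q) ≤ (N:ℝ≥0∞) ^ (1 - q/p) * (∑ v, b v ^ p) ^ (q/p) := by
    have h := mul_le_mul_right key2 (N:ℝ≥0∞)
    rw [← mul_assoc, ENNReal.mul_inv_cancel hN0 hNtop, one_mul] at h
    refine h.trans (le_of_eq ?_)
    rw [ENNReal.mul_rpow_of_nonneg _ _ (by positivity : (0:ℝ) ≤ q/p), ← mul_assoc, hNfact]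
  calc (∑ v, b v ^ q) ^ (1/q)
      ≤ ((N:ℝ≥0∞) ^ (1 - q/p) * (∑ v, b v ^ p) ^ (q/p)) ^ (1/q) :=
        ENNReal.rpow_le_rpow key3 (by positivity)
    _ = (N:ℝ≥0∞) ^ (1/q - 1/p) * (∑ v, b v ^ p) ^ (1/p) := by
        rw [ENNReal.mul_rpow_of_nonneg _ _ (by positivity : (0:ℝ) ≤ 1/q),
          ← ENNReal.rpow_mul, ← ENNReal.rpow_mul]
        have e2 : (q/p) * (1/q) = 1/p := by field_simp
        have e1 : (1 - q/p) * (1/q) = 1/q - 1/p := by rw [sub_mul, one_mul, e2]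
        rw [e1, e2]


lemma card_cast (j d : ℕ) : (((2^j)^d : ℕ) : ℝ≥0∞) = (2:ℝ≥0∞)^((j:ℝ)*(d:ℝ)) := by
  push_cast
  rw [show ((j:ℝ)*(d:ℝ)) = ((j*d : ℕ):ℝ) by push_cast; ring, ENNReal.rpow_natCast, pow_mul]

lemma localSum_holder {q : ℝ} (hq : 0 < q) (hp : 0 < p) (hqp : q ≤ p)
    (j : ℕ) (m : Fin d → ℤ) :
    localSum d q j m lam ≤
      (2:ℝ≥0∞) ^ (((j:ℝ)*d)/q - ((j:ℝ)*d)/p) * localSum d p j m lam := by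
  unfold localSum
  have e := (cubeEquiv d j m).symm
  rw [← e.tsum_eq (fun k => ENNReal.ofReal ‖lam k.1‖ ^ q),
    ← e.tsum_eq (fun k => ENNReal.ofReal ‖lam k.1‖ ^ p), tsum_fintype, tsum_fintype]
  have h := finset_holder (fun v => ENNReal.ofReal ‖lam ((e v).1)‖) hq hp hqp
  refine h.trans (le_of_eq ?_)
  congr 1
  have hc : (Fintype.card (Fin d → Fin (2^j)) : ℝ≥0∞) = (2:ℝ≥0∞)^((j:ℝ)*(d:ℝ)) := by
    rw [show Fintype.card (Fin d → Fin (2^j)) = (2^j)^d by simp [Fintype.card_fun], card_cast]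
  rw [hc, ← ENNReal.rpow_mul]
  congr 1
  ring

lemma localSum_interp {q : ℝ} (hp : 0 < p) (hq : 0 < q) (hpq : p ≤ q)
    (j : ℕ) (m : Fin d → ℤ) (M : ℝ≥0∞) (hM : ∀ k, ENNReal.ofReal ‖lam k‖ ≤ M) :
    localSum d q j m lam ≤ M ^ (1 - p/q) * (localSum d p j m lam) ^ (p/q) := by
  unfold localSum
  have step : ∀ k : {k // inCube d j m k}, ENNReal.ofReal ‖lam k.1‖ ^ q ≤
      ENNReal.ofReal ‖lam k.1‖ ^ p * M ^ (q - p) := by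
    intro k
    set b := ENNReal.ofReal ‖lam k.1‖ with hb
    rcases eq_or_ne b 0 with h0 | h0
    · rw [h0, ENNReal.zero_rpow_of_pos hq]; exact zero_le
    · calc b ^ q = b ^ p * b ^ (q - p) := by
            rw [← ENNReal.rpow_add _ _ h0 (hb ▸ ENNReal.ofReal_ne_top)]; congr 1; ring
        _ ≤ b ^ p * M ^ (q - p) :=
            mul_le_mul_right (ENNReal.rpow_le_rpow (hb ▸ hM k.1) (by linarith)) _
  have hsum : (∑' k : {k // inCube d j m k}, ENNReal.ofReal ‖lam k.1‖ ^ q) ≤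
      (∑' k : {k // inCube d j m k}, ENNReal.ofReal ‖lam k.1‖ ^ p) * M ^ (q-p) := by
    rw [← ENNReal.tsum_mul_right]
    exact ENNReal.tsum_le_tsum step
  calc (∑' k : {k // inCube d j m k}, ENNReal.ofReal ‖lam k.1‖ ^ q) ^ (1/q)
      ≤ ((∑' k : {k // inCube d j m k}, ENNReal.ofReal ‖lam k.1‖ ^ p) * M^(q-p)) ^ (1/q) :=
        ENNReal.rpow_le_rpow hsum (by positivity)
    _ = M ^ (1 - p/q) *
        ((∑' k : {k // inCube d j m k}, ENNReal.ofReal ‖lam k.1‖ ^ p) ^ (1/p)) ^ (p/q) := by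
        rw [ENNReal.mul_rpow_of_nonneg _ _ (by positivity : (0:ℝ) ≤ 1/q),
          ← ENNReal.rpow_mul, ← ENNReal.rpow_mul,
          show (1/p)*(p/q) = 1/q by rw [div_mul_div_comm, one_mul, mul_comm p q,
            ← div_div, div_right_comm, div_self hp.ne'],
          show (q-p)*(1/q) = 1 - p/q by rw [sub_mul, mul_one_div, div_self hq.ne',
            mul_one_div],
          mul_comm]

lemma localSum_le_count {j : ℕ} {m : Fin d → ℤ} {κ : Type*} [Fintype κ] (hp : 0 < p)
    (hlam : ∀ k, ‖lam k‖ ≤ 1)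
    (emb : {k : {k : Fin d → ℤ // inCube d j m k} // lam k.1 ≠ 0} → κ)
    (hemb : Function.Injective emb) :
    localSum d p j m lam ≤ (Fintype.card κ : ℝ≥0∞) ^ (1/p) := by
  unfold localSum
  set f : {k : Fin d → ℤ // inCube d j m k} → ℝ≥0∞ :=
    fun k => ENNReal.ofReal ‖lam k.1‖ ^ p with hf
  have hmap : ∀ k : Function.support f, lam k.1.1 ≠ 0 := by
    intro k hz
    apply k.2
    show f k.1 = 0
    simp only [hf, hz, norm_zero, ENNReal.ofReal_zero]
    exact ENNReal.zero_rpow_of_pos hp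
  have hinj : Function.Injective (fun k : Function.support f => emb ⟨k.1, hmap k⟩) := by
    intro x y h
    have := hemb h
    simp only [Subtype.mk.injEq] at this
    exact Subtype.ext this
  have hb := tsum_le_card f (fun k => by
      rw [hf]
      exact ENNReal.rpow_le_one (ENNReal.ofReal_le_one.2 (hlam k.1)) hp.le)
    _ hinj
  exact ENNReal.rpow_le_rpow hb (by positivity)


lemma card_rpow (j d : ℕ) (p : ℝ) :
    ((Fintype.card (Fin d → Fin (2^j)) : ℝ≥0∞)) ^ (1/p) = (2:ℝ≥0∞) ^ ((j:ℝ)*d/p) := by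
  rw [show Fintype.card (Fin d → Fin (2^j)) = (2^j)^d by simp [Fintype.card_fun],
    card_cast, ← ENNReal.rpow_mul, mul_one_div]

open Classical in
/-- first test sequence: indicator of the cube `Q_{-J,0}` -/
def testA (d J : ℕ) : (Fin d → ℤ) → ℂ := fun k => if inCube d J 0 k then (1:ℂ) else 0

lemma testA_le (hG : Gp d p φ) (hφ0 : φ 0 = 1) (hp : 0 < p) (J : ℕ) :
    mNorm d p φ (testA d J) ≤ ENNReal.ofReal (φ J) := by
  classical
  set lam : (Fin d → ℤ) → ℂ := testA d J with hld
  have hnorm : ∀ k, ‖lam k‖ ≤ 1 := fun k => by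
    simp only [hld, testA]
    split <;> simp
  apply mNorm_le
  intro j m
  rcases le_total j J with hjJ | hJj
  · have hcount := localSum_le_count (lam := lam) (j := j) (m := m) hp hnorm
      (fun k => cubeEquiv d j m k.1)
      (fun x y h => Subtype.ext ((cubeEquiv d j m).injective h))
    calc ENNReal.ofReal (φ j) * (2:ℝ≥0∞) ^ (-((j:ℝ)*d)/p) * localSum d p j m lam
        ≤ ENNReal.ofReal (φ j) * (2:ℝ≥0∞) ^ (-((j:ℝ)*d)/p) * (2:ℝ≥0∞) ^ ((j:ℝ)*d/p) := by
          gcongr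
          rw [← card_rpow j d p]
          exact hcount
      _ = ENNReal.ofReal (φ j) := by
          rw [mul_assoc, two_rpow_mul, show -((j:ℝ)*d)/p + (j:ℝ)*d/p = 0 by ring,
            ENNReal.rpow_zero, mul_one]
      _ ≤ ENNReal.ofReal (φ J) := ENNReal.ofReal_le_ofReal (hG.2 j J hjJ).1
  · have hsupp : ∀ k : {k : {k : Fin d → ℤ // inCube d j m k} // lam k.1 ≠ 0},
        inCube d J 0 k.1.1 := by
      intro k
      by_contra h
      exact k.2 (if_neg h)
    have hcount := localSum_le_count (lam := lam) (j := j) (m := m) hp hnorm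
      (fun k => cubeEquiv d J 0 ⟨k.1.1, hsupp k⟩)
      (fun x y h => by
        have h2 := (cubeEquiv d J 0).injective h
        simp only [Subtype.mk.injEq] at h2
        exact Subtype.ext (Subtype.ext h2))
    calc ENNReal.ofReal (φ j) * (2:ℝ≥0∞) ^ (-((j:ℝ)*d)/p) * localSum d p j m lam
        ≤ ENNReal.ofReal (φ j) * (2:ℝ≥0∞) ^ (-((j:ℝ)*d)/p) * (2:ℝ≥0∞) ^ ((J:ℝ)*d/p) := by
          gcongr
          rw [← card_rpow J d p]
          exact hcount
      _ ≤ ENNReal.ofReal (φ J * 2 ^ (((j:ℝ) - J)*d/p)) *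
            ((2:ℝ≥0∞) ^ (-((j:ℝ)*d)/p) * (2:ℝ≥0∞) ^ ((J:ℝ)*d/p)) := by
          rw [← mul_assoc]
          gcongr
          exact (hG.2 J j hJj).2
      _ = ENNReal.ofReal (φ J) := by
          rw [ENNReal.ofReal_mul (hG.1 J).le, ← two_rpow_ofReal, two_rpow_mul, mul_assoc,
            two_rpow_mul,
            show (((j:ℝ) - J)*d/p + (-((j:ℝ)*d)/p + (J:ℝ)*d/p)) = 0 by ring,
            ENNReal.rpow_zero, mul_one]

lemma testA_ge (hp : 0 < p) (J : ℕ) :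
    ENNReal.ofReal (φ J) ≤ mNorm d p φ (testA d J) := by
  classical
  set lam : (Fin d → ℤ) → ℂ := testA d J with hld
  refine le_trans ?_ (term_le_mNorm (φ := φ) J 0)
  have hls : localSum d p J 0 lam = (2:ℝ≥0∞)^((J:ℝ)*d/p) := by
    unfold localSum
    have hone : ∀ k : {k : Fin d → ℤ // inCube d J 0 k},
        ENNReal.ofReal ‖lam k.1‖ ^ p = 1 := by
      intro k
      simp [hld, testA, k.2]
    rw [tsum_congr hone, tsum_cube_const, mul_one, ← ENNReal.rpow_mul, mul_one_div]
  rw [hls, mul_assoc, two_rpow_mul, show -((J:ℝ)*d)/p + (J:ℝ)*d/p = 0 by ring,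
    ENNReal.rpow_zero, mul_one]


lemma int_sep {t T b u v : ℤ} (ht : t ≤ T) (hT : 0 < T)
    (hb1 : b ≤ T*u) (hb2 : T*u < b + t) (hb3 : b ≤ T*v) (hb4 : T*v < b + t) : u = v := by
  rcases lt_trichotomy u v with h | h | h
  · have h1 : T*(u+1) ≤ T*v := mul_le_mul_of_nonneg_left (by omega) hT.le
    rw [mul_add, mul_one] at h1
    linarith
  · exact h
  · have h1 : T*(v+1) ≤ T*u := mul_le_mul_of_nonneg_left (by omega) hT.le
    rw [mul_add, mul_one] at h1
    linarith

lemma sparse_emb (a j : ℕ) (haj : a ≤ j) (m : Fin d → ℤ) :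
    ∃ emb : {k : Fin d → ℤ // inCube d j m k ∧ ∀ i, ((2:ℤ)^a ∣ k i)} →
        (Fin d → Fin (2^(j-a))),
      Function.Injective emb := by
  have hT : (0:ℤ) < 2^a := by positivity
  have hpow : (2:ℤ)^j = 2^a * 2^(j-a) := by rw [← pow_add]; congr 1; omega
  have hcast : ((2^(j-a) : ℕ) : ℤ) = (2:ℤ)^(j-a) := by push_cast; ring
  have key : ∀ k : {k : Fin d → ℤ // inCube d j m k ∧ ∀ i, ((2:ℤ)^a ∣ k i)}, ∀ i,
      2^(j-a) * m i ≤ k.1 i / 2^a ∧ k.1 i / 2^a < 2^(j-a) * m i + 2^(j-a) := by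
    intro k i
    have hq : (2:ℤ)^a * (k.1 i / 2^a) = k.1 i := Int.mul_ediv_cancel' (k.2.2 i)
    have hb := k.2.1 i
    constructor
    · have h1 : (2:ℤ)^a * (2^(j-a) * m i) ≤ 2^a * (k.1 i / 2^a) := by
        rw [hq, ← mul_assoc, ← hpow]; exact hb.1
      exact le_of_mul_le_mul_left h1 hT
    · have h1 : (2:ℤ)^a * (k.1 i / 2^a) < 2^a * (2^(j-a) * m i + 2^(j-a)) := by
        rw [hq, mul_add, ← mul_assoc, ← hpow]
        have h2 : (2:ℤ)^j * (m i + 1) = 2^j * m i + 2^j := by ring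
        linarith [hb.2]
      exact lt_of_mul_lt_mul_left h1 hT.le
  refine ⟨fun k i => ⟨(k.1 i / 2^a - 2^(j-a) * m i).toNat, by
    have hk := key k i
    omega⟩, ?_⟩
  intro x y h
  apply Subtype.ext
  funext i
  have hveq : (x.1 i / 2^a - 2^(j-a) * m i).toNat = (y.1 i / 2^a - 2^(j-a) * m i).toNat := by
    have h2 := congrFun h i
    simpa using h2
  have hx := key x i
  have hy := key y i
  have hu : x.1 i / 2^a = y.1 i / 2^a := by omega
  have hqx : (2:ℤ)^a * (x.1 i / 2^a) = x.1 i := Int.mul_ediv_cancel' (x.2.2 i)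
  have hqy : (2:ℤ)^a * (y.1 i / 2^a) = y.1 i := Int.mul_ediv_cancel' (y.2.2 i)
  rw [← hqx, ← hqy, hu]

open Classical in
/-- second test sequence: indicator of the `2^a`-sublattice points of the cube `Q_{-J,0}` -/
def testB (d J a : ℕ) : (Fin d → ℤ) → ℂ :=
  fun k => if inCube d J 0 k ∧ (∀ i, ((2:ℤ)^a ∣ k i)) then (1:ℂ) else 0

lemma testB_le (hG : Gp d p φ) (hφ0 : φ 0 = 1) (hp : 0 < p) (J a : ℕ) (haJ : a ≤ J) :
    mNorm d p φ (testB d J a) ≤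
      max 1 (ENNReal.ofReal (φ J) * (2:ℝ≥0∞) ^ (-((a:ℝ)*d)/p)) := by
  classical
  have hnorm : ∀ k, ‖testB d J a k‖ ≤ 1 := fun k => by
    simp only [testB]
    split <;> simp
  have hcond : ∀ {k : Fin d → ℤ}, testB d J a k ≠ 0 →
      inCube d J 0 k ∧ (∀ i, ((2:ℤ)^a ∣ k i)) := by
    intro k h
    by_contra hc
    exact h (if_neg hc)
  apply mNorm_le
  intro j m
  rcases le_or_gt j a with hja | haj'
  · -- at most one lattice point in a small cube
    have ht : (2:ℤ)^j ≤ 2^a := pow_le_pow_right₀ (by norm_num) hja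
    have hT : (0:ℤ) < 2^a := by positivity
    have hinj : Function.Injective
        (fun _k : {k : {k : Fin d → ℤ // inCube d j m k} // testB d J a k.1 ≠ 0} =>
          (fun _ => (0 : Fin 1) : Fin d → Fin 1)) := by
      intro x y _
      apply Subtype.ext
      apply Subtype.ext
      funext i
      obtain ⟨u, hu⟩ := (hcond x.2).2 i
      obtain ⟨v, hv⟩ := (hcond y.2).2 i
      have hbx := x.1.2 i
      have hby := y.1.2 i
      have hb2 : (2:ℤ)^j * (m i + 1) = 2^j * m i + 2^j := by ring
      have huv : u = v := by
        rw [hu] at hbx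
        rw [hv] at hby
        exact int_sep ht hT hbx.1 (by linarith [hbx.2]) hby.1 (by linarith [hby.2])
      rw [hu, hv, huv]
    have hcount := localSum_le_count (lam := testB d J a) (j := j) (m := m) hp hnorm _ hinj
    have hcard : ((Fintype.card (Fin d → Fin 1) : ℝ≥0∞)) ^ (1/p) = 1 := by
      simp [Fintype.card_fun]
    rw [hcard] at hcount
    calc ENNReal.ofReal (φ j) * (2:ℝ≥0∞) ^ (-((j:ℝ)*d)/p) * localSum d p j m (testB d J a)
        ≤ 1 * 1 := mul_le_mul' (prefactor_le hG hφ0 j) hcount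
      _ = 1 := by rw [mul_one]
      _ ≤ _ := le_max_left _ _
  · have haj : a ≤ j := haj'.le
    rcases le_total j J with hjJ | hJj
    · obtain ⟨emb0, hinj0⟩ := sparse_emb (d := d) a j haj m
      have hinj : Function.Injective
          (fun k : {k : {k : Fin d → ℤ // inCube d j m k} // testB d J a k.1 ≠ 0} =>
            emb0 ⟨k.1.1, k.1.2, (hcond k.2).2⟩) := by
        intro x y h
        have h2 := hinj0 h
        simp only [Subtype.mk.injEq] at h2
        exact Subtype.ext (Subtype.ext h2)
      have hcount := localSum_le_count (lam := testB d J a) (j := j) (m := m) hp hnorm _ hinj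
      rw [card_rpow (j-a) d p] at hcount
      calc ENNReal.ofReal (φ j) * (2:ℝ≥0∞) ^ (-((j:ℝ)*d)/p) * localSum d p j m (testB d J a)
          ≤ ENNReal.ofReal (φ J) * (2:ℝ≥0∞) ^ (-((j:ℝ)*d)/p) *
              (2:ℝ≥0∞) ^ (((j-a : ℕ):ℝ)*d/p) := by
            gcongr
            exact (hG.2 j J hjJ).1
        _ = ENNReal.ofReal (φ J) * (2:ℝ≥0∞) ^ (-((a:ℝ)*d)/p) := by
            rw [mul_assoc, two_rpow_mul]
            congr 2
            rw [Nat.cast_sub haj]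
            ring
        _ ≤ _ := le_max_right _ _
    · obtain ⟨emb0, hinj0⟩ := sparse_emb (d := d) a J haJ 0
      have hinj : Function.Injective
          (fun k : {k : {k : Fin d → ℤ // inCube d j m k} // testB d J a k.1 ≠ 0} =>
            emb0 ⟨k.1.1, (hcond k.2).1, (hcond k.2).2⟩) := by
        intro x y h
        have h2 := hinj0 h
        simp only [Subtype.mk.injEq] at h2
        exact Subtype.ext (Subtype.ext h2)
      have hcount := localSum_le_count (lam := testB d J a) (j := j) (m := m) hp hnorm _ hinj
      rw [card_rpow (J-a) d p] at hcount
      calc ENNReal.ofReal (φ j) * (2:ℝ≥0∞) ^ (-((j:ℝ)*d)/p) * localSum d p j m (testB d J a)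
          ≤ ENNReal.ofReal (φ J * 2 ^ (((j:ℝ) - J)*d/p)) * ((2:ℝ≥0∞) ^ (-((j:ℝ)*d)/p) *
              (2:ℝ≥0∞) ^ (((J-a : ℕ):ℝ)*d/p)) := by
            rw [← mul_assoc]
            gcongr
            exact (hG.2 J j hJj).2
        _ = ENNReal.ofReal (φ J) * (2:ℝ≥0∞) ^ (-((a:ℝ)*d)/p) := by
            rw [ENNReal.ofReal_mul (hG.1 J).le, ← two_rpow_ofReal, two_rpow_mul, mul_assoc,
              two_rpow_mul]
            congr 2
            rw [Nat.cast_sub haJ]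
            ring
        _ ≤ _ := le_max_right _ _

lemma testB_ge (hp : 0 < p) (J a : ℕ) (haJ : a ≤ J) :
    ENNReal.ofReal (φ J) * (2:ℝ≥0∞) ^ (-((a:ℝ)*d)/p) ≤ mNorm d p φ (testB d J a) := by
  classical
  refine le_trans ?_ (term_le_mNorm (φ := φ) J 0)
  have hpowJ : (2:ℤ)^J = 2^a * 2^(J-a) := by rw [← pow_add]; congr 1; omega
  have hι : ∀ v : Fin d → Fin (2^(J-a)), inCube d J 0 (fun i => 2^a * (v i : ℤ)) := by
    intro v i
    have h2 := (v i).2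
    constructor
    · simp only [Pi.zero_apply, mul_zero]
      positivity
    · have hlt : ((v i : ℕ) : ℤ) < 2^(J-a) := by exact_mod_cast h2
      calc (2:ℤ)^a * (v i : ℕ) < 2^a * 2^(J-a) := by
            exact mul_lt_mul_of_pos_left hlt (by positivity)
        _ = 2^J * (0 + 1) := by rw [← hpowJ]; ring
  have hinj : Function.Injective (fun v : Fin d → Fin (2^(J-a)) =>
      (⟨fun i => 2^a * (v i : ℤ), hι v⟩ : {k : Fin d → ℤ // inCube d J 0 k})) := by
    intro x y h
    simp only [Subtype.mk.injEq] at h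
    funext i
    have h2 := congrFun h i
    have hT : (0:ℤ) < 2^a := by positivity
    apply Fin.ext
    have hx := mul_left_cancel₀ hT.ne' h2
    exact_mod_cast hx
  have hval : ∀ v : Fin d → Fin (2^(J-a)),
      ENNReal.ofReal ‖testB d J a (fun i => 2^a * (v i : ℤ))‖ ^ p = 1 := by
    intro v
    have h1 : testB d J a (fun i => 2^a * (v i:ℤ)) = 1 :=
      if_pos ⟨hι v, fun i => dvd_mul_right _ _⟩
    rw [h1]
    simp
  have hls : (2:ℝ≥0∞)^(((J-a : ℕ):ℝ)*d/p) ≤ localSum d p J 0 (testB d J a) := by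
    unfold localSum
    have h1 : (2:ℝ≥0∞)^(((J-a:ℕ):ℝ)*d) ≤
        ∑' k : {k : Fin d → ℤ // inCube d J 0 k}, ENNReal.ofReal ‖testB d J a k.1‖ ^ p := by
      calc (2:ℝ≥0∞)^(((J-a:ℕ):ℝ)*d)
          = ∑' v : Fin d → Fin (2^(J-a)), (1:ℝ≥0∞) := by
            rw [tsum_fintype]
            simp only [Finset.sum_const, Finset.card_univ, nsmul_eq_mul, mul_one]
            rw [show Fintype.card (Fin d → Fin (2^(J-a))) = (2^(J-a))^d by
              simp [Fintype.card_fun], card_cast]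
        _ = ∑' v : Fin d → Fin (2^(J-a)),
              ENNReal.ofReal ‖testB d J a ((fun i => 2^a * (v i : ℤ)))‖ ^ p :=
            tsum_congr (fun v => (hval v).symm)
        _ ≤ _ := ENNReal.tsum_comp_le_tsum_of_injective hinj
              (fun k : {k : Fin d → ℤ // inCube d J 0 k} => ENNReal.ofReal ‖testB d J a k.1‖ ^ p)
    have h2 := ENNReal.rpow_le_rpow h1 (by positivity : (0:ℝ) ≤ 1/p)
    rwa [← ENNReal.rpow_mul, mul_one_div] at h2
  calc ENNReal.ofReal (φ J) * (2:ℝ≥0∞) ^ (-((a:ℝ)*d)/p)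
      = ENNReal.ofReal (φ J) * (2:ℝ≥0∞) ^ (-((J:ℝ)*d)/p) *
          (2:ℝ≥0∞) ^ (((J-a : ℕ):ℝ)*d/p) := by
        rw [mul_assoc, two_rpow_mul]
        congr 2
        rw [Nat.cast_sub haJ]
        ring
    _ ≤ _ := by gcongr


open Classical in
def deltaSeq (d : ℕ) (k₀ : Fin d → ℤ) : (Fin d → ℤ) → ℂ := fun k => if k = k₀ then 1 else 0

lemma delta_le (hG : Gp d p φ) (hφ0 : φ 0 = 1) (hp : 0 < p) (k₀ : Fin d → ℤ) :
    mNorm d p φ (deltaSeq d k₀) ≤ 1 := by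
  classical
  have hnorm : ∀ k, ‖deltaSeq d k₀ k‖ ≤ 1 := fun k => by
    simp only [deltaSeq]
    split <;> simp
  apply mNorm_le
  intro j m
  have hinj : Function.Injective
      (fun _k : {k : {k : Fin d → ℤ // inCube d j m k} // deltaSeq d k₀ k.1 ≠ 0} =>
        (fun _ => (0:Fin 1) : Fin d → Fin 1)) := by
    intro x y _
    have hx : x.1.1 = k₀ := by by_contra h; exact x.2 (if_neg h)
    have hy : y.1.1 = k₀ := by by_contra h; exact y.2 (if_neg h)
    exact Subtype.ext (Subtype.ext (hx.trans hy.symm))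
  have hcount := localSum_le_count (lam := deltaSeq d k₀) (j := j) (m := m) hp hnorm _ hinj
  have hcard : ((Fintype.card (Fin d → Fin 1) : ℝ≥0∞)) ^ (1/p) = 1 := by
    simp [Fintype.card_fun]
  rw [hcard] at hcount
  calc ENNReal.ofReal (φ j) * (2:ℝ≥0∞) ^ (-((j:ℝ)*d)/p) * localSum d p j m (deltaSeq d k₀)
      ≤ 1 * 1 := mul_le_mul' (prefactor_le hG hφ0 j) hcount
    _ = 1 := mul_one 1

lemma sufficiency {d : ℕ} {p₁ p₂ : ℝ} {φ₁ φ₂ : ℕ → ℝ} (hp₁ : 0 < p₁) (hp₂ : 0 < p₂)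
    (hG₁ : Gp d p₁ φ₁) (hG₂ : Gp d p₂ φ₂) (hφ₁1 : φ₁ 0 = 1) (hφ₂1 : φ₂ 0 = 1)
    {C0 : ℝ} (hC0 : ∀ j, φ₂ j ≤ C0 * (φ₁ j) ^ (min 1 (p₁/p₂)))
    (lam : (Fin d → ℤ) → ℂ) :
    mNorm d p₂ φ₂ lam ≤ ENNReal.ofReal C0 * mNorm d p₁ φ₁ lam := by
  have hC0one : 1 ≤ C0 := by
    have h := hC0 0
    rwa [hφ₂1, hφ₁1, Real.one_rpow, mul_one] at h
  have hC0pos : (0:ℝ) ≤ C0 := by linarith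
  set M := mNorm d p₁ φ₁ lam with hM
  apply mNorm_le
  intro j m
  rcases le_total p₂ p₁ with hpp | hpp
  · have hmin : min 1 (p₁/p₂) = 1 := min_eq_left ((one_le_div hp₂).2 hpp)
    have hφ : φ₂ j ≤ C0 * φ₁ j := by
      have h := hC0 j
      rwa [hmin, Real.rpow_one] at h
    calc ENNReal.ofReal (φ₂ j) * (2:ℝ≥0∞) ^ (-((j:ℝ)*d)/p₂) * localSum d p₂ j m lam
        ≤ ENNReal.ofReal (φ₂ j) * (2:ℝ≥0∞) ^ (-((j:ℝ)*d)/p₂) *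
            ((2:ℝ≥0∞) ^ (((j:ℝ)*d)/p₂ - ((j:ℝ)*d)/p₁) * localSum d p₁ j m lam) := by
          gcongr
          exact localSum_holder hp₂ hp₁ hpp j m
      _ = ENNReal.ofReal (φ₂ j) * ((2:ℝ≥0∞) ^ (-((j:ℝ)*d)/p₂) *
            (2:ℝ≥0∞) ^ (((j:ℝ)*d)/p₂ - ((j:ℝ)*d)/p₁)) * localSum d p₁ j m lam := by ring
      _ = ENNReal.ofReal (φ₂ j) * (2:ℝ≥0∞) ^ (-((j:ℝ)*d)/p₁) * localSum d p₁ j m lam := by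
          rw [two_rpow_mul, show -((j:ℝ)*d)/p₂ + (((j:ℝ)*d)/p₂ - ((j:ℝ)*d)/p₁)
            = -((j:ℝ)*d)/p₁ by ring]
      _ ≤ ENNReal.ofReal (C0 * φ₁ j) * (2:ℝ≥0∞) ^ (-((j:ℝ)*d)/p₁) * localSum d p₁ j m lam := by
          gcongr
      _ = ENNReal.ofReal C0 *
            (ENNReal.ofReal (φ₁ j) * (2:ℝ≥0∞) ^ (-((j:ℝ)*d)/p₁) * localSum d p₁ j m lam) := by
          rw [ENNReal.ofReal_mul hC0pos]
          ring
      _ ≤ ENNReal.ofReal C0 * M := by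
          gcongr
          exact term_le_mNorm j m
  · have hϱm : min 1 (p₁/p₂) = p₁/p₂ := min_eq_right ((div_le_one hp₂).2 hpp)
    set ϱ := p₁/p₂ with hϱdef
    have hϱ0 : 0 ≤ ϱ := by positivity
    have hϱ1 : ϱ ≤ 1 := (div_le_one hp₂).2 hpp
    have hφ : ENNReal.ofReal (φ₂ j) ≤ ENNReal.ofReal C0 * ENNReal.ofReal (φ₁ j) ^ ϱ := by
      have h := hC0 j
      rw [hϱm] at h
      calc ENNReal.ofReal (φ₂ j) ≤ ENNReal.ofReal (C0 * φ₁ j ^ ϱ) :=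
            ENNReal.ofReal_le_ofReal h
        _ = ENNReal.ofReal C0 * ENNReal.ofReal (φ₁ j) ^ ϱ := by
            rw [ENNReal.ofReal_mul hC0pos, ENNReal.ofReal_rpow_of_pos (hG₁.1 j)]
    have hE : (2:ℝ≥0∞) ^ (-((j:ℝ)*d)/p₂) = ((2:ℝ≥0∞) ^ (-((j:ℝ)*d)/p₁)) ^ ϱ := by
      rw [← ENNReal.rpow_mul]
      congr 1
      rw [hϱdef, div_mul_div_comm, mul_comm (-((j:ℝ)*d)) p₁, mul_div_mul_left _ _ hp₁.ne']
    have hinterp := localSum_interp (lam := lam) hp₁ hp₂ hpp j m M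
      (point_le_mNorm hp₁ hφ₁1)
    calc ENNReal.ofReal (φ₂ j) * (2:ℝ≥0∞) ^ (-((j:ℝ)*d)/p₂) * localSum d p₂ j m lam
        ≤ (ENNReal.ofReal C0 * ENNReal.ofReal (φ₁ j) ^ ϱ) * (2:ℝ≥0∞) ^ (-((j:ℝ)*d)/p₂) *
            (M ^ (1 - ϱ) * (localSum d p₁ j m lam) ^ ϱ) := by
          gcongr
      _ = ENNReal.ofReal C0 * M ^ (1 - ϱ) *
            (ENNReal.ofReal (φ₁ j) ^ ϱ * ((2:ℝ≥0∞) ^ (-((j:ℝ)*d)/p₁)) ^ ϱ *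
              (localSum d p₁ j m lam) ^ ϱ) := by
          rw [hE]
          ring
      _ = ENNReal.ofReal C0 * M ^ (1 - ϱ) *
            (ENNReal.ofReal (φ₁ j) * (2:ℝ≥0∞) ^ (-((j:ℝ)*d)/p₁) *
              localSum d p₁ j m lam) ^ ϱ := by
          rw [ENNReal.mul_rpow_of_nonneg _ _ hϱ0, ENNReal.mul_rpow_of_nonneg _ _ hϱ0]
      _ ≤ ENNReal.ofReal C0 * M ^ (1 - ϱ) * M ^ ϱ := by
          gcongr
          exact term_le_mNorm j m
      _ = ENNReal.ofReal C0 * M := by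
          rw [mul_assoc, ← ENNReal.rpow_add_of_nonneg _ _ (by linarith) hϱ0,
            sub_add_cancel, ENNReal.rpow_one]

end Morrey

open Morrey in
theorem stmt_13 (d : ℕ) (hd : 0 < d) (p₁ p₂ : ℝ) (hp₁ : 0 < p₁) (hp₂ : 0 < p₂)
    (φ₁ φ₂ : ℕ → ℝ) (hGp₁ : Gp d p₁ φ₁) (hGp₂ : Gp d p₂ φ₂)
    (hφ₁1 : φ₁ 0 = 1) (hφ₂1 : φ₂ 0 = 1)
    (hunb₁ : ∀ C : ℝ, ∃ k, C < φ₁ k) (hunb₂ : ∀ C : ℝ, ∃ k, C < φ₂ k) :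
    ((∃ C : ℝ≥0∞, C < ⊤ ∧ ∀ lam : (Fin d → ℤ) → ℂ,
        mNorm d p₂ φ₂ lam ≤ C * mNorm d p₁ φ₁ lam) ↔
      (∃ C : ℝ, ∀ j : ℕ, φ₂ j ≤ C * (φ₁ j) ^ (min 1 (p₁ / p₂)))) ∧
    ((∃ C : ℝ≥0∞, C < ⊤ ∧ ∀ lam : (Fin d → ℤ) → ℂ,
        mNorm d p₂ φ₂ lam ≤ C * mNorm d p₁ φ₁ lam) →
      ∃ (x : ℕ → (Fin d → ℤ) → ℂ) (c : ℝ≥0∞), 0 < c ∧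
        (∀ n, mNorm d p₁ φ₁ (x n) ≤ 1) ∧
        ∀ n n' : ℕ, n ≠ n' → c ≤ mNorm d p₂ φ₂ (x n - x n')) := by
  classical
  constructor
  · constructor
    · rintro ⟨C, hCt, hC⟩
      rcases le_total p₂ p₁ with hpp | hpp
      · refine ⟨C.toReal, fun J => ?_⟩
        have hmin : min 1 (p₁/p₂) = 1 := min_eq_left ((one_le_div hp₂).2 hpp)
        rw [hmin, Real.rpow_one]
        have h1 : ENNReal.ofReal (φ₂ J) ≤ C * ENNReal.ofReal (φ₁ J) :=
          (testA_ge hp₂ J).trans ((hC (testA d J)).trans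
            (mul_le_mul_right (testA_le hGp₁ hφ₁1 hp₁ J) C))
        have h2 : C * ENNReal.ofReal (φ₁ J) = ENNReal.ofReal (C.toReal * φ₁ J) := by
          rw [ENNReal.ofReal_mul ENNReal.toReal_nonneg, ENNReal.ofReal_toReal hCt.ne]
        rw [h2] at h1
        exact (ENNReal.ofReal_le_ofReal_iff
          (mul_nonneg ENNReal.toReal_nonneg (hGp₁.1 J).le)).1 h1
      · refine ⟨C.toReal * (2:ℝ) ^ ((d:ℝ)/p₂), fun J => ?_⟩
        have hmin : min 1 (p₁/p₂) = p₁/p₂ := min_eq_right ((div_le_one hp₂).2 hpp)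
        rw [hmin]
        have hφ₁J : 1 ≤ φ₁ J := hφ₁1 ▸ (hGp₁.2 0 J (Nat.zero_le J)).1
        have hPJ : (φ₁ J) ^ p₁ ≤ (2:ℝ) ^ ((J:ℝ)*d) := by
          have h := (hGp₁.2 0 J (Nat.zero_le J)).2
          rw [hφ₁1, one_mul, Nat.cast_zero, sub_zero] at h
          calc (φ₁ J)^p₁ ≤ ((2:ℝ) ^ ((J:ℝ)*d/p₁))^p₁ :=
                Real.rpow_le_rpow (hGp₁.1 J).le h hp₁.le
            _ = (2:ℝ) ^ ((J:ℝ)*d) := by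
                rw [← Real.rpow_mul (by norm_num), div_mul_cancel₀ _ hp₁.ne']
        have hex : ∃ n : ℕ, (φ₁ J) ^ p₁ ≤ (2:ℝ) ^ ((n:ℝ)*d) := ⟨J, hPJ⟩
        set a := Nat.find hex with ha
        have haJ : a ≤ J := Nat.find_min' hex hPJ
        have hPa : (φ₁ J) ^ p₁ ≤ (2:ℝ) ^ ((a:ℝ)*d) := Nat.find_spec hex
        have hlow : (2:ℝ) ^ ((a:ℝ)*d) ≤ (2:ℝ) ^ ((d:ℝ)) * (φ₁ J)^p₁ := by
          rcases Nat.eq_zero_or_pos a with h0 | h0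
          · rw [h0]
            simp only [Nat.cast_zero, zero_mul, Real.rpow_zero]
            have e1 : (1:ℝ) ≤ (φ₁ J)^p₁ := Real.one_le_rpow hφ₁J hp₁.le
            have e2 : (1:ℝ) ≤ (2:ℝ)^((d:ℝ)) := Real.one_le_rpow (by norm_num) (by positivity)
            nlinarith
          · have hb : ¬ ((φ₁ J) ^ p₁ ≤ (2:ℝ) ^ (((a-1 : ℕ):ℝ)*(d:ℝ))) :=
              Nat.find_min hex (by omega)
            push_neg at hb
            have e0 : ((a - 1 : ℕ) : ℝ) = (a:ℝ) - 1 := by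
              rw [Nat.cast_sub (by omega : 1 ≤ a), Nat.cast_one]
            have e1 : (2:ℝ)^((a:ℝ)*d) = (2:ℝ)^(((a-1:ℕ):ℝ)*(d:ℝ)) * (2:ℝ)^((d:ℝ)) := by
              rw [← Real.rpow_add (by norm_num)]
              congr 1
              rw [e0]
              ring
            rw [e1]
            have hpos : (0:ℝ) < (2:ℝ)^((d:ℝ)) := Real.rpow_pos_of_pos (by norm_num) _
            nlinarith [hb.le]
        have hupp : ENNReal.ofReal (φ₁ J) * (2:ℝ≥0∞) ^ (-((a:ℝ)*d)/p₁) ≤ 1 := by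
          have hφle : φ₁ J ≤ (2:ℝ) ^ ((a:ℝ)*d/p₁) := by
            have h1 : ((φ₁ J)^p₁)^(1/p₁) ≤ ((2:ℝ)^((a:ℝ)*d))^(1/p₁) :=
              Real.rpow_le_rpow (by positivity) hPa (by positivity)
            rwa [← Real.rpow_mul (hGp₁.1 J).le, mul_one_div, div_self hp₁.ne',
              Real.rpow_one, ← Real.rpow_mul (by norm_num), mul_one_div] at h1
          calc ENNReal.ofReal (φ₁ J) * (2:ℝ≥0∞) ^ (-((a:ℝ)*d)/p₁)
              ≤ ENNReal.ofReal ((2:ℝ)^((a:ℝ)*d/p₁)) * (2:ℝ≥0∞) ^ (-((a:ℝ)*d)/p₁) := by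
                gcongr
            _ = 1 := by
                rw [← two_rpow_ofReal, two_rpow_mul,
                  show ((a:ℝ)*d/p₁ + -((a:ℝ)*d)/p₁) = 0 by ring, ENNReal.rpow_zero]
        have hm1 : mNorm d p₁ φ₁ (testB d J a) ≤ 1 :=
          (testB_le hGp₁ hφ₁1 hp₁ J a haJ).trans (max_le le_rfl hupp)
        have hkey : ENNReal.ofReal (φ₂ J) * (2:ℝ≥0∞)^(-((a:ℝ)*d)/p₂) ≤ C :=
          (testB_ge hp₂ J a haJ).trans ((hC _).trans
            ((mul_le_mul_right hm1 C).trans_eq (mul_one C)))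
        have hkey2 : ENNReal.ofReal (φ₂ J) ≤ C * (2:ℝ≥0∞)^(((a:ℝ)*d)/p₂) := by
          have h := mul_le_mul_left hkey ((2:ℝ≥0∞)^(((a:ℝ)*d)/p₂))
          rwa [mul_assoc, two_rpow_mul, show -((a:ℝ)*d)/p₂ + ((a:ℝ)*d)/p₂ = 0 by ring,
            ENNReal.rpow_zero, mul_one] at h
        have hreal : (2:ℝ)^(((a:ℝ)*d)/p₂) ≤ (2:ℝ)^((d:ℝ)/p₂) * (φ₁ J)^(p₁/p₂) := by
          have h1 : ((2:ℝ)^((a:ℝ)*d))^(1/p₂) ≤ ((2:ℝ)^((d:ℝ)) * (φ₁ J)^p₁)^(1/p₂) :=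
            Real.rpow_le_rpow (by positivity) hlow (by positivity)
          rw [← Real.rpow_mul (by norm_num), mul_one_div,
            Real.mul_rpow (by positivity) (by positivity),
            ← Real.rpow_mul (by norm_num), ← Real.rpow_mul (hGp₁.1 J).le,
            mul_one_div, mul_one_div] at h1
          exact h1
        have hfin : ENNReal.ofReal (φ₂ J) ≤
            ENNReal.ofReal (C.toReal * ((2:ℝ)^((d:ℝ)/p₂) * (φ₁ J)^(p₁/p₂))) := by
          refine hkey2.trans ?_
          rw [ENNReal.ofReal_mul ENNReal.toReal_nonneg, ENNReal.ofReal_toReal hCt.ne]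
          gcongr
          rw [two_rpow_ofReal]
          exact ENNReal.ofReal_le_ofReal hreal
        have hfin2 := (ENNReal.ofReal_le_ofReal_iff
          (mul_nonneg ENNReal.toReal_nonneg (by positivity))).1 hfin
        rw [mul_assoc]
        exact hfin2
    · rintro ⟨C0, hC0⟩
      exact ⟨ENNReal.ofReal C0, ENNReal.ofReal_lt_top,
        fun lam => sufficiency hp₁ hp₂ hGp₁ hGp₂ hφ₁1 hφ₂1 hC0 lam⟩
  · intro _
    refine ⟨fun n => deltaSeq d (fun _ => (n:ℤ)), 1, zero_lt_one,
      fun n => delta_le hGp₁ hφ₁1 hp₁ _, ?_⟩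
    intro n n' hne
    have hv : (deltaSeq d (fun _ => ((n:ℕ):ℤ)) - deltaSeq d (fun _ => ((n':ℕ):ℤ)))
        (fun _ => ((n:ℕ):ℤ)) = 1 := by
      have h1 : deltaSeq d (fun _ => ((n:ℕ):ℤ)) (fun _ => ((n:ℕ):ℤ)) = 1 := if_pos rfl
      have h2 : deltaSeq d (fun _ => ((n':ℕ):ℤ)) (fun _ => ((n:ℕ):ℤ)) = 0 := by
        refine if_neg ?_
        intro h
        have h3 := congrFun h ⟨0, hd⟩
        exact hne (by exact_mod_cast h3)
      rw [Pi.sub_apply, h1, h2, sub_zero]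
    have hkey := point_le_mNorm
      (lam := deltaSeq d (fun _ => ((n:ℕ):ℤ)) - deltaSeq d (fun _ => ((n':ℕ):ℤ)))
      hp₂ hφ₂1 (fun _ => ((n:ℕ):ℤ))
    rw [hv] at hkey
    simpa using hkey
end
end

section
/- Let 0<p_i<∞, φ_i∈𝒢_{p_i}(𝔻), φ_i(1)=1, sup_k φ_i(2^k)=∞, i=1,2. Then m_{φ₁,p₁}(ℤ^d) = m_{φ₂,p₂}(ℤ^d) with equivalent norms if, and only if, p₁=p₂ and φ₁(2^j) ∼ φ₂(2^j) uniformly in j∈ℕ₀. -/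
open ENNReal Filter

noncomputable section

/-- the per-coordinate finite set. -/
def coordSet (j J L : ℕ) (a : ℤ) : Finset ℤ :=
  (Finset.Ico (2 ^ j * a) (2 ^ j * a + 2 ^ j)).filter
    (fun x => 0 ≤ x ∧ x < 2 ^ J ∧ (2 ^ L : ℤ) ∣ x)

/-- number of multiples of q in an interval of length n*q is at most n -/
lemma card_dvd_Ico_le (q : ℤ) (hq : 0 < q) (a : ℤ) (n : ℕ)
    (s : Finset ℤ) (hs : ∀ x ∈ s, a ≤ x ∧ x < a + n * q ∧ q ∣ x) :
    s.card ≤ n := by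
  classical
  set c : ℤ := (a + q - 1) / q with hc
  have hmod := Int.mul_ediv_add_emod (a + q - 1) q
  have h1 : 0 ≤ (a + q - 1) % q := Int.emod_nonneg _ (ne_of_gt hq)
  have h2 : (a + q - 1) % q < q := Int.emod_lt_of_pos _ hq
  rw [← hc] at hmod
  have hqc1 : a ≤ q * c := by omega
  have hqc2 : q * c ≤ a + q - 1 := by omega
  have : s.card ≤ (Finset.Ico c (c + n)).card := by
    apply Finset.card_le_card_of_injOn (fun x => x / q)
    · intro x hx
      obtain ⟨hax, hxu, t, ht⟩ := hs x hx
      subst ht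
      simp only [Finset.mem_coe, Int.mul_ediv_cancel_left _ (ne_of_gt hq)]
      simp only [Finset.mem_Ico]
      constructor
      · by_contra hlt
        push_neg at hlt
        have : t ≤ c - 1 := by omega
        have : q * t ≤ q * (c - 1) := by
          exact mul_le_mul_of_nonneg_left this (le_of_lt hq)
        nlinarith
      · by_contra hge
        push_neg at hge
        have : q * (c + n) ≤ q * t := mul_le_mul_of_nonneg_left hge (le_of_lt hq)
        nlinarith
    · intro x hx y hy hxy
      obtain ⟨-, -, t, ht⟩ := hs x hx
      obtain ⟨-, -, u, hu⟩ := hs y hy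
      subst ht; subst hu
      simp only [Int.mul_ediv_cancel_left _ (ne_of_gt hq)] at hxy
      rw [hxy]
  simpa using this

lemma coordSet_card_le (j J L : ℕ) (a : ℤ) :
    (coordSet j J L a).card ≤ 2 ^ (min j J - L) := by
  classical
  rcases le_or_gt L (min j J) with hL | hL
  · rcases le_total j J with hjJ | hjJ
    · -- j ≤ J : use interval of length 2^j = 2^(j-L) * 2^L
      have hmin : min j J = j := min_eq_left hjJ
      rw [hmin]
      have hL' : L ≤ j := hmin ▸ hL
      apply card_dvd_Ico_le ((2:ℤ)^L) (by positivity) (2^j * a) (2^(j-L))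
      intro x hx
      simp only [coordSet, Finset.mem_filter, Finset.mem_Ico] at hx
      refine ⟨hx.1.1, ?_, hx.2.2.2⟩
      have : ((2:ℤ)^(j-L)) * 2^L = 2^j := by
        rw [← pow_add]; congr 1; omega
      push_cast
      omega
    · -- J ≤ j : use [0, 2^J)
      have hmin : min j J = J := min_eq_right hjJ
      rw [hmin]
      have hL' : L ≤ J := hmin ▸ hL
      apply card_dvd_Ico_le ((2:ℤ)^L) (by positivity) 0 (2^(J-L))
      intro x hx
      simp only [coordSet, Finset.mem_filter, Finset.mem_Ico] at hx
      refine ⟨hx.2.1, ?_, hx.2.2.2⟩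
      have : ((2:ℤ)^(J-L)) * 2^L = 2^J := by
        rw [← pow_add]; congr 1; omega
      have := hx.2.2.1
      push_cast
      omega
  · -- min j J < L : card ≤ 1 = 2^0
    have h0 : min j J - L = 0 := by omega
    rw [h0, pow_zero]
    apply Finset.card_le_one.mpr
    intro x hx y hy
    simp only [coordSet, Finset.mem_filter, Finset.mem_Ico] at hx hy
    obtain ⟨⟨hx1, hx2⟩, hx3, hx4, t, ht⟩ := hx
    obtain ⟨⟨hy1, hy2⟩, hy3, hy4, u, hu⟩ := hy
    have hd : (2:ℤ)^L ∣ (x - y) := ⟨t - u, by rw [ht, hu]; ring⟩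
    have hlt : |x - y| < 2^L := by
      rcases min_lt_iff.mp hL with hj | hJ
      · have hjL : (2:ℤ)^j ≤ 2^L := pow_le_pow_right₀ (by norm_num) (le_of_lt hj)
        rw [abs_lt]; omega
      · have hJL : (2:ℤ)^J ≤ 2^L := pow_le_pow_right₀ (by norm_num) (le_of_lt hJ)
        rw [abs_lt]; omega
    have := Int.eq_zero_of_abs_lt_dvd hd hlt
    omega

lemma coordSet_card_JJ (J L : ℕ) (hLJ : L ≤ J) :
    (coordSet J J L 0).card = 2 ^ (J - L) := by
  classical
  have hq : (0:ℤ) < 2 ^ L := by positivity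
  have hpow : (2:ℤ)^L * 2^(J-L) = 2^J := by rw [← pow_add]; congr 1; omega
  have himg : coordSet J J L 0 = (Finset.Ico (0:ℤ) (2^(J-L))).image (fun t => 2^L * t) := by
    ext x
    simp only [coordSet, Finset.mem_filter, Finset.mem_Ico, Finset.mem_image, mul_zero, zero_add]
    constructor
    · rintro ⟨⟨h0, h1⟩, -, -, t, ht⟩
      refine ⟨t, ⟨?_, ?_⟩, ht.symm⟩
      · by_contra h
        push_neg at h
        have : (2:ℤ)^L * t < 2^L * 0 := by
          apply mul_lt_mul_of_pos_left _ hq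
          omega
        simp at this
        omega
      · by_contra h
        push_neg at h
        have : (2:ℤ)^L * 2^(J-L) ≤ 2^L * t := mul_le_mul_of_nonneg_left h (le_of_lt hq)
        omega
    · rintro ⟨t, ⟨h0, h1⟩, rfl⟩
      have h2 : (0:ℤ) ≤ 2^L * t := mul_nonneg (le_of_lt hq) h0
      have h3 : (2:ℤ)^L * t < 2^L * 2^(J-L) := mul_lt_mul_of_pos_left h1 hq
      exact ⟨⟨h2, by omega⟩, h2, by omega, ⟨t, rfl⟩⟩
  rw [himg, Finset.card_image_of_injective _ (mul_right_injective₀ (ne_of_gt hq))]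
  rw [Int.card_Ico]
  have : ((2:ℤ) ^ (J-L) - 0) = ((2^(J-L) : ℕ) : ℤ) := by push_cast; ring
  rw [this, Int.toNat_natCast]

lemma coordSet_zero (J L : ℕ) : coordSet 0 J L 0 = {0} := by
  ext x
  simp only [coordSet, Finset.mem_filter, Finset.mem_Ico, Finset.mem_singleton,
    pow_zero, mul_zero, zero_add]
  constructor
  · rintro ⟨⟨h0, h1⟩, -⟩; omega
  · rintro rfl
    refine ⟨⟨le_refl _, by norm_num⟩, le_refl _, by positivity, dvd_zero _⟩

/-- the test sequence: indicator of the `2^L`-lattice points inside `[0,2^J)^d` -/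
def lat (d J L : ℕ) : (Fin d → ℤ) → ℂ := fun k =>
  if ∀ i, 0 ≤ k i ∧ k i < 2 ^ J ∧ (2 ^ L : ℤ) ∣ k i then 1 else 0

lemma localSum_lat (d : ℕ) (p : ℝ) (hp : 0 < p) (j J L : ℕ) (m : Fin d → ℤ) :
    localSum d p j m (lat d J L)
      = ((Fintype.piFinset (fun i : Fin d => coordSet j J L (m i))).card : ℝ≥0∞) ^ (1/p) := by
  classical
  set F := Fintype.piFinset (fun i : Fin d => coordSet j J L (m i)) with hF
  have hfun : ∀ k : Fin d → ℤ, ENNReal.ofReal ‖lat d J L k‖ ^ p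
      = Set.indicator {k : Fin d → ℤ | ∀ i, 0 ≤ k i ∧ k i < 2 ^ J ∧ (2 ^ L : ℤ) ∣ k i}
          (fun _ => (1:ℝ≥0∞)) k := by
    intro k
    by_cases h : ∀ i, 0 ≤ k i ∧ k i < 2 ^ J ∧ (2 ^ L : ℤ) ∣ k i
    · simp [lat, h, Set.indicator_of_mem, ENNReal.one_rpow]
    · simp [lat, h, Set.indicator_of_notMem, ENNReal.zero_rpow_of_pos hp]
  unfold localSum
  congr 1
  calc ∑' k : {k : Fin d → ℤ // inCube d j m k}, ENNReal.ofReal ‖lat d J L k.1‖ ^ p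
      = ∑' k : {k : Fin d → ℤ // inCube d j m k},
          Set.indicator {k : Fin d → ℤ | ∀ i, 0 ≤ k i ∧ k i < 2 ^ J ∧ (2 ^ L : ℤ) ∣ k i}
            (fun _ => (1:ℝ≥0∞)) k.1 := by
        exact tsum_congr fun k => hfun k.1
    _ = ∑' k : Fin d → ℤ, Set.indicator {k : Fin d → ℤ | inCube d j m k}
          (Set.indicator {k : Fin d → ℤ | ∀ i, 0 ≤ k i ∧ k i < 2 ^ J ∧ (2 ^ L : ℤ) ∣ k i}
            (fun _ => (1:ℝ≥0∞))) k := by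
        exact tsum_subtype {k : Fin d → ℤ | inCube d j m k} _
    _ = ∑' k : Fin d → ℤ, Set.indicator (↑F) (fun _ => (1:ℝ≥0∞)) k := by
        apply tsum_congr
        intro k
        rw [Set.indicator_indicator]
        congr 1
        ext x
        simp only [Set.mem_inter_iff, Set.mem_setOf_eq, hF, Finset.coe_sort_coe,
          Fintype.mem_piFinset, Finset.mem_coe, coordSet, Finset.mem_filter, Finset.mem_Ico,
          inCube]
        constructor
        · rintro ⟨h1, h2⟩ i
          exact ⟨⟨(h1 i).1, by have := (h1 i).2; ring_nf at this ⊢; omega⟩, h2 i⟩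
        · intro h
          exact ⟨fun i => ⟨(h i).1.1, by have := (h i).1.2; ring_nf at this ⊢; omega⟩,
            fun i => (h i).2⟩
    _ = ∑ k ∈ F, Set.indicator (↑F) (fun _ => (1:ℝ≥0∞)) k := by
        apply tsum_eq_sum
        intro b hb
        exact Set.indicator_of_notMem (by simpa using hb) _
    _ = (F.card : ℝ≥0∞) := by
        rw [Finset.sum_indicator_subset _ (Finset.Subset.refl F)] at *
        · simp

lemma two_rpow_eq (x : ℝ) : (2:ℝ≥0∞) ^ x = ENNReal.ofReal (2 ^ x) := by
  rw [← ENNReal.ofReal_rpow_of_pos (by norm_num : (0:ℝ) < 2)]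
  norm_num

/-- the real-valued version of a single term in the `mNorm` supremum for `lat`. -/
def Tterm (d : ℕ) (p : ℝ) (φ : ℕ → ℝ) (J L j : ℕ) (m : Fin d → ℤ) : ℝ :=
  φ j * 2 ^ (-((j:ℝ) * d) / p) *
    (((Fintype.piFinset fun i : Fin d => coordSet j J L (m i)).card : ℝ)) ^ (1/p)

lemma Tterm_nonneg (d : ℕ) (p : ℝ) (φ : ℕ → ℝ) (hφ : 0 < φ j) (J L : ℕ) (m : Fin d → ℤ) :
    0 ≤ Tterm d p φ J L j m := by
  unfold Tterm
  positivity

lemma term_eq (d : ℕ) (p : ℝ) (hp : 0 < p) (φ : ℕ → ℝ) (hφ : ∀ k, 0 < φ k)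
    (J L j : ℕ) (m : Fin d → ℤ) :
    ENNReal.ofReal (φ j) * (2:ℝ≥0∞) ^ (-((j:ℝ)*d)/p) * localSum d p j m (lat d J L)
      = ENNReal.ofReal (Tterm d p φ J L j m) := by
  rw [localSum_lat d p hp j J L m, two_rpow_eq]
  have h1 : (((Fintype.piFinset fun i : Fin d => coordSet j J L (m i)).card : ℕ) : ℝ≥0∞)
      = ENNReal.ofReal (((Fintype.piFinset fun i : Fin d => coordSet j J L (m i)).card : ℕ) : ℝ) :=
    (ENNReal.ofReal_natCast _).symm
  rw [h1, ENNReal.ofReal_rpow_of_nonneg (by positivity) (one_div_nonneg.mpr hp.le),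
    ← ENNReal.ofReal_mul (le_of_lt (hφ j)),
    ← ENNReal.ofReal_mul (mul_nonneg (hφ j).le (Real.rpow_nonneg (by norm_num) _))]
  rfl

lemma mNorm_lat_eq_iSup (d : ℕ) (p : ℝ) (hp : 0 < p) (φ : ℕ → ℝ) (hφ : ∀ k, 0 < φ k)
    (J L : ℕ) :
    mNorm d p φ (lat d J L) = ⨆ (j : ℕ) (m : Fin d → ℤ), ENNReal.ofReal (Tterm d p φ J L j m) := by
  unfold mNorm
  congr 1; ext j; congr 1; ext m
  exact term_eq d p hp φ hφ J L j m

lemma Tterm_le (d : ℕ) (p : ℝ) (hp : 0 < p) (φ : ℕ → ℝ) (hG : Gp d p φ) (hφ0 : φ 0 = 1)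
    (J L : ℕ) (hLJ : L ≤ J) (j : ℕ) (m : Fin d → ℤ) :
    Tterm d p φ J L j m ≤ max 1 (φ J * 2 ^ (-((L:ℝ)*d)/p)) := by
  have hφ := hG.1
  have two_pos : (0:ℝ) < 2 := by norm_num
  set n : ℕ := (min j J - L) * d with hn
  have hcard : (((Fintype.piFinset fun i : Fin d => coordSet j J L (m i)).card : ℕ) : ℝ)
      ≤ (2:ℝ) ^ n := by
    rw [Fintype.card_piFinset]
    push_cast
    calc (∏ i : Fin d, ((coordSet j J L (m i)).card : ℝ))
        ≤ ∏ _i : Fin d, ((2:ℝ) ^ (min j J - L)) := by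
          apply Finset.prod_le_prod (fun i _ => by positivity)
          intro i _
          exact_mod_cast coordSet_card_le j J L (m i)
      _ = (2:ℝ) ^ n := by
          rw [Finset.prod_const, ← pow_mul]
          simp [hn, Finset.card_univ]
  have hcard' : (((Fintype.piFinset fun i : Fin d => coordSet j J L (m i)).card : ℕ) : ℝ) ^ (1/p)
      ≤ (2:ℝ) ^ ((n:ℝ)/p) := by
    calc (((Fintype.piFinset fun i : Fin d => coordSet j J L (m i)).card : ℕ) : ℝ) ^ (1/p)
        ≤ ((2:ℝ) ^ n) ^ (1/p) :=
          Real.rpow_le_rpow (by positivity) hcard (one_div_nonneg.mpr hp.le)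
      _ = (2:ℝ) ^ ((n:ℝ)/p) := by
          rw [← Real.rpow_natCast 2 n, ← Real.rpow_mul two_pos.le]
          congr 1; ring
  have hT : Tterm d p φ J L j m ≤ φ j * 2 ^ (((n:ℝ) - (j:ℝ)*d)/p) := by
    unfold Tterm
    calc φ j * 2 ^ (-((j:ℝ) * d) / p) *
          (((Fintype.piFinset fun i : Fin d => coordSet j J L (m i)).card : ℕ) : ℝ) ^ (1/p)
        ≤ φ j * 2 ^ (-((j:ℝ) * d) / p) * (2:ℝ) ^ ((n:ℝ)/p) := by
          apply mul_le_mul_of_nonneg_left hcard'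
          exact mul_nonneg (hφ j).le (Real.rpow_nonneg two_pos.le _)
      _ = φ j * 2 ^ (((n:ℝ) - (j:ℝ)*d)/p) := by
          rw [mul_assoc, ← Real.rpow_add two_pos]
          congr 2; ring
  rcases le_or_gt j L with hjL | hjL
  · -- j ≤ L : bound by 1
    have hn0 : (n:ℝ) = 0 := by
      have h1 : min j J ≤ L := le_trans (min_le_left _ _) hjL
      have h2 : min j J - L = 0 := by omega
      rw [hn, h2]
      norm_num
    have hφj : φ j ≤ 2 ^ ((j:ℝ)*d/p) := by
      have := (hG.2 0 j (Nat.zero_le j)).2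
      rw [hφ0, one_mul] at this
      convert this using 2
      push_cast; ring
    refine le_trans hT (le_trans ?_ (le_max_left _ _))
    calc φ j * 2 ^ (((n:ℝ) - (j:ℝ)*d)/p)
        ≤ 2 ^ ((j:ℝ)*d/p) * 2 ^ (((n:ℝ) - (j:ℝ)*d)/p) :=
          mul_le_mul_of_nonneg_right hφj (Real.rpow_nonneg two_pos.le _)
      _ = 1 := by
          rw [← Real.rpow_add two_pos]
          rw [show (j:ℝ)*d/p + ((n:ℝ) - (j:ℝ)*d)/p = 0 by rw [hn0]; ring]
          exact Real.rpow_zero 2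
  · rcases le_total j J with hjJ | hjJ
    · -- L < j ≤ J
      have hnj : (n:ℝ) = ((j:ℝ) - L)*d := by
        rw [hn, min_eq_left hjJ]
        push_cast [Nat.cast_sub hjL.le]
        ring
      refine le_trans hT (le_trans ?_ (le_max_right _ _))
      rw [show ((n:ℝ) - (j:ℝ)*d)/p = -((L:ℝ)*d)/p by rw [hnj]; ring]
      exact mul_le_mul_of_nonneg_right (hG.2 j J hjJ).1 (Real.rpow_nonneg two_pos.le _)
    · -- J ≤ j
      have hnJ : (n:ℝ) = ((J:ℝ) - L)*d := by
        rw [hn, min_eq_right hjJ]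
        push_cast [Nat.cast_sub hLJ]
        ring
      have hφj : φ j ≤ φ J * 2 ^ (((j:ℝ) - J)*d/p) := (hG.2 J j hjJ).2
      refine le_trans hT (le_trans ?_ (le_max_right _ _))
      calc φ j * 2 ^ (((n:ℝ) - (j:ℝ)*d)/p)
          ≤ (φ J * 2 ^ (((j:ℝ) - J)*d/p)) * 2 ^ (((n:ℝ) - (j:ℝ)*d)/p) :=
            mul_le_mul_of_nonneg_right hφj (Real.rpow_nonneg two_pos.le _)
        _ = φ J * 2 ^ (-((L:ℝ)*d)/p) := by
            rw [mul_assoc, ← Real.rpow_add two_pos]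
            rw [show ((j:ℝ) - J)*d/p + ((n:ℝ) - (j:ℝ)*d)/p = -((L:ℝ)*d)/p by rw [hnJ]; ring]

lemma Tterm_J0 (d : ℕ) (p : ℝ) (hp : 0 < p) (φ : ℕ → ℝ) (J L : ℕ) (hLJ : L ≤ J) :
    Tterm d p φ J L J (fun _ => 0) = φ J * 2 ^ (-((L:ℝ)*d)/p) := by
  have two_pos : (0:ℝ) < 2 := by norm_num
  unfold Tterm
  have hc : (Fintype.piFinset fun _i : Fin d => coordSet J J L (0:ℤ)).card = 2 ^ ((J-L)*d) := by
    rw [Fintype.card_piFinset]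
    simp [coordSet_card_JJ J L hLJ, Finset.card_univ, ← pow_mul]
  rw [hc]
  have : (((2:ℕ) ^ ((J-L)*d) : ℕ) : ℝ) ^ (1/p) = (2:ℝ) ^ ((((J:ℝ)-L)*d)/p) := by
    push_cast
    rw [← Real.rpow_natCast 2 ((J-L)*d), ← Real.rpow_mul two_pos.le]
    congr 1
    push_cast [Nat.cast_sub hLJ]
    ring
  rw [this, mul_assoc, ← Real.rpow_add two_pos]
  congr 2
  ring

lemma Tterm_00 (d : ℕ) (p : ℝ) (φ : ℕ → ℝ) (hφ0 : φ 0 = 1) (J L : ℕ) :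
    Tterm d p φ J L 0 (fun _ => 0) = 1 := by
  unfold Tterm
  have hc : (Fintype.piFinset fun _i : Fin d => coordSet 0 J L (0:ℤ)).card = 1 := by
    rw [Fintype.card_piFinset]
    simp [coordSet_zero]
  rw [hc, hφ0]
  norm_num

lemma mNorm_lat (d : ℕ) (p : ℝ) (hp : 0 < p) (φ : ℕ → ℝ) (hG : Gp d p φ) (hφ0 : φ 0 = 1)
    (J L : ℕ) (hLJ : L ≤ J) :
    mNorm d p φ (lat d J L) = ENNReal.ofReal (max 1 (φ J * 2 ^ (-((L:ℝ)*d)/p))) := by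
  rw [mNorm_lat_eq_iSup d p hp φ hG.1 J L]
  apply le_antisymm
  · apply iSup₂_le
    intro j m
    exact ENNReal.ofReal_le_ofReal (Tterm_le d p hp φ hG hφ0 J L hLJ j m)
  · have hmax : ENNReal.ofReal (max 1 (φ J * 2 ^ (-((L:ℝ)*d)/p)))
        = max (ENNReal.ofReal 1) (ENNReal.ofReal (φ J * 2 ^ (-((L:ℝ)*d)/p))) := by
      rcases max_cases (1:ℝ) (φ J * 2 ^ (-((L:ℝ)*d)/p)) with ⟨h1, h2⟩ | ⟨h1, h2⟩ <;>
        rw [h1] <;> symm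
      · exact max_eq_left (ENNReal.ofReal_le_ofReal h2)
      · exact max_eq_right (ENNReal.ofReal_le_ofReal h2.le)
    rw [hmax]
    apply max_le
    · calc ENNReal.ofReal 1 = ENNReal.ofReal (Tterm d p φ J L 0 (fun _ => 0)) := by
            rw [Tterm_00 d p φ hφ0 J L]
        _ ≤ _ := le_iSup₂ (f := fun j m => ENNReal.ofReal (Tterm d p φ J L j m)) 0 (fun _ => 0)
    · calc ENNReal.ofReal (φ J * 2 ^ (-((L:ℝ)*d)/p))
          = ENNReal.ofReal (Tterm d p φ J L J (fun _ => 0)) := by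
            rw [Tterm_J0 d p hp φ J L hLJ]
        _ ≤ _ := le_iSup₂ (f := fun j m => ENNReal.ofReal (Tterm d p φ J L j m)) J (fun _ => 0)

lemma mNorm_mono (d : ℕ) (p : ℝ) (φ' φ'' : ℕ → ℝ) (C : ℝ) (hC : 0 ≤ C)
    (h : ∀ j, φ' j ≤ C * φ'' j) (lam : (Fin d → ℤ) → ℂ) :
    mNorm d p φ' lam ≤ ENNReal.ofReal C * mNorm d p φ'' lam := by
  unfold mNorm
  apply iSup₂_le
  intro j m
  calc ENNReal.ofReal (φ' j) * (2 : ℝ≥0∞) ^ (-((j : ℝ) * d) / p) * localSum d p j m lam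
      ≤ (ENNReal.ofReal C * ENNReal.ofReal (φ'' j)) * (2 : ℝ≥0∞) ^ (-((j : ℝ) * d) / p)
          * localSum d p j m lam := by
        gcongr
        rw [← ENNReal.ofReal_mul hC]
        exact ENNReal.ofReal_le_ofReal (h j)
    _ = ENNReal.ofReal C * (ENNReal.ofReal (φ'' j) * (2 : ℝ≥0∞) ^ (-((j : ℝ) * d) / p)
          * localSum d p j m lam) := by ring
    _ ≤ ENNReal.ofReal C * ⨆ (j : ℕ) (m : Fin d → ℤ),
          ENNReal.ofReal (φ'' j) * (2 : ℝ≥0∞) ^ (-((j : ℝ) * d) / p) * localSum d p j m lam := by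
        gcongr
        exact le_iSup₂ (f := fun j m => ENNReal.ofReal (φ'' j) *
          (2 : ℝ≥0∞) ^ (-((j : ℝ) * d) / p) * localSum d p j m lam) j m

lemma key (d : ℕ) (hd : 0 < d) (p q : ℝ) (hp : 0 < p) (hq : 0 < q) (hqp : q < p)
    (φ ψ : ℕ → ℝ) (hGφ : Gp d p φ) (hGψ : Gp d q ψ) (hφ0 : φ 0 = 1) (hψ0 : ψ 0 = 1)
    (hunb : ∀ C : ℝ, ∃ k, C < ψ k)
    (γ : ℝ) (hγ : 0 < γ) (hγle : ∀ J, γ * ψ J ≤ φ J)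
    (κ : ℝ≥0∞) (hκ : κ ≠ ⊤)
    (h : ∀ J L : ℕ, L ≤ J → mNorm d p φ (lat d J L) ≤ κ * mNorm d q ψ (lat d J L)) : False := by
  have two_pos : (0:ℝ) < 2 := by norm_num
  set θ : ℝ := 1 - q/p with hθ
  have hθpos : 0 < θ := by
    rw [hθ]
    have : q/p < 1 := (div_lt_one hp).mpr hqp
    linarith
  set b : ℝ := κ.toReal * 2 ^ ((d:ℝ)/q) with hb
  have hbnn : 0 ≤ b := mul_nonneg ENNReal.toReal_nonneg (Real.rpow_nonneg two_pos.le _)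
  -- choose J with ψ J large
  obtain ⟨J, hJ⟩ := hunb (max 1 ((b/γ + 1) ^ θ⁻¹))
  have hψJ1 : 1 < ψ J := lt_of_le_of_lt (le_max_left _ _) hJ
  have hψJpos : 0 < ψ J := lt_trans one_pos hψJ1
  -- choose L
  set x : ℝ := q * Real.logb 2 (ψ J) / d with hx
  have hlogb : 0 ≤ Real.logb 2 (ψ J) := Real.logb_nonneg one_lt_two hψJ1.le
  have hxnn : 0 ≤ x := by
    rw [hx]; positivity
  set L : ℕ := ⌊x⌋₊ with hL
  have hLx : (L:ℝ) ≤ x := Nat.floor_le hxnn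
  have hxL : x < L + 1 := Nat.lt_floor_add_one x
  -- L ≤ J
  have hψJle : ψ J ≤ 2 ^ ((J:ℝ)*d/q) := by
    have := (hGψ.2 0 J (Nat.zero_le J)).2
    rw [hψ0, one_mul] at this
    convert this using 2
    push_cast; ring
  have hd' : (0:ℝ) < d := by exact_mod_cast hd
  have hxJ : x ≤ J := by
    rw [hx]
    rw [div_le_iff₀ hd']
    have h1 : Real.logb 2 (ψ J) ≤ (J:ℝ)*d/q := by
      calc Real.logb 2 (ψ J) ≤ Real.logb 2 (2 ^ ((J:ℝ)*d/q)) :=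
            Real.logb_le_logb_of_le (by norm_num) hψJpos hψJle
        _ = (J:ℝ)*d/q := Real.logb_rpow (by norm_num) (by norm_num)
    calc q * Real.logb 2 (ψ J) ≤ q * ((J:ℝ)*d/q) :=
          mul_le_mul_of_nonneg_left h1 hq.le
      _ = (J:ℝ) * d := by field_simp
  have hLJ : L ≤ J := by
    have : (L:ℝ) ≤ (J:ℝ) := le_trans hLx hxJ
    exact_mod_cast this
  -- the two power bounds
  have hpow1 : (2:ℝ) ^ ((L:ℝ)*d/q) ≤ ψ J := by
    have h1 : (L:ℝ)*d/q ≤ Real.logb 2 (ψ J) := by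
      rw [hx, le_div_iff₀ hd'] at hLx
      rw [div_le_iff₀ hq]
      linarith
    calc (2:ℝ) ^ ((L:ℝ)*d/q) ≤ 2 ^ (Real.logb 2 (ψ J)) :=
          (Real.rpow_le_rpow_left_iff (by norm_num)).mpr h1
      _ = ψ J := Real.rpow_logb two_pos (by norm_num) hψJpos
  have hpow2 : ψ J ≤ 2 ^ (((L:ℝ)+1)*d/q) := by
    have h1 : Real.logb 2 (ψ J) ≤ ((L:ℝ)+1)*d/q := by
      rw [hx, div_lt_iff₀ hd'] at hxL
      rw [le_div_iff₀ hq]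
      linarith
    calc ψ J = 2 ^ (Real.logb 2 (ψ J)) := (Real.rpow_logb two_pos (by norm_num) hψJpos).symm
      _ ≤ 2 ^ (((L:ℝ)+1)*d/q) := (Real.rpow_le_rpow_left_iff (by norm_num)).mpr h1
  -- apply the hypothesis
  have hmain := h J L hLJ
  rw [mNorm_lat d p hp φ hGφ hφ0 J L hLJ, mNorm_lat d q hq ψ hGψ hψ0 J L hLJ] at hmain
  -- RHS bound
  have hR : κ * ENNReal.ofReal (max 1 (ψ J * 2 ^ (-((L:ℝ)*d)/q))) ≤ ENNReal.ofReal b := by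
    have hmle : max 1 (ψ J * 2 ^ (-((L:ℝ)*d)/q)) ≤ (2:ℝ) ^ ((d:ℝ)/q) := by
      apply max_le
      · exact Real.one_le_rpow one_le_two (by positivity)
      · calc ψ J * 2 ^ (-((L:ℝ)*d)/q) ≤ 2 ^ (((L:ℝ)+1)*d/q) * 2 ^ (-((L:ℝ)*d)/q) :=
              mul_le_mul_of_nonneg_right hpow2 (Real.rpow_nonneg two_pos.le _)
          _ = 2 ^ ((d:ℝ)/q) := by
              rw [← Real.rpow_add two_pos]
              congr 1; ring
    calc κ * ENNReal.ofReal (max 1 (ψ J * 2 ^ (-((L:ℝ)*d)/q)))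
        ≤ κ * ENNReal.ofReal ((2:ℝ) ^ ((d:ℝ)/q)) :=
          mul_le_mul_right (ENNReal.ofReal_le_ofReal hmle) κ
      _ = ENNReal.ofReal κ.toReal * ENNReal.ofReal ((2:ℝ) ^ ((d:ℝ)/q)) := by
          rw [ENNReal.ofReal_toReal hκ]
      _ = ENNReal.ofReal b := by
          rw [← ENNReal.ofReal_mul ENNReal.toReal_nonneg]
  -- LHS lower bound
  have hφJpos := hGφ.1 J
  have hL' : ENNReal.ofReal (φ J * 2 ^ (-((L:ℝ)*d)/p))
      ≤ ENNReal.ofReal (max 1 (φ J * 2 ^ (-((L:ℝ)*d)/p))) :=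
    ENNReal.ofReal_le_ofReal (le_max_right _ _)
  have hfinal : φ J * 2 ^ (-((L:ℝ)*d)/p) ≤ b := by
    have := le_trans hL' (le_trans hmain hR)
    exact (ENNReal.ofReal_le_ofReal_iff hbnn).mp this
  -- now derive contradiction
  have hstep1 : γ * (ψ J) ^ θ ≤ b := by
    have h2 : (2:ℝ) ^ ((L:ℝ)*d/p) ≤ (ψ J) ^ (q/p) := by
      calc (2:ℝ) ^ ((L:ℝ)*d/p) = ((2:ℝ) ^ ((L:ℝ)*d/q)) ^ (q/p) := by
            rw [← Real.rpow_mul two_pos.le]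
            congr 1; field_simp
        _ ≤ (ψ J) ^ (q/p) := Real.rpow_le_rpow (Real.rpow_nonneg two_pos.le _) hpow1 (by positivity)
    have h3 : γ * (ψ J) ^ θ ≤ φ J * 2 ^ (-((L:ℝ)*d)/p) := by
      have h4 : (ψ J) ^ θ = ψ J * (ψ J) ^ (-(q/p)) := by
        rw [hθ]
        rw [show (1:ℝ) - q/p = 1 + (-(q/p)) by ring, Real.rpow_add hψJpos, Real.rpow_one]
      rw [h4]
      have h5 : (ψ J) ^ (-(q/p)) ≤ 2 ^ (-((L:ℝ)*d)/p) := by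
        rw [Real.rpow_neg hψJpos.le, show -((L:ℝ)*d)/p = -((L:ℝ)*d/p) by ring,
          Real.rpow_neg two_pos.le]
        exact inv_anti₀ (by positivity) h2
      calc γ * (ψ J * (ψ J) ^ (-(q/p))) = (γ * ψ J) * (ψ J) ^ (-(q/p)) := by ring
        _ ≤ φ J * (ψ J) ^ (-(q/p)) :=
            mul_le_mul_of_nonneg_right (hγle J) (Real.rpow_nonneg hψJpos.le _)
        _ ≤ φ J * 2 ^ (-((L:ℝ)*d)/p) := mul_le_mul_of_nonneg_left h5 hφJpos.le
    exact le_trans h3 hfinal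
  -- but ψ J is too large
  have hlarge : b/γ + 1 < (ψ J) ^ θ := by
    have h1 : (b/γ + 1) ^ θ⁻¹ < ψ J := lt_of_le_of_lt (le_max_right _ _) hJ
    have h2 : ((b/γ + 1) ^ θ⁻¹) ^ θ < (ψ J) ^ θ :=
      Real.rpow_lt_rpow (Real.rpow_nonneg (by positivity) _) h1 hθpos
    rwa [Real.rpow_inv_rpow (by positivity) (ne_of_gt hθpos)] at h2
  have : γ * (b/γ + 1) < γ * (ψ J) ^ θ := mul_lt_mul_of_pos_left hlarge hγ
  rw [mul_add, mul_div_cancel₀ _ (ne_of_gt hγ), mul_one] at this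
  linarith

lemma max_one_simp (d : ℕ) (p : ℝ) (φ : ℕ → ℝ) (hG : Gp d p φ) (hφ0 : φ 0 = 1) (J : ℕ) :
    max 1 (φ J * 2 ^ (-(((0:ℕ):ℝ)*d)/p)) = φ J := by
  have h1 : (-(((0:ℕ):ℝ)*d)/p) = 0 := by norm_num
  rw [h1, Real.rpow_zero, mul_one]
  apply max_eq_right
  have := (hG.2 0 J (Nat.zero_le J)).1
  rw [hφ0] at this
  exact this

theorem stmt_14 (d : ℕ) (hd : 0 < d) (p₁ p₂ : ℝ) (hp₁ : 0 < p₁) (hp₂ : 0 < p₂)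
    (φ₁ φ₂ : ℕ → ℝ) (hGp₁ : Gp d p₁ φ₁) (hGp₂ : Gp d p₂ φ₂)
    (hφ₁1 : φ₁ 0 = 1) (hφ₂1 : φ₂ 0 = 1)
    (hunb₁ : ∀ C : ℝ, ∃ k, C < φ₁ k) (hunb₂ : ∀ C : ℝ, ∃ k, C < φ₂ k) :
    (∃ c C : ℝ≥0∞, 0 < c ∧ C < ⊤ ∧ ∀ lam : (Fin d → ℤ) → ℂ,
        c * mNorm d p₂ φ₂ lam ≤ mNorm d p₁ φ₁ lam ∧
        mNorm d p₁ φ₁ lam ≤ C * mNorm d p₂ φ₂ lam) ↔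
    (p₁ = p₂ ∧ ∃ c C : ℝ, 0 < c ∧
        ∀ j : ℕ, c * φ₂ j ≤ φ₁ j ∧ φ₁ j ≤ C * φ₂ j) := by
  constructor
  · rintro ⟨c, C, hc, hC, hmain⟩
    have hCne : C ≠ ⊤ := hC.ne
    have hM : ∀ J : ℕ, c * ENNReal.ofReal (φ₂ J) ≤ ENNReal.ofReal (φ₁ J) ∧
        ENNReal.ofReal (φ₁ J) ≤ C * ENNReal.ofReal (φ₂ J) := by
      intro J
      have h1 := hmain (lat d J 0)
      rw [mNorm_lat d p₁ hp₁ φ₁ hGp₁ hφ₁1 J 0 (Nat.zero_le J),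
          mNorm_lat d p₂ hp₂ φ₂ hGp₂ hφ₂1 J 0 (Nat.zero_le J),
          max_one_simp d p₁ φ₁ hGp₁ hφ₁1 J, max_one_simp d p₂ φ₂ hGp₂ hφ₂1 J] at h1
      exact h1
    have hcle : c ≤ 1 := by
      have := (hM 0).1
      rw [hφ₁1, hφ₂1, ENNReal.ofReal_one, mul_one] at this
      exact this
    have hcne : c ≠ ⊤ := ne_top_of_le_ne_top (by norm_num) hcle
    set c' : ℝ := c.toReal with hc'
    set C' : ℝ := C.toReal with hC'
    have hc'pos : 0 < c' := ENNReal.toReal_pos hc.ne' hcne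
    have hreal : ∀ J : ℕ, c' * φ₂ J ≤ φ₁ J ∧ φ₁ J ≤ C' * φ₂ J := by
      intro J
      have hφ₁pos := hGp₁.1 J
      have hφ₂pos := hGp₂.1 J
      constructor
      · have := (hM J).1
        rw [← ENNReal.ofReal_toReal hcne, ← ENNReal.ofReal_mul ENNReal.toReal_nonneg] at this
        exact (ENNReal.ofReal_le_ofReal_iff hφ₁pos.le).mp this
      · have := (hM J).2
        rw [← ENNReal.ofReal_toReal hCne, ← ENNReal.ofReal_mul ENNReal.toReal_nonneg] at this
        exact (ENNReal.ofReal_le_ofReal_iff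
          (mul_nonneg ENNReal.toReal_nonneg hφ₂pos.le)).mp this
    have hC'1 : 1 ≤ C' := by
      have := (hreal 0).2
      rw [hφ₁1, hφ₂1, mul_one] at this
      exact this
    have hpeq : p₁ = p₂ := by
      rcases lt_trichotomy p₁ p₂ with hlt | heq | hgt
      · exfalso
        apply key d hd p₂ p₁ hp₂ hp₁ hlt φ₂ φ₁ hGp₂ hGp₁ hφ₂1 hφ₁1 hunb₁
          (1/C') (by positivity)
          (fun J => by
            have := (hreal J).2
            rw [div_mul_eq_mul_div, div_le_iff₀ (by linarith : (0:ℝ) < C')]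
            nlinarith [hGp₂.1 J])
          c⁻¹ (ENNReal.inv_ne_top.mpr hc.ne')
        intro J L hLJ
        have h1 := (hmain (lat d J L)).1
        have h2 := mul_le_mul_right h1 c⁻¹
        rwa [← mul_assoc, ENNReal.inv_mul_cancel hc.ne' hcne, one_mul] at h2
      · exact heq
      · exfalso
        apply key d hd p₁ p₂ hp₁ hp₂ hgt φ₁ φ₂ hGp₁ hGp₂ hφ₁1 hφ₂1 hunb₂
          c' hc'pos (fun J => (hreal J).1) C hCne
        intro J L hLJ
        exact (hmain (lat d J L)).2
    exact ⟨hpeq, c', C', hc'pos, hreal⟩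
  · rintro ⟨heq, c', C', hc', hcC⟩
    subst heq
    have hC'1 : 1 ≤ C' := by
      have := (hcC 0).2
      rw [hφ₁1, hφ₂1, mul_one] at this
      exact this
    refine ⟨ENNReal.ofReal c', ENNReal.ofReal C', ENNReal.ofReal_pos.mpr hc',
      ENNReal.ofReal_lt_top, fun lam => ⟨?_, ?_⟩⟩
    · have h2 : mNorm d p₁ φ₂ lam ≤ ENNReal.ofReal (1/c') * mNorm d p₁ φ₁ lam := by
        apply mNorm_mono d p₁ φ₂ φ₁ (1/c') (by positivity)
        intro j
        have := (hcC j).1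
        rw [div_mul_eq_mul_div, le_div_iff₀ hc']
        linarith
      calc ENNReal.ofReal c' * mNorm d p₁ φ₂ lam
          ≤ ENNReal.ofReal c' * (ENNReal.ofReal (1/c') * mNorm d p₁ φ₁ lam) :=
            mul_le_mul_right h2 _
        _ = ENNReal.ofReal (c' * (1/c')) * mNorm d p₁ φ₁ lam := by
            rw [← mul_assoc, ← ENNReal.ofReal_mul hc'.le]
        _ = mNorm d p₁ φ₁ lam := by
            rw [mul_one_div, div_self (ne_of_gt hc'), ENNReal.ofReal_one, one_mul]
    · exact mNorm_mono d p₁ φ₁ φ₂ C' (by linarith) (fun j => (hcC j).2) lam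
end
end

section
/- Let 1≤p<∞ and φ∈𝒢_p(𝔻) with lim_{k→∞} 2^{−kd/p}φ(2^k)=0. For every λ∈ℓ_p(ℤ^d), the supremum defining ‖λ|m_{φ,p}‖ is attained: there exists a dyadic cube Q_λ = Q_{−j₀,m₀} with ‖λ|m_{φ,p}‖ = φ(2^{j₀}) 2^{−j₀ d/p} (Σ_{m: Q_{0,m}⊂Q_λ} |λ_m|^p)^{1/p}. -/
open ENNReal Filter

noncomputable section

lemma inCube_unique {d j : ℕ} {m m' k : Fin d → ℤ}
    (h : inCube d j m k) (h' : inCube d j m' k) : m = m' := by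
  funext i
  obtain ⟨h1, h2⟩ := h i
  obtain ⟨h1', h2'⟩ := h' i
  have hpow : (0:ℤ) < 2 ^ j := by positivity
  have e1 : m i < m' i + 1 := lt_of_mul_lt_mul_left (lt_of_le_of_lt h1 h2') hpow.le
  have e2 : m' i < m i + 1 := lt_of_mul_lt_mul_left (lt_of_le_of_lt h1' h2) hpow.le
  omega

lemma tsum_fiber_le (d j : ℕ) (g : (Fin d → ℤ) → ℝ≥0∞) :
    ∑' m : Fin d → ℤ, ∑' k : {k : Fin d → ℤ // inCube d j m k}, g k.1 ≤ ∑' k, g k := by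
  rw [← ENNReal.tsum_sigma'
    (f := fun q : Σ m : Fin d → ℤ, {k : Fin d → ℤ // inCube d j m k} => g q.2.1)]
  refine ENNReal.tsum_comp_le_tsum_of_injective
    (f := fun q : Σ m : Fin d → ℤ, {k : Fin d → ℤ // inCube d j m k} => q.2.1) ?_ g
  rintro ⟨m, k, hk⟩ ⟨m', k', hk'⟩ h
  simp only at h
  subst h
  obtain rfl := inCube_unique hk hk'
  rfl

theorem stmt_17 (d : ℕ) (hd : 0 < d) (p : ℝ) (hp : 1 ≤ p)
    (φ : ℕ → ℝ) (hGp : Gp d p φ)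
    (hlim : Tendsto (fun k : ℕ => φ k * (2 : ℝ) ^ (-((k : ℝ) * d) / p))
      atTop (nhds 0)) :
    ∀ lam : (Fin d → ℤ) → ℂ, ellpNorm d p lam < ⊤ →
      ∃ (j₀ : ℕ) (m₀ : Fin d → ℤ),
        mNorm d p φ lam = ENNReal.ofReal (φ j₀) *
          (2 : ℝ≥0∞) ^ (-((j₀ : ℝ) * d) / p) * localSum d p j₀ m₀ lam := by
  intro lam hL
  have hp0 : (0:ℝ) < p := lt_of_lt_of_le one_pos hp
  have hip0 : (0:ℝ) < 1 / p := by positivity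
  have hφ := hGp.1
  set a : (Fin d → ℤ) → ℝ≥0∞ := fun k => ENNReal.ofReal ‖lam k‖ ^ p with ha
  have hA : ∑' k, a k ≠ ⊤ := by
    intro h
    rw [ellpNorm] at hL
    rw [h, ENNReal.top_rpow_of_pos hip0] at hL
    exact (lt_irrefl _ hL)
  have hLt : ellpNorm d p lam ≠ ⊤ := hL.ne
  set c : ℕ → ℝ≥0∞ := fun j => ENNReal.ofReal (φ j) * (2:ℝ≥0∞) ^ (-((j:ℝ) * d) / p)
    with hc
  have hceq : ∀ j, c j = ENNReal.ofReal (φ j * 2 ^ (-((j:ℝ) * d) / p)) := by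
    intro j
    show ENNReal.ofReal (φ j) * (2:ℝ≥0∞) ^ (-((j:ℝ) * d) / p) = _
    rw [ENNReal.ofReal_mul (hφ j).le, ← ENNReal.ofReal_rpow_of_pos two_pos,
      ENNReal.ofReal_ofNat]
  have hc0 : ∀ j, c j ≠ 0 := by
    intro j
    rw [hceq]
    simp only [ne_eq, ENNReal.ofReal_eq_zero, not_le]
    exact mul_pos (hφ j) (Real.rpow_pos_of_pos two_pos _)
  have hcT : ∀ j, c j ≠ ⊤ := fun j => (hceq j) ▸ ENNReal.ofReal_ne_top
  set F : ℕ → (Fin d → ℤ) → ℝ≥0∞ := fun j m => c j * localSum d p j m lam with hF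
  have hMdef : mNorm d p φ lam = ⨆ j, ⨆ m, F j m := rfl
  -- localSum ≤ ellpNorm
  have hls : ∀ j m, localSum d p j m lam ≤ ellpNorm d p lam := by
    intro j m
    refine ENNReal.rpow_le_rpow ?_ hip0.le
    exact ENNReal.tsum_comp_le_tsum_of_injective Subtype.val_injective a
  -- c j ≤ ofReal (φ 0)
  have hcb : ∀ j, c j ≤ ENNReal.ofReal (φ 0) := by
    intro j
    rw [hceq]
    apply ENNReal.ofReal_le_ofReal
    have h2 := (hGp.2 0 j (Nat.zero_le j)).2
    have h2' : φ j ≤ φ 0 * 2 ^ ((j:ℝ) * d / p) := by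
      convert h2 using 3
      push_cast; ring
    calc φ j * 2 ^ (-((j:ℝ) * d) / p)
        ≤ (φ 0 * 2 ^ ((j:ℝ) * d / p)) * 2 ^ (-((j:ℝ) * d) / p) := by
          apply mul_le_mul_of_nonneg_right h2' (by positivity)
      _ = φ 0 := by
          rw [mul_assoc, ← Real.rpow_add two_pos, neg_div, add_neg_cancel,
            Real.rpow_zero, mul_one]
  have hMT : mNorm d p φ lam ≠ ⊤ := by
    rw [hMdef]
    refine ne_top_of_le_ne_top (b := ENNReal.ofReal (φ 0) * ellpNorm d p lam)
      (ENNReal.mul_ne_top ENNReal.ofReal_ne_top hLt) ?_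
    refine iSup₂_le fun j m => ?_
    exact mul_le_mul' (hcb j) (hls j m)
  by_cases hM0 : mNorm d p φ lam = 0
  · refine ⟨0, 0, ?_⟩
    have h1 : F 0 0 ≤ mNorm d p φ lam := by
      rw [hMdef]; exact le_iSup₂ (f := F) 0 0
    rw [hM0] at h1 ⊢
    exact (le_antisymm h1 (zero_le)).symm
  · set t : ℝ≥0∞ := mNorm d p φ lam / 2 with htdef
    have ht0 : t ≠ 0 := by
      simp only [htdef, ne_eq, ENNReal.div_eq_zero_iff]
      push_neg
      exact ⟨hM0, ENNReal.ofNat_ne_top⟩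
    have htT : t ≠ ⊤ := by
      simp only [htdef]
      exact (ENNReal.div_lt_top hMT (by norm_num)).ne
    have htM : t < mNorm d p φ lam := ENNReal.half_lt_self hM0 hMT
    -- tendsto
    have htend : Tendsto (fun j => c j * ellpNorm d p lam) atTop (nhds 0) := by
      have h1 : Tendsto (fun j : ℕ => ENNReal.ofReal (φ j * 2 ^ (-((j:ℝ) * d) / p)))
          atTop (nhds 0) := by
        simpa using ENNReal.tendsto_ofReal hlim
      have h2 := ENNReal.Tendsto.mul_const h1 (Or.inr hLt)
      rw [zero_mul] at h2
      convert h2 using 2 with j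
      rw [hceq]
    obtain ⟨J, hJ⟩ := eventually_atTop.mp (htend.eventually_lt_const (pos_iff_ne_zero.mpr ht0))
    set S : Set (ℕ × (Fin d → ℤ)) := {q | q.1 < J ∧ t < F q.1 q.2} with hS
    have hSfin : S.Finite := by
      have hsub : S ⊆ ⋃ j ∈ Finset.range J, ({j} : Set ℕ) ×ˢ
          {m | (t / c j) ^ p ≤ ∑' k : {k : Fin d → ℤ // inCube d j m k}, a k.1} := by
        rintro ⟨j, m⟩ ⟨hj, hgt⟩
        refine Set.mem_biUnion (Finset.mem_range.mpr hj) ?_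
        refine ⟨rfl, ?_⟩
        have hdlt : t / c j < localSum d p j m lam := by
          rw [ENNReal.div_lt_iff (Or.inl (hc0 j)) (Or.inl (hcT j))]
          rw [mul_comm]
          exact hgt
        have h3 : (t / c j) ^ p ≤ (localSum d p j m lam) ^ p :=
          ENNReal.rpow_le_rpow hdlt.le hp0.le
        calc (t / c j) ^ p ≤ (localSum d p j m lam) ^ p := h3
          _ = ∑' k : {k : Fin d → ℤ // inCube d j m k}, a k.1 := by
              rw [localSum, ← ENNReal.rpow_mul, one_div_mul_cancel hp0.ne', ENNReal.rpow_one]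
      refine Set.Finite.subset ?_ hsub
      refine Set.Finite.biUnion (Finset.range J).finite_toSet fun j _ => ?_
      refine (Set.finite_singleton j).prod ?_
      refine ENNReal.finite_const_le_of_tsum_ne_top
        (ne_top_of_le_ne_top hA (tsum_fiber_le d j a)) ?_
      have hdp : t / c j ≠ 0 := by
        simp only [ne_eq, ENNReal.div_eq_zero_iff]
        push_neg
        exact ⟨ht0, hcT j⟩
      have hdT : t / c j ≠ ⊤ := by
        exact (ENNReal.div_lt_top htT (hc0 j)).ne
      exact (ENNReal.rpow_pos (pos_iff_ne_zero.mpr hdp) hdT).ne'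
    have hSne : S.Nonempty := by
      rw [hMdef] at htM
      obtain ⟨j, hj⟩ := lt_iSup_iff.mp htM
      obtain ⟨m, hm⟩ := lt_iSup_iff.mp hj
      refine ⟨(j, m), ?_, hm⟩
      by_contra hjJ
      have hjge : J ≤ j := le_of_not_gt hjJ
      have : F j m ≤ c j * ellpNorm d p lam := mul_le_mul' le_rfl (hls j m)
      exact absurd (lt_of_lt_of_le hm (this.trans (hJ j hjge).le)) (lt_irrefl t)
    obtain ⟨⟨j₀, m₀⟩, hmem, hmax⟩ :=
      Set.Finite.exists_maximalFor (fun q : ℕ × (Fin d → ℤ) => F q.1 q.2) S hSfin hSne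
    refine ⟨j₀, m₀, ?_⟩
    have ht₀ : t < F j₀ m₀ := hmem.2
    have : mNorm d p φ lam = F j₀ m₀ := by
      apply le_antisymm
      · rw [hMdef]
        refine iSup₂_le fun j m => ?_
        by_cases hj : j < J
        · by_cases hgt : t < F j m
          · have hmemS : (j, m) ∈ S := ⟨hj, hgt⟩
            rcases le_total (F j m) (F j₀ m₀) with h | h
            · exact h
            · exact hmax hmemS h
          · exact le_trans (le_of_not_gt hgt) ht₀.le
        · have h1 : F j m ≤ c j * ellpNorm d p lam := mul_le_mul' le_rfl (hls j m)
          exact le_trans h1 (le_trans (hJ j (le_of_not_gt hj)).le ht₀.le)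
      · rw [hMdef]
        exact le_iSup₂ (f := F) j₀ m₀
    exact this
end
end

section
/- Let 1≤p<∞ and φ∈𝒢_p(𝔻) with lim_{k→∞} 2^{−kd/p}φ(2^k)=0. Then the natural embedding ℓ_p(ℤ^d) ↪ m_{φ,p}(ℤ^d) is strictly singular: for every infinite-dimensional closed subspace X ⊂ ℓ_p(ℤ^d), inf{‖x|m_{φ,p}‖ : x∈X, ‖x|ℓ_p‖=1} = 0. -/
open ENNReal Filter

noncomputable section

section helpers

variable {p : ℝ}

private lemma hp_pos (hp : 1 ≤ p) : 0 < p := lt_of_lt_of_le one_pos hp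

/-- Minkowski inequality for `tsum` in `ℝ≥0∞`. -/
lemma lp_tsum_add {ι : Type*} (hp : 1 ≤ p) (f g : ι → ℝ≥0∞) :
    (∑' k, (f k + g k) ^ p) ^ (1/p) ≤ (∑' k, f k ^ p) ^ (1/p) + (∑' k, g k ^ p) ^ (1/p) := by
  have hp0 : p ≠ 0 := (hp_pos hp).ne'
  set A := (∑' k, f k ^ p) ^ (1/p) with hA
  set B := (∑' k, g k ^ p) ^ (1/p) with hB
  have key : (∑' k, (f k + g k) ^ p) ≤ (A + B) ^ p := by
    rw [ENNReal.tsum_eq_iSup_sum]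
    refine iSup_le fun s => ?_
    have h1 : (∑ i ∈ s, (f i + g i) ^ p) ^ (1/p) ≤ A + B := by
      refine le_trans (ENNReal.Lp_add_le s f g hp) (add_le_add ?_ ?_) <;>
        exact ENNReal.rpow_le_rpow (ENNReal.sum_le_tsum s) (by positivity)
    calc (∑ i ∈ s, (f i + g i) ^ p)
        = ((∑ i ∈ s, (f i + g i) ^ p) ^ (1/p)) ^ p := by
          rw [one_div, ENNReal.rpow_inv_rpow hp0]
      _ ≤ (A + B) ^ p := ENNReal.rpow_le_rpow h1 (hp_pos hp).le
  calc (∑' k, (f k + g k) ^ p) ^ (1/p)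
      ≤ ((A + B) ^ p) ^ (1/p) := ENNReal.rpow_le_rpow key (by positivity)
    _ = A + B := by rw [one_div, ENNReal.rpow_rpow_inv hp0]

/-- Minkowski inequality for finitely many summands. -/
lemma lp_tsum_sum {ι γ : Type*} (hp : 1 ≤ p) (f : γ → ι → ℝ≥0∞) (t : Finset γ) :
    (∑' k, (∑ i ∈ t, f i k) ^ p) ^ (1/p) ≤ ∑ i ∈ t, (∑' k, f i k ^ p) ^ (1/p) := by
  classical
  induction t using Finset.induction_on with
  | empty =>
      have h1 := hp_pos hp
      simp only [Finset.sum_empty, ENNReal.zero_rpow_of_pos h1, tsum_zero,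
        ENNReal.zero_rpow_of_pos (show (0:ℝ) < 1/p by positivity), le_refl]
  | insert a s ha ih =>
      simp only [Finset.sum_insert ha]
      exact le_trans (lp_tsum_add hp _ _) (add_le_add_right ih _)

lemma lp_tsum_mono {ι : Type*} (hp : 1 ≤ p) {f g : ι → ℝ≥0∞} (h : ∀ k, f k ≤ g k) :
    (∑' k, f k ^ p) ^ (1/p) ≤ (∑' k, g k ^ p) ^ (1/p) :=
  ENNReal.rpow_le_rpow
    (ENNReal.tsum_le_tsum fun k => ENNReal.rpow_le_rpow (h k) (hp_pos hp).le) (by positivity)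

end helpers
section intcube

/-- characterisation of the level-`J` dyadic interval containing `k`. -/
lemma int_div_char {J : ℕ} {m k : ℤ} (h1 : 2 ^ J * m ≤ k) (h2 : k < 2 ^ J * (m + 1)) :
    k / 2 ^ J = m := by
  have hJ : (0:ℤ) < 2 ^ J := by positivity
  have hqr : 2 ^ J * (k / 2 ^ J) + k % 2 ^ J = k := Int.mul_ediv_add_emod k (2 ^ J)
  have hr0 : 0 ≤ k % 2 ^ J := Int.emod_nonneg k hJ.ne'
  have hrlt : k % 2 ^ J < 2 ^ J := Int.emod_lt_of_pos k hJ
  have h2' : k < 2 ^ J * m + 2 ^ J := by rw [mul_add, mul_one] at h2; exact h2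
  have hle : m ≤ k / 2 ^ J := by
    by_contra hc
    push_neg at hc
    have : k / 2 ^ J + 1 ≤ m := hc
    have := mul_le_mul_of_nonneg_left this hJ.le
    rw [mul_add, mul_one] at this
    omega
  have hge : k / 2 ^ J ≤ m := by
    by_contra hc
    push_neg at hc
    have : m + 1 ≤ k / 2 ^ J := hc
    have := mul_le_mul_of_nonneg_left this hJ.le
    rw [mul_add, mul_one] at this
    omega
  omega

lemma int_div_mem {J : ℕ} (k : ℤ) :
    2 ^ J * (k / 2 ^ J) ≤ k ∧ k < 2 ^ J * (k / 2 ^ J + 1) := by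
  have hJ : (0:ℤ) < 2 ^ J := by positivity
  have hqr : 2 ^ J * (k / 2 ^ J) + k % 2 ^ J = k := Int.mul_ediv_add_emod k (2 ^ J)
  have hr0 : 0 ≤ k % 2 ^ J := Int.emod_nonneg k hJ.ne'
  have hrlt : k % 2 ^ J < 2 ^ J := Int.emod_lt_of_pos k hJ
  constructor
  · omega
  · rw [mul_add, mul_one]; omega

/-- every point lies in its own level-`J` cube. -/
lemma inCube_self_div (d J : ℕ) (k : Fin d → ℤ) :
    inCube d J (fun i => k i / 2 ^ J) k :=
  fun i => int_div_mem (k i)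

lemma inCube_div_eq {d J : ℕ} {m k : Fin d → ℤ} (h : inCube d J m k) :
    ∀ i, k i / 2 ^ J = m i :=
  fun i => int_div_char (h i).1 (h i).2

/-- nesting of dyadic cubes: a cube of level `j ≤ J` is contained in a cube of level `J`. -/
lemma int_div_nest {j J : ℕ} (hjJ : j ≤ J) {m k : ℤ}
    (h1 : 2 ^ j * m ≤ k) (h2 : k < 2 ^ j * (m + 1)) :
    k / 2 ^ J = (2 ^ j * m) / 2 ^ J := by
  have hJ : (0:ℤ) < 2 ^ J := by positivity
  have hj : (0:ℤ) < 2 ^ j := by positivity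
  set a : ℤ := 2 ^ j * m with ha
  set q : ℤ := a / 2 ^ J with hq
  set r : ℤ := a % 2 ^ J with hr
  have hqr : 2 ^ J * q + r = a := Int.mul_ediv_add_emod a (2 ^ J)
  have hr0 : 0 ≤ r := Int.emod_nonneg a hJ.ne'
  have hrlt : r < 2 ^ J := Int.emod_lt_of_pos a hJ
  have hdvdJ : (2 ^ j : ℤ) ∣ 2 ^ J := pow_dvd_pow 2 hjJ
  have hdvd : (2 ^ j : ℤ) ∣ r := by
    have hreq : r = a - 2 ^ J * q := by omega
    rw [hreq, ha]
    exact dvd_sub ⟨m, rfl⟩ (hdvdJ.mul_right q)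
  have hrle : r ≤ 2 ^ J - 2 ^ j := by
    have h3 : (2 ^ j : ℤ) ∣ 2 ^ J - r := hdvdJ.sub hdvd
    have h4 : 0 < 2 ^ J - r := by omega
    have := Int.le_of_dvd h4 h3
    omega
  have h2' : k < a + 2 ^ j := by rw [mul_add, mul_one] at h2; exact h2
  apply int_div_char
  · omega
  · rw [mul_add, mul_one]; omega

lemma inCube_nest {d j J : ℕ} (hjJ : j ≤ J) {m k : Fin d → ℤ} (h : inCube d j m k) :
    inCube d J (fun i => (2 ^ j * m i) / 2 ^ J) k := by
  intro i
  have hdiv : k i / 2 ^ J = (2 ^ j * m i) / 2 ^ J := int_div_nest hjJ (h i).1 (h i).2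
  have := int_div_mem (J := J) (k i)
  rw [hdiv] at this
  exact this

/-- the level-`J` cube containing `k'`, as a finset. -/
def cubeFinset (d J : ℕ) (k' : Fin d → ℤ) : Finset (Fin d → ℤ) :=
  Fintype.piFinset fun i =>
    Finset.Icc (2 ^ J * (k' i / 2 ^ J)) (2 ^ J * (k' i / 2 ^ J + 1) - 1)

lemma mem_cubeFinset {d J : ℕ} {k' k : Fin d → ℤ} :
    k ∈ cubeFinset d J k' ↔ ∀ i, k i / 2 ^ J = k' i / 2 ^ J := by
  rw [cubeFinset, Fintype.mem_piFinset]
  constructor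
  · intro h i
    have := h i
    rw [Finset.mem_Icc] at this
    exact int_div_char this.1 (by omega)
  · intro h i
    rw [Finset.mem_Icc]
    have h1 := int_div_mem (J := J) (k i)
    rw [h i] at h1
    omega

end intcube
section normlemmas

variable {p : ℝ} {d : ℕ}

lemma indicator_rpow (hp : 1 ≤ p) {ι : Type*} (s : Set ι) (f : ι → ℝ≥0∞) (k : ι) :
    s.indicator f k ^ p = s.indicator (fun k => f k ^ p) k := by
  by_cases h : k ∈ s <;>
    simp [h, ENNReal.zero_rpow_of_pos (hp_pos hp)]

lemma localSum_eq (d : ℕ) (p : ℝ) (j : ℕ) (m : Fin d → ℤ) (lam : (Fin d → ℤ) → ℂ) :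
    localSum d p j m lam
      = (∑' k : Fin d → ℤ,
          Set.indicator {k | inCube d j m k} (fun k => ENNReal.ofReal ‖lam k‖ ^ p) k)
        ^ (1/p) := by
  rw [localSum, ← tsum_subtype]
  rfl

lemma localSum_le_ellp (hp : 1 ≤ p) (j : ℕ) (m : Fin d → ℤ) (lam : (Fin d → ℤ) → ℂ) :
    localSum d p j m lam ≤ ellpNorm d p lam := by
  rw [localSum_eq, ellpNorm]
  refine ENNReal.rpow_le_rpow (ENNReal.tsum_le_tsum fun k => ?_) (by positivity)
  exact Set.indicator_le_self _ _ k

lemma localSum_mono_cube (hp : 1 ≤ p) {j J : ℕ} {m m' : Fin d → ℤ}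
    (h : ∀ k, inCube d j m k → inCube d J m' k) (lam : (Fin d → ℤ) → ℂ) :
    localSum d p j m lam ≤ localSum d p J m' lam := by
  rw [localSum_eq, localSum_eq]
  refine ENNReal.rpow_le_rpow (ENNReal.tsum_le_tsum fun k => ?_) (by positivity)
  exact Set.indicator_le_indicator_of_subset (fun k hk => h k hk) (fun _ => zero_le) k

lemma ellp_smul (hp : 1 ≤ p) (c : ℂ) (lam : (Fin d → ℤ) → ℂ) :
    ellpNorm d p (c • lam) = ENNReal.ofReal ‖c‖ * ellpNorm d p lam := by
  have hp0 : p ≠ 0 := (hp_pos hp).ne'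
  unfold ellpNorm
  have h : ∀ k, ENNReal.ofReal ‖(c • lam) k‖ ^ p
      = ENNReal.ofReal ‖c‖ ^ p * ENNReal.ofReal ‖lam k‖ ^ p := by
    intro k
    rw [Pi.smul_apply, smul_eq_mul, norm_mul, ENNReal.ofReal_mul (norm_nonneg c),
      ENNReal.mul_rpow_of_nonneg _ _ (hp_pos hp).le]
  simp only [h]
  rw [ENNReal.tsum_mul_left,
    ENNReal.mul_rpow_of_nonneg _ _ (by positivity : (0:ℝ) ≤ 1/p),
    ← ENNReal.rpow_mul, mul_one_div_cancel hp0, ENNReal.rpow_one]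

lemma localSum_smul (hp : 1 ≤ p) (j : ℕ) (m : Fin d → ℤ) (c : ℂ) (lam : (Fin d → ℤ) → ℂ) :
    localSum d p j m (c • lam) = ENNReal.ofReal ‖c‖ * localSum d p j m lam := by
  have hp0 : p ≠ 0 := (hp_pos hp).ne'
  unfold localSum
  have h : ∀ k : {k : Fin d → ℤ // inCube d j m k}, ENNReal.ofReal ‖(c • lam) k.1‖ ^ p
      = ENNReal.ofReal ‖c‖ ^ p * ENNReal.ofReal ‖lam k.1‖ ^ p := by
    intro k
    rw [Pi.smul_apply, smul_eq_mul, norm_mul, ENNReal.ofReal_mul (norm_nonneg c),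
      ENNReal.mul_rpow_of_nonneg _ _ (hp_pos hp).le]
  simp only [h]
  rw [ENNReal.tsum_mul_left,
    ENNReal.mul_rpow_of_nonneg _ _ (by positivity : (0:ℝ) ≤ 1/p),
    ← ENNReal.rpow_mul, mul_one_div_cancel hp0, ENNReal.rpow_one]

lemma mNorm_smul (hp : 1 ≤ p) (φ : ℕ → ℝ) (c : ℂ) (lam : (Fin d → ℤ) → ℂ) :
    mNorm d p φ (c • lam) ≤ ENNReal.ofReal ‖c‖ * mNorm d p φ lam := by
  unfold mNorm
  refine iSup_le fun j => iSup_le fun m => ?_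
  rw [localSum_smul hp, mul_left_comm]
  refine mul_le_mul_right ?_ _
  exact le_iSup₂ (f := fun (j : ℕ) (m : Fin d → ℤ) =>
    ENNReal.ofReal (φ j) * (2 : ℝ≥0∞) ^ (-((j : ℝ) * d) / p) * localSum d p j m lam) j m

lemma ellp_pos (hp : 1 ≤ p) {lam : (Fin d → ℤ) → ℂ} {k0 : Fin d → ℤ} (h : lam k0 ≠ 0) :
    0 < ellpNorm d p lam := by
  have hp0 : p ≠ 0 := (hp_pos hp).ne'
  have h1 : (0:ℝ≥0∞) < ENNReal.ofReal ‖lam k0‖ := by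
    rw [ENNReal.ofReal_pos]
    exact norm_pos_iff.mpr h
  have h2 : ENNReal.ofReal ‖lam k0‖ ^ p ≤ ∑' k, ENNReal.ofReal ‖lam k‖ ^ p :=
    ENNReal.le_tsum k0
  calc (0:ℝ≥0∞) < (ENNReal.ofReal ‖lam k0‖ ^ p) ^ (1/p) := by
        rw [one_div, ENNReal.rpow_rpow_inv hp0]; exact h1
    _ ≤ ellpNorm d p lam := ENNReal.rpow_le_rpow h2 (by positivity)

end normlemmas
section construction

variable {p : ℝ} {d : ℕ} {X : Submodule ℂ ((Fin d → ℤ) → ℂ)}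

lemma exists_vanishing (hXinf : ¬ Module.Finite ℂ X) (F : Finset (Fin d → ℤ)) :
    ∃ z, z ∈ X ∧ z ≠ 0 ∧ ∀ k ∈ F, z k = 0 := by
  classical
  by_contra h
  push_neg at h
  apply hXinf
  let T : X →ₗ[ℂ] (F → ℂ) :=
    { toFun := fun z => fun k => (z : (Fin d → ℤ) → ℂ) k.1
      map_add' := fun a b => rfl
      map_smul' := fun c a => rfl }
  have hT : Function.Injective T := by
    rw [← LinearMap.ker_eq_bot, Submodule.eq_bot_iff]
    intro z hzker
    by_contra hz0
    have hz0' : (z : (Fin d → ℤ) → ℂ) ≠ 0 := by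
      simpa [Submodule.coe_eq_zero] using hz0
    obtain ⟨k, hkF, hk⟩ := h z z.2 hz0'
    apply hk
    have : T z = 0 := hzker
    exact congrFun this ⟨k, hkF⟩
  exact Module.Finite.of_injective T hT

lemma exists_normalized (hp : 1 ≤ p)
    (hXfin : ∀ lam ∈ X, ellpNorm d p lam < ⊤)
    {z : (Fin d → ℤ) → ℂ} (hz : z ∈ X) (hz0 : z ≠ 0) :
    ∃ x ∈ X, ellpNorm d p x = 1 ∧ ∀ k, z k = 0 → x k = 0 := by
  have hfin := hXfin z hz
  obtain ⟨k0, hk0⟩ : ∃ k, z k ≠ 0 := by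
    by_contra hc
    push_neg at hc
    exact hz0 (funext hc)
  have hpos : 0 < ellpNorm d p z := ellp_pos hp hk0
  set a : ℝ := (ellpNorm d p z).toReal with ha
  have ha0 : 0 < a := ENNReal.toReal_pos hpos.ne' hfin.ne
  set c : ℂ := ((a⁻¹ : ℝ) : ℂ) with hc
  have hnc : ENNReal.ofReal ‖c‖ = (ellpNorm d p z)⁻¹ := by
    rw [hc, Complex.norm_real, Real.norm_eq_abs, abs_of_nonneg (by positivity),
      ENNReal.ofReal_inv_of_pos ha0, ha, ENNReal.ofReal_toReal hfin.ne]
  refine ⟨c • z, X.smul_mem c hz, ?_, ?_⟩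
  · rw [ellp_smul hp, hnc, ENNReal.inv_mul_cancel hpos.ne' hfin.ne]
  · intro k hk
    simp [hk]

lemma step_lemma (hp : 1 ≤ p)
    (hXfin : ∀ lam ∈ X, ellpNorm d p lam < ⊤) (hXinf : ¬ Module.Finite ℂ X)
    (F : Finset (Fin d → ℤ)) {θ : ℝ≥0∞} (hθ : 0 < θ) :
    ∃ x ∈ X, ellpNorm d p x = 1 ∧ (∀ k ∈ F, x k = 0) ∧
      ∃ S : Finset (Fin d → ℤ), (∀ k ∈ S, x k ≠ 0) ∧
        (∑' k : Fin d → ℤ,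
          Set.indicator {k : Fin d → ℤ | k ∉ S} (fun k => ENNReal.ofReal ‖x k‖ ^ p) k) ≤ θ := by
  classical
  have hp0 : p ≠ 0 := (hp_pos hp).ne'
  obtain ⟨z, hzX, hz0, hzF⟩ := exists_vanishing hXinf F
  obtain ⟨x, hxX, hx1, hxz⟩ := exists_normalized hp hXfin hzX hz0
  have hxF : ∀ k ∈ F, x k = 0 := fun k hk => hxz k (hzF k hk)
  have htot : (∑' k : Fin d → ℤ, ENNReal.ofReal ‖x k‖ ^ p) = 1 := by
    have h1 : ((∑' k : Fin d → ℤ, ENNReal.ofReal ‖x k‖ ^ p) ^ (1/p)) ^ p = 1 ^ p := by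
      rw [← ellpNorm, hx1]
    rwa [one_div, ENNReal.rpow_inv_rpow hp0, ENNReal.one_rpow] at h1
  have htend := ENNReal.tendsto_tsum_compl_atTop_zero
    (f := fun k : Fin d → ℤ => ENNReal.ofReal ‖x k‖ ^ p) (by rw [htot]; exact one_ne_top)
  obtain ⟨S₀, hS₀⟩ := ((tendsto_order.1 htend).2 θ hθ).exists
  set S : Finset (Fin d → ℤ) := S₀.filter (fun k => x k ≠ 0) with hS
  refine ⟨x, hxX, hx1, hxF, S, fun k hk => (Finset.mem_filter.mp hk).2, ?_⟩
  have hind : ∀ k, Set.indicator {k : Fin d → ℤ | k ∉ S} (fun k => ENNReal.ofReal ‖x k‖ ^ p) k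
      = Set.indicator {k : Fin d → ℤ | k ∉ S₀} (fun k => ENNReal.ofReal ‖x k‖ ^ p) k := by
    intro k
    by_cases hk0 : x k = 0
    · by_cases hkS : k ∈ S₀ <;> by_cases hkS' : k ∈ S <;>
        simp [Set.indicator, hkS, hkS', hk0, ENNReal.zero_rpow_of_pos (hp_pos hp)]
    · have : k ∈ S ↔ k ∈ S₀ := by simp [hS, Finset.mem_filter, hk0]
      by_cases hkS : k ∈ S₀
      · simp [Set.indicator, hkS, this.mpr hkS]
      · have hkS' : k ∉ S := fun h => hkS (this.mp h)
        simp [Set.indicator, hkS, hkS']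
  calc (∑' k : Fin d → ℤ,
          Set.indicator {k : Fin d → ℤ | k ∉ S} (fun k => ENNReal.ofReal ‖x k‖ ^ p) k)
      = ∑' k : Fin d → ℤ,
          Set.indicator {k : Fin d → ℤ | k ∉ S₀} (fun k => ENNReal.ofReal ‖x k‖ ^ p) k :=
        tsum_congr hind
    _ = ∑' k : {k : Fin d → ℤ // k ∉ S₀}, ENNReal.ofReal ‖x k.1‖ ^ p := by
        rw [← tsum_subtype]; rfl
    _ ≤ θ := hS₀.le

lemma blocks (hp : 1 ≤ p)
    (hXfin : ∀ lam ∈ X, ellpNorm d p lam < ⊤) (hXinf : ¬ Module.Finite ℂ X)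
    (J : ℕ) {θ : ℝ≥0∞} (hθ : 0 < θ) (N : ℕ) :
    ∃ (x : ℕ → (Fin d → ℤ) → ℂ) (S : ℕ → Finset (Fin d → ℤ)),
      ∀ i < N, x i ∈ X ∧ ellpNorm d p (x i) = 1 ∧
        (∀ k ∈ S i, x i k ≠ 0) ∧
        (∑' k : Fin d → ℤ,
          Set.indicator {k : Fin d → ℤ | k ∉ S i}
            (fun k => ENNReal.ofReal ‖x i k‖ ^ p) k) ≤ θ ∧
        (∀ i' < i, ∀ k : Fin d → ℤ,
          (∃ k' ∈ S i', ∀ t, k t / 2 ^ J = k' t / 2 ^ J) → x i k = 0) := by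
  classical
  induction N with
  | zero => exact ⟨fun _ => 0, fun _ => ∅, fun i hi => absurd hi (Nat.not_lt_zero i)⟩
  | succ N ih =>
    obtain ⟨x, S, hxS⟩ := ih
    set F : Finset (Fin d → ℤ) :=
      (Finset.range N).biUnion (fun i => (S i).biUnion (cubeFinset d J)) with hF
    obtain ⟨xN, hXN, h1, hFvan, SN, hSN, htail⟩ := step_lemma hp hXfin hXinf F hθ
    refine ⟨fun i => if i = N then xN else x i, fun i => if i = N then SN else S i, ?_⟩
    intro i hi
    by_cases hiN : i = N
    · have ex : (if i = N then xN else x i) = xN := if_pos hiN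
      have eS : (if i = N then SN else S i) = SN := if_pos hiN
      simp only [ex, eS]
      refine ⟨hXN, h1, hSN, htail, ?_⟩
      rintro i' hi' k ⟨k', hk'S, hdiv⟩
      rw [if_neg (by omega : i' ≠ N)] at hk'S
      apply hFvan
      exact Finset.mem_biUnion.2 ⟨i', Finset.mem_range.2 (by omega),
        Finset.mem_biUnion.2 ⟨k', hk'S, mem_cubeFinset.2 hdiv⟩⟩
    · have hiN' : i < N := lt_of_le_of_ne (Nat.lt_succ_iff.mp hi) hiN
      have ex : (if i = N then xN else x i) = x i := if_neg hiN
      have eS : (if i = N then SN else S i) = S i := if_neg hiN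
      simp only [ex, eS]
      obtain ⟨c1, c2, c3, c4, c5⟩ := hxS i hiN'
      refine ⟨c1, c2, c3, c4, ?_⟩
      rintro i' hi' k ⟨k', hk'S, hdiv⟩
      rw [if_neg (by omega : i' ≠ N)] at hk'S
      exact c5 i' hi' k ⟨k', hk'S, hdiv⟩

end construction
section mainy

variable {p : ℝ} {d : ℕ} {X : Submodule ℂ ((Fin d → ℤ) → ℂ)}

lemma main_y (hp : 1 ≤ p)
    (hXfin : ∀ lam ∈ X, ellpNorm d p lam < ⊤) (hXinf : ¬ Module.Finite ℂ X)
    (J N : ℕ) :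
    ∃ y ∈ X, (∀ m : Fin d → ℤ, localSum d p J m y ≤ 2) ∧
      ((N : ℝ≥0∞) / 2) ^ (1/p) ≤ ellpNorm d p y + 1 ∧
      ellpNorm d p y ≤ N := by
  classical
  have hp0 : p ≠ 0 := (hp_pos hp).ne'
  have hp1 : (0:ℝ) ≤ 1/p := by positivity
  -- the cutoff parameter
  set c : ℝ≥0∞ := ((N + 1 : ℕ) : ℝ≥0∞) with hc
  have hcne0 : c ≠ 0 := by simp [hc]
  have hcnetop : c ≠ ⊤ := by simp [hc]
  set η : ℝ≥0∞ := (2 * c)⁻¹ with hη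
  have h2cne0 : 2 * c ≠ 0 := by simp [hcne0]
  have h2cnetop : 2 * c ≠ ⊤ := ENNReal.mul_ne_top (by norm_num) hcnetop
  have hη0 : 0 < η := ENNReal.inv_pos.mpr h2cnetop
  have hηtop : η ≠ ⊤ := ENNReal.inv_ne_top.mpr h2cne0
  have hη1 : η ≤ 1 := by
    rw [hη]
    refine ENNReal.inv_le_one.mpr ?_
    calc (1:ℝ≥0∞) = 1 * 1 := (one_mul 1).symm
      _ ≤ 2 * c := by
          refine mul_le_mul' (by norm_num) ?_
          rw [hc]; exact_mod_cast Nat.one_le_iff_ne_zero.mpr (by omega)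
  have hηhalf : η ≤ 1/2 := by
    rw [hη, one_div]
    refine ENNReal.inv_le_inv' ?_
    calc (2:ℝ≥0∞) = 2 * 1 := (mul_one 2).symm
      _ ≤ 2 * c := by
          refine mul_le_mul' le_rfl ?_
          rw [hc]; exact_mod_cast Nat.one_le_iff_ne_zero.mpr (by omega)
  have hNη : (N : ℝ≥0∞) * η ≤ 1/2 := by
    rw [hη, one_div]
    calc (N : ℝ≥0∞) * (2 * c)⁻¹ ≤ c * (2 * c)⁻¹ := by
          refine mul_le_mul_left ?_ _
          rw [hc]; exact_mod_cast Nat.le_succ N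
      _ = c * (c⁻¹ * 2⁻¹) := by
          rw [ENNReal.mul_inv (Or.inl (by norm_num)) (Or.inl (by norm_num)), mul_comm (2⁻¹) _]
      _ = (c * c⁻¹) * 2⁻¹ := by rw [mul_assoc]
      _ = 2⁻¹ := by rw [ENNReal.mul_inv_cancel hcne0 hcnetop, one_mul]
  have hNη1 : (N : ℝ≥0∞) * η ≤ 1 := le_trans hNη (by
    rw [one_div]; exact ENNReal.inv_le_one.mpr (by norm_num))
  have hθ0 : 0 < η ^ p := ENNReal.rpow_pos hη0 hηtop
  have hθhalf : η ^ p ≤ 1/2 := by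
    calc η ^ p ≤ η ^ (1:ℝ) := ENNReal.rpow_le_rpow_of_exponent_ge hη1 hp
      _ = η := ENNReal.rpow_one η
      _ ≤ 1/2 := hηhalf
  -- the blocks
  obtain ⟨x, S, hxS⟩ := blocks hp hXfin hXinf J hθ0 N
  set f : ℕ → (Fin d → ℤ) → ℝ≥0∞ := fun i k => ENNReal.ofReal ‖x i k‖ with hf
  set y : (Fin d → ℤ) → ℂ := ∑ i ∈ Finset.range N, x i with hy
  have hyX : y ∈ X := Submodule.sum_mem X fun i hi => (hxS i (Finset.mem_range.1 hi)).1
  have hyk : ∀ k, y k = ∑ i ∈ Finset.range N, x i k := by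
    intro k; rw [hy]; exact Finset.sum_apply k (Finset.range N) x
  -- total mass of each block
  have htot : ∀ i < N, (∑' k : Fin d → ℤ, f i k ^ p) = 1 := by
    intro i hi
    have h1 : ((∑' k : Fin d → ℤ, f i k ^ p) ^ (1/p)) ^ p = 1 ^ p := by
      rw [← ellpNorm, (hxS i hi).2.1]
    rwa [one_div, ENNReal.rpow_inv_rpow hp0, ENNReal.one_rpow] at h1
  have hellp1 : ∀ i < N, (∑' k : Fin d → ℤ, f i k ^ p) ^ (1/p) = 1 := by
    intro i hi; rw [htot i hi, ENNReal.one_rpow]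
  -- tails
  have htail : ∀ i < N,
      (∑' k : Fin d → ℤ,
        Set.indicator {k : Fin d → ℤ | k ∉ S i} (fun k => f i k ^ p) k) ≤ η ^ p :=
    fun i hi => (hxS i hi).2.2.2.1
  have htailLp : ∀ i < N, ∀ (T : Set (Fin d → ℤ)), T ⊆ {k : Fin d → ℤ | k ∉ S i} →
      (∑' k : Fin d → ℤ, (Set.indicator T (f i) k) ^ p) ^ (1/p) ≤ η := by
    intro i hi T hT
    have h1 : ∀ k, (Set.indicator T (f i) k) ^ p
        ≤ Set.indicator {k : Fin d → ℤ | k ∉ S i} (fun k => f i k ^ p) k := by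
      intro k
      rw [indicator_rpow hp]
      exact Set.indicator_le_indicator_of_subset hT (fun _ => zero_le) k
    calc (∑' k : Fin d → ℤ, (Set.indicator T (f i) k) ^ p) ^ (1/p)
        ≤ (∑' k : Fin d → ℤ,
            Set.indicator {k : Fin d → ℤ | k ∉ S i} (fun k => f i k ^ p) k) ^ (1/p) :=
          ENNReal.rpow_le_rpow (ENNReal.tsum_le_tsum h1) hp1
      _ ≤ (η ^ p) ^ (1/p) := ENNReal.rpow_le_rpow (htail i hi) hp1
      _ = η := by rw [one_div, ENNReal.rpow_rpow_inv hp0]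
  -- vanishing of later blocks on earlier cubes
  have hvan : ∀ i < N, ∀ i' < i, ∀ k : Fin d → ℤ,
      (∃ k' ∈ S i', ∀ t, k t / 2 ^ J = k' t / 2 ^ J) → x i k = 0 :=
    fun i hi i' hi' k hk => (hxS i hi).2.2.2.2 i' hi' k hk
  -- disjointness of the S i
  have hdisj : ∀ i < N, ∀ i' < N, i ≠ i' → ∀ k ∈ S i, k ∉ S i' := by
    intro i hi i' hi' hne k hkS hkS'
    rcases lt_or_gt_of_ne hne with h | h
    · exact (hxS i' hi').2.2.1 k hkS'
        (hvan i' hi' i h k ⟨k, hkS, fun t => rfl⟩)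
    · exact (hxS i hi).2.2.1 k hkS
        (hvan i hi i' h k ⟨k, hkS', fun t => rfl⟩)
  -- pointwise bound for the full sum
  have hptfull : ∀ k, ENNReal.ofReal ‖y k‖ ≤ ∑ i ∈ Finset.range N, f i k := by
    intro k
    rw [hyk k]
    calc ENNReal.ofReal ‖∑ i ∈ Finset.range N, x i k‖
        ≤ ENNReal.ofReal (∑ i ∈ Finset.range N, ‖x i k‖) :=
          ENNReal.ofReal_le_ofReal (norm_sum_le _ _)
      _ = ∑ i ∈ Finset.range N, f i k := by
          rw [ENNReal.ofReal_sum_of_nonneg (fun i _ => norm_nonneg _)]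
  -- upper bound for ellp y
  have hupper : ellpNorm d p y ≤ N := by
    calc ellpNorm d p y
        ≤ (∑' k : Fin d → ℤ, (∑ i ∈ Finset.range N, f i k) ^ p) ^ (1/p) :=
          lp_tsum_mono hp hptfull
      _ ≤ ∑ i ∈ Finset.range N, (∑' k : Fin d → ℤ, f i k ^ p) ^ (1/p) :=
          lp_tsum_sum hp _ _
      _ = ∑ i ∈ Finset.range N, 1 :=
          Finset.sum_congr rfl fun i hi => hellp1 i (Finset.mem_range.1 hi)
      _ = N := by simp
  refine ⟨y, hyX, ?_, ?_, hupper⟩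
  -- ====== cube estimate ======
  · intro m
    set C : Set (Fin d → ℤ) := {k | inCube d J m k} with hC
    set i0 : ℕ :=
      if h : ∃ i, i < N ∧ ∃ k' ∈ S i, inCube d J m k' then Nat.find h else N with hi0
    have hlt_i0 : ∀ i < N, i < i0 → ∀ k ∈ S i, ¬ inCube d J m k := by
      intro i hiN hii0 k hkS hcube
      by_cases h : ∃ i, i < N ∧ ∃ k' ∈ S i, inCube d J m k'
      · rw [hi0, dif_pos h] at hii0
        exact Nat.find_min h hii0 ⟨hiN, k, hkS, hcube⟩
      · exact h ⟨i, hiN, k, hkS, hcube⟩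
    have hgt_i0 : ∀ i < N, i0 < i → ∀ k, inCube d J m k → x i k = 0 := by
      intro i hiN hii0 k hkcube
      have h : ∃ i, i < N ∧ ∃ k' ∈ S i, inCube d J m k' := by
        by_contra h
        rw [hi0, dif_neg h] at hii0
        omega
      rw [hi0, dif_pos h] at hii0
      obtain ⟨hi0N, k', hk'S, hk'cube⟩ := Nat.find_spec h
      refine hvan i hiN _ hii0 k ⟨k', hk'S, fun t => ?_⟩
      rw [inCube_div_eq hkcube t, inCube_div_eq hk'cube t]
    set b : ℕ → (Fin d → ℤ) → ℝ≥0∞ := fun i k =>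
      if i = i0 then Set.indicator C (f i) k
      else Set.indicator (C ∩ {k : Fin d → ℤ | k ∉ S i}) (f i) k with hb
    have hpt : ∀ k, Set.indicator C (fun k => ENNReal.ofReal ‖y k‖) k
        ≤ ∑ i ∈ Finset.range N, b i k := by
      intro k
      by_cases hkC : k ∈ C
      · rw [Set.indicator_of_mem hkC]
        refine le_trans (hptfull k) (Finset.sum_le_sum fun i hi => ?_)
        have hiN := Finset.mem_range.1 hi
        simp only [hb]
        by_cases hii0 : i = i0
        · rw [if_pos hii0, Set.indicator_of_mem hkC]
        · rw [if_neg hii0]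
          rcases lt_or_gt_of_ne hii0 with hlt | hgt
          · have hknS : k ∉ S i := fun hkS => hlt_i0 i hiN hlt k hkS hkC
            rw [Set.indicator_of_mem (Set.mem_inter hkC hknS)]
          · have hz : x i k = 0 := hgt_i0 i hiN hgt k hkC
            simp [hf, hz]
      · rw [Set.indicator_of_notMem hkC]
        exact zero_le
    have hbound : ∀ i ∈ Finset.range N,
        (∑' k : Fin d → ℤ, b i k ^ p) ^ (1/p) ≤ if i = i0 then 1 else η := by
      intro i hi
      have hiN := Finset.mem_range.1 hi
      by_cases hii0 : i = i0
      · rw [if_pos hii0]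
        have : ∀ k, b i k ^ p ≤ f i k ^ p := by
          intro k
          simp only [hb, if_pos hii0]
          exact ENNReal.rpow_le_rpow (Set.indicator_le_self _ _ k) (hp_pos hp).le
        calc (∑' k : Fin d → ℤ, b i k ^ p) ^ (1/p)
            ≤ (∑' k : Fin d → ℤ, f i k ^ p) ^ (1/p) :=
              ENNReal.rpow_le_rpow (ENNReal.tsum_le_tsum this) hp1
          _ = 1 := hellp1 i hiN
      · rw [if_neg hii0]
        have hbeq : ∀ k, b i k = Set.indicator (C ∩ {k : Fin d → ℤ | k ∉ S i}) (f i) k := by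
          intro k; simp only [hb, if_neg hii0]
        calc (∑' k : Fin d → ℤ, b i k ^ p) ^ (1/p)
            = (∑' k : Fin d → ℤ,
                (Set.indicator (C ∩ {k : Fin d → ℤ | k ∉ S i}) (f i) k) ^ p) ^ (1/p) := by
              simp only [hbeq]
          _ ≤ η := htailLp i hiN _ (Set.inter_subset_right)
    calc localSum d p J m y
        = (∑' k : Fin d → ℤ,
            (Set.indicator C (fun k => ENNReal.ofReal ‖y k‖) k) ^ p) ^ (1/p) := by
          rw [localSum_eq]
          congr 1
          exact tsum_congr fun k => (indicator_rpow hp _ _ k).symm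
      _ ≤ (∑' k : Fin d → ℤ, (∑ i ∈ Finset.range N, b i k) ^ p) ^ (1/p) :=
          lp_tsum_mono hp hpt
      _ ≤ ∑ i ∈ Finset.range N, (∑' k : Fin d → ℤ, b i k ^ p) ^ (1/p) :=
          lp_tsum_sum hp _ _
      _ ≤ ∑ i ∈ Finset.range N, (if i = i0 then 1 else η) :=
          Finset.sum_le_sum hbound
      _ ≤ ∑ i ∈ Finset.range N, ((if i = i0 then (1:ℝ≥0∞) else 0) + η) := by
          refine Finset.sum_le_sum fun i _ => ?_
          by_cases hii0 : i = i0 <;> simp [hii0]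
      _ = (∑ i ∈ Finset.range N, (if i = i0 then (1:ℝ≥0∞) else 0))
            + (N : ℝ≥0∞) * η := by
          rw [Finset.sum_add_distrib, Finset.sum_const, Finset.card_range, nsmul_eq_mul]
      _ ≤ 1 + (N : ℝ≥0∞) * η := by
          refine add_le_add_left ?_ _
          rw [Finset.sum_ite_eq' (Finset.range N) i0 (fun _ => (1:ℝ≥0∞))]
          by_cases h : i0 ∈ Finset.range N <;> simp [h]
      _ ≤ 1 + 1 := add_le_add_right hNη1 _
      _ = 2 := one_add_one_eq_two
  -- ====== lower bound ======
  · set U : Finset (Fin d → ℤ) := (Finset.range N).biUnion S with hU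
    set v : (Fin d → ℤ) → ℝ≥0∞ :=
      fun k => ∑ i ∈ Finset.range N, Set.indicator (↑(S i)) (f i) k with hv
    set w : (Fin d → ℤ) → ℝ≥0∞ :=
      fun k => Set.indicator (↑U) (fun k => ENNReal.ofReal ‖y k‖) k with hw
    set g : ℕ → (Fin d → ℤ) → ℝ≥0∞ :=
      fun i k => Set.indicator (↑U ∩ {k : Fin d → ℤ | k ∉ S i}) (f i) k with hg
    -- mass of v
    have hvmass : ((N : ℝ≥0∞) / 2) ≤ ∑' k : Fin d → ℤ, v k ^ p := by
      have hpd : Set.PairwiseDisjoint ↑(Finset.range N) S := by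
        intro i hi i' hi' hne
        have hiN : i < N := Finset.mem_range.1 (Finset.mem_coe.1 hi)
        have hi'N : i' < N := Finset.mem_range.1 (Finset.mem_coe.1 hi')
        exact Finset.disjoint_left.2 fun k hk => hdisj i hiN i' hi'N hne k hk
      have hsplit : ∀ i < N, (1:ℝ≥0∞) ≤ (∑ k ∈ S i, f i k ^ p) + 1/2 := by
        intro i hi
        have hdecomp : (∑' k : Fin d → ℤ, f i k ^ p)
            = (∑ k ∈ S i, f i k ^ p)
              + ∑' k : Fin d → ℤ,
                  Set.indicator {k : Fin d → ℤ | k ∉ S i} (fun k => f i k ^ p) k := by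
          have hcompl : (↑(S i) : Set (Fin d → ℤ))ᶜ = {k : Fin d → ℤ | k ∉ S i} := by
            ext k; simp
          calc (∑' k : Fin d → ℤ, f i k ^ p)
              = ∑' k : Fin d → ℤ,
                  (Set.indicator (↑(S i)) (fun k => f i k ^ p) k
                    + Set.indicator (↑(S i))ᶜ (fun k => f i k ^ p) k) := by
                refine tsum_congr fun k => ?_
                rw [← Pi.add_apply, Set.indicator_self_add_compl]
            _ = (∑' k : Fin d → ℤ, Set.indicator (↑(S i)) (fun k => f i k ^ p) k)
                  + ∑' k : Fin d → ℤ, Set.indicator (↑(S i))ᶜ (fun k => f i k ^ p) k :=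
                ENNReal.tsum_add
            _ = (∑ k ∈ S i, f i k ^ p)
                  + ∑' k : Fin d → ℤ,
                      Set.indicator {k : Fin d → ℤ | k ∉ S i} (fun k => f i k ^ p) k := by
                rw [hcompl, ← tsum_subtype (↑(S i) : Set (Fin d → ℤ)) (fun k => f i k ^ p)]
                congr 1
                exact Finset.tsum_subtype (S i) (fun k => f i k ^ p)
        calc (1:ℝ≥0∞) = ∑' k : Fin d → ℤ, f i k ^ p := (htot i hi).symm
          _ = (∑ k ∈ S i, f i k ^ p)
                + ∑' k : Fin d → ℤ,
                    Set.indicator {k : Fin d → ℤ | k ∉ S i} (fun k => f i k ^ p) k := hdecomp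
          _ ≤ (∑ k ∈ S i, f i k ^ p) + 1/2 :=
              add_le_add_right (le_trans (htail i hi) hθhalf) _
      have hhalf : ∀ i < N, (1:ℝ≥0∞)/2 ≤ ∑ k ∈ S i, f i k ^ p := by
        intro i hi
        have h1 := hsplit i hi
        have h2 : (1:ℝ≥0∞)/2 + 1/2 ≤ (∑ k ∈ S i, f i k ^ p) + 1/2 := by
          rw [ENNReal.add_halves]; exact h1
        exact (ENNReal.add_le_add_iff_right (by norm_num)).1 h2
      calc ((N : ℝ≥0∞) / 2)
          = ∑ i ∈ Finset.range N, (1:ℝ≥0∞)/2 := by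
            rw [Finset.sum_const, Finset.card_range, nsmul_eq_mul]
            rw [ENNReal.div_eq_inv_mul, ENNReal.div_eq_inv_mul, mul_one, mul_comm]
        _ ≤ ∑ i ∈ Finset.range N, ∑ k ∈ S i, f i k ^ p :=
            Finset.sum_le_sum fun i hi => hhalf i (Finset.mem_range.1 hi)
        _ = ∑ i ∈ Finset.range N, ∑ k ∈ S i, v k ^ p := by
            refine Finset.sum_congr rfl fun i hi => Finset.sum_congr rfl fun k hk => ?_
            have hiN := Finset.mem_range.1 hi
            have hvk : v k = f i k := by
              simp only [hv]
              refine Finset.sum_eq_single_of_mem i hi (fun i' hi' hne => ?_)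
                |>.trans (Set.indicator_of_mem (Finset.mem_coe.2 hk) _)
              have : k ∉ S i' := hdisj i hiN i' (Finset.mem_range.1 hi') (fun h => hne h.symm) k hk
              exact Set.indicator_of_notMem (fun hc => this (Finset.mem_coe.1 hc)) _
            rw [hvk]
        _ = ∑ k ∈ U, v k ^ p := (Finset.sum_biUnion hpd).symm
        _ ≤ ∑' k : Fin d → ℤ, v k ^ p := ENNReal.sum_le_tsum U
    -- pointwise bound for v
    have hptv : ∀ k, v k ≤ w k + ∑ i ∈ Finset.range N, g i k := by
      intro k
      by_cases hkU : k ∈ U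
      · obtain ⟨iu, hiur, hkiu⟩ := Finset.mem_biUnion.1 hkU
        have hiuN := Finset.mem_range.1 hiur
        have hvk : v k = f iu k := by
          simp only [hv]
          refine Finset.sum_eq_single_of_mem iu hiur (fun i' hi' hne => ?_)
            |>.trans (Set.indicator_of_mem (Finset.mem_coe.2 hkiu) _)
          have : k ∉ S i' := hdisj iu hiuN i' (Finset.mem_range.1 hi') (fun h => hne h.symm) k hkiu
          exact Set.indicator_of_notMem (fun hc => this (Finset.mem_coe.1 hc)) _
        have hwk : w k = ENNReal.ofReal ‖y k‖ := Set.indicator_of_mem (Finset.mem_coe.2 hkU) _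
        have hxiu : x iu k = y k - ∑ i ∈ (Finset.range N).erase iu, x i k := by
          have h1 := Finset.add_sum_erase (Finset.range N) (fun i => x i k) hiur
          rw [hyk k]
          rw [← h1]
          ring
        have hnorm : ‖x iu k‖ ≤ ‖y k‖ + ∑ i ∈ (Finset.range N).erase iu, ‖x i k‖ := by
          rw [hxiu]
          exact le_trans (norm_sub_le _ _) (add_le_add_right (norm_sum_le _ _) _)
        have hstep : f iu k ≤ ENNReal.ofReal ‖y k‖
            + ∑ i ∈ (Finset.range N).erase iu, f i k := by
          calc f iu k ≤ ENNReal.ofReal (‖y k‖ + ∑ i ∈ (Finset.range N).erase iu, ‖x i k‖) :=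
                ENNReal.ofReal_le_ofReal hnorm
            _ = ENNReal.ofReal ‖y k‖
                + ENNReal.ofReal (∑ i ∈ (Finset.range N).erase iu, ‖x i k‖) :=
                ENNReal.ofReal_add (norm_nonneg _) (Finset.sum_nonneg fun _ _ => norm_nonneg _)
            _ = ENNReal.ofReal ‖y k‖ + ∑ i ∈ (Finset.range N).erase iu, f i k := by
                rw [ENNReal.ofReal_sum_of_nonneg (fun i _ => norm_nonneg _)]
        have hterm : ∀ i ∈ (Finset.range N).erase iu, f i k ≤ g i k := by
          intro i hi
          have hne : i ≠ iu := Finset.ne_of_mem_erase hi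
          have hiN : i < N := Finset.mem_range.1 (Finset.mem_of_mem_erase hi)
          rcases lt_or_gt_of_ne hne with hlt | hgt
          · have hknS : k ∉ S i := hdisj iu hiuN i hiN (fun h => hne h.symm) k hkiu
            have : g i k = f i k :=
              Set.indicator_of_mem (Set.mem_inter (Finset.mem_coe.2 hkU) hknS) _
            rw [this]
          · have : x i k = 0 := hvan i hiN iu hgt k ⟨k, hkiu, fun t => rfl⟩
            simp [hf, this]
        calc v k = f iu k := hvk
          _ ≤ ENNReal.ofReal ‖y k‖ + ∑ i ∈ (Finset.range N).erase iu, f i k := hstep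
          _ ≤ ENNReal.ofReal ‖y k‖ + ∑ i ∈ (Finset.range N).erase iu, g i k :=
              add_le_add_right (Finset.sum_le_sum hterm) _
          _ ≤ ENNReal.ofReal ‖y k‖ + ∑ i ∈ Finset.range N, g i k :=
              add_le_add_right
                (Finset.sum_le_sum_of_subset (Finset.erase_subset iu (Finset.range N))) _
          _ = w k + ∑ i ∈ Finset.range N, g i k := by rw [hwk]
      · have hvk : v k = 0 := by
          rw [hv]
          refine Finset.sum_eq_zero fun i hi => ?_
          have : k ∉ S i := fun hc => hkU (Finset.mem_biUnion.2 ⟨i, hi, hc⟩)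
          exact Set.indicator_of_notMem (fun hc => this (Finset.mem_coe.1 hc)) _
        rw [hvk]
        exact zero_le
    -- assemble the lower bound
    have hgLp : ∀ i ∈ Finset.range N, (∑' k : Fin d → ℤ, g i k ^ p) ^ (1/p) ≤ η := by
      intro i hi
      exact htailLp i (Finset.mem_range.1 hi) _ Set.inter_subset_right
    have hwLp : (∑' k : Fin d → ℤ, w k ^ p) ^ (1/p) ≤ ellpNorm d p y := by
      rw [ellpNorm]
      exact lp_tsum_mono hp fun k => Set.indicator_le_self _ _ k
    calc ((N : ℝ≥0∞) / 2) ^ (1/p)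
        ≤ (∑' k : Fin d → ℤ, v k ^ p) ^ (1/p) := ENNReal.rpow_le_rpow hvmass hp1
      _ ≤ (∑' k : Fin d → ℤ, (w k + ∑ i ∈ Finset.range N, g i k) ^ p) ^ (1/p) :=
          lp_tsum_mono hp hptv
      _ ≤ (∑' k : Fin d → ℤ, w k ^ p) ^ (1/p)
            + (∑' k : Fin d → ℤ, (∑ i ∈ Finset.range N, g i k) ^ p) ^ (1/p) :=
          lp_tsum_add hp _ _
      _ ≤ (∑' k : Fin d → ℤ, w k ^ p) ^ (1/p)
            + ∑ i ∈ Finset.range N, (∑' k : Fin d → ℤ, g i k ^ p) ^ (1/p) :=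
          add_le_add_right (lp_tsum_sum hp _ _) _
      _ ≤ ellpNorm d p y + ∑ i ∈ Finset.range N, η :=
          add_le_add hwLp (Finset.sum_le_sum hgLp)
      _ = ellpNorm d p y + (N : ℝ≥0∞) * η := by
          rw [Finset.sum_const, Finset.card_range, nsmul_eq_mul]
      _ ≤ ellpNorm d p y + 1 := add_le_add_right hNη1 _

end mainy
theorem stmt_18 (d : ℕ) (hd : 0 < d) (p : ℝ) (hp : 1 ≤ p)
    (φ : ℕ → ℝ) (hGp : Gp d p φ)
    (hlim : Tendsto (fun k : ℕ => φ k * (2 : ℝ) ^ (-((k : ℝ) * d) / p))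
      atTop (nhds 0)) :
    ∀ X : Submodule ℂ ((Fin d → ℤ) → ℂ),
      (∀ lam ∈ X, ellpNorm d p lam < ⊤) →
      (∀ lam : (Fin d → ℤ) → ℂ, ellpNorm d p lam < ⊤ →
        (∀ ε : ℝ≥0∞, 0 < ε → ∃ x ∈ X, ellpNorm d p (lam - x) < ε) → lam ∈ X) →
      ¬ Module.Finite ℂ X →
      ∀ ε : ℝ≥0∞, 0 < ε →
        ∃ x ∈ X, ellpNorm d p x = 1 ∧ mNorm d p φ x < ε := by
  intro X hXfin hXclosed hXinf ε hε
  have hp0 : (0:ℝ) < p := lt_of_lt_of_le one_pos hp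
  have hp0' : p ≠ 0 := hp0.ne'
  have hp1 : (0:ℝ) ≤ 1/p := by positivity
  have hc0 : 0 < φ 0 := hGp.1 0
  -- choose a real threshold δ
  obtain ⟨δ, hδ0, hδε⟩ : ∃ δ : ℝ, 0 < δ ∧ ENNReal.ofReal δ < ε := by
    rcases eq_or_ne ε ⊤ with rfl | hεt
    · exact ⟨1, one_pos, ENNReal.ofReal_lt_top⟩
    · have htR : 0 < ε.toReal := ENNReal.toReal_pos hε.ne' hεt
      refine ⟨ε.toReal / 2, by positivity, ?_⟩
      rw [ENNReal.ofReal_lt_iff_lt_toReal (by positivity) hεt]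
      linarith
  -- choose the level J from the limit assumption
  obtain ⟨J, hJ⟩ : ∃ J : ℕ, ∀ j : ℕ, J ≤ j →
      φ j * (2 : ℝ) ^ (-((j : ℝ) * d) / p) ≤ δ / 2 := by
    have h1 : ∀ᶠ j in atTop, φ j * (2 : ℝ) ^ (-((j : ℝ) * d) / p) < δ / 2 :=
      hlim.eventually_lt_const (by positivity)
    obtain ⟨J, hJ⟩ := eventually_atTop.1 h1
    exact ⟨J, fun j hj => (hJ j hj).le⟩
  -- choose the number of blocks N
  set M : ℝ := 4 * φ 0 / δ + 1 with hM
  have hM1 : (1:ℝ) ≤ M := le_add_of_nonneg_left (by positivity)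
  have hM0 : (0:ℝ) < M := lt_of_lt_of_le one_pos hM1
  obtain ⟨N, hNR⟩ := exists_nat_ge (2 * M ^ p)
  have hNbound : ENNReal.ofReal (4 * φ 0 / δ) + 1 ≤ ((N : ℝ≥0∞) / 2) ^ (1/p) := by
    have h1 : M ^ p ≤ (N:ℝ) / 2 := by
      have : (0:ℝ) < M ^ p := Real.rpow_pos_of_pos hM0 p
      linarith
    have h2 : ENNReal.ofReal (M ^ p) ≤ (N : ℝ≥0∞) / 2 := by
      calc ENNReal.ofReal (M ^ p) ≤ ENNReal.ofReal ((N:ℝ) / 2) := ENNReal.ofReal_le_ofReal h1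
        _ = (N : ℝ≥0∞) / 2 := by
            rw [ENNReal.ofReal_div_of_pos two_pos, ENNReal.ofReal_natCast]
            norm_num
    calc ENNReal.ofReal (4 * φ 0 / δ) + 1 = ENNReal.ofReal M := by
          rw [hM, ENNReal.ofReal_add (by positivity) zero_le_one, ENNReal.ofReal_one]
      _ = ENNReal.ofReal ((M ^ p) ^ (1/p)) := by
          rw [← Real.rpow_mul hM0.le, mul_one_div_cancel hp0', Real.rpow_one]
      _ = ENNReal.ofReal (M ^ p) ^ (1/p) :=
          (ENNReal.ofReal_rpow_of_pos (Real.rpow_pos_of_pos hM0 p)).symm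
      _ ≤ ((N : ℝ≥0∞) / 2) ^ (1/p) := ENNReal.rpow_le_rpow h2 hp1
  -- run the main construction
  obtain ⟨y, hyX, hcube, hlow, hupp⟩ := main_y hp hXfin hXinf J N
  have hylow : ENNReal.ofReal (4 * φ 0 / δ) ≤ ellpNorm d p y := by
    have h1 : ENNReal.ofReal (4 * φ 0 / δ) + 1 ≤ ellpNorm d p y + 1 :=
      le_trans hNbound hlow
    exact (ENNReal.add_le_add_iff_right one_ne_top).1 h1
  have hy0 : ellpNorm d p y ≠ 0 := by
    intro h
    rw [h] at hylow
    have h2 : (0:ℝ≥0∞) < ENNReal.ofReal (4 * φ 0 / δ) :=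
      ENNReal.ofReal_pos.2 (by positivity)
    exact h2.ne' (le_antisymm hylow zero_le)
  have hytop : ellpNorm d p y ≠ ⊤ := ne_top_of_le_ne_top (ENNReal.natCast_ne_top N) hupp
  -- the Morrey norm estimate
  have hmain : mNorm d p φ y ≤ ENNReal.ofReal (δ/2) * ellpNorm d p y := by
    rw [mNorm]
    refine iSup_le fun j => iSup_le fun m => ?_
    have hCval : ENNReal.ofReal (φ j) * (2:ℝ≥0∞) ^ (-((j:ℝ) * d) / p)
        = ENNReal.ofReal (φ j * (2:ℝ) ^ (-((j:ℝ) * d) / p)) := by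
      rw [ENNReal.ofReal_mul (le_of_lt (hGp.1 j))]
      congr 1
      rw [show ((2:ℝ≥0∞)) = ENNReal.ofReal (2:ℝ) by norm_num]
      exact ENNReal.ofReal_rpow_of_pos two_pos
    rcases le_or_gt J j with hJj | hjJ
    · rw [hCval]
      exact mul_le_mul' (ENNReal.ofReal_le_ofReal (hJ j hJj)) (localSum_le_ellp hp j m y)
    · have hC0 : ENNReal.ofReal (φ j * (2:ℝ) ^ (-((j:ℝ) * d) / p))
          ≤ ENNReal.ofReal (φ 0) := by
        refine ENNReal.ofReal_le_ofReal ?_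
        have h2 := (hGp.2 0 j (Nat.zero_le j)).2
        calc φ j * (2:ℝ) ^ (-((j:ℝ) * d) / p)
            ≤ (φ 0 * (2:ℝ) ^ (((j:ℝ) - (0:ℕ)) * d / p)) * (2:ℝ) ^ (-((j:ℝ) * d) / p) :=
              mul_le_mul_of_nonneg_right h2 (by positivity)
          _ = φ 0 * ((2:ℝ) ^ (((j:ℝ) - (0:ℕ)) * d / p) * (2:ℝ) ^ (-((j:ℝ) * d) / p)) := by
              ring
          _ = φ 0 := by
              rw [← Real.rpow_add two_pos,
                show ((j:ℝ) - (0:ℕ)) * d / p + -((j:ℝ) * d) / p = 0 by push_cast; ring,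
                Real.rpow_zero, mul_one]
      have hnest : localSum d p j m y
          ≤ localSum d p J (fun i => (2 ^ j * m i) / 2 ^ J) y :=
        localSum_mono_cube hp (fun k hk => inCube_nest hjJ.le hk) y
      calc ENNReal.ofReal (φ j) * (2:ℝ≥0∞) ^ (-((j:ℝ) * d) / p) * localSum d p j m y
          ≤ ENNReal.ofReal (φ 0) * 2 := by
            rw [hCval]
            exact mul_le_mul' hC0 (le_trans hnest (hcube _))
        _ = ENNReal.ofReal (δ/2) * ENNReal.ofReal (4 * φ 0 / δ) := by
            rw [← ENNReal.ofReal_mul (by positivity)]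
            rw [show ((2:ℝ≥0∞)) = ENNReal.ofReal (2:ℝ) by norm_num]
            rw [← ENNReal.ofReal_mul (le_of_lt hc0)]
            congr 1
            field_simp
            ring
        _ ≤ ENNReal.ofReal (δ/2) * ellpNorm d p y := mul_le_mul_right hylow _
  -- normalize
  set a : ℝ := (ellpNorm d p y).toReal with ha
  have ha0 : 0 < a := ENNReal.toReal_pos hy0 hytop
  set cc : ℂ := ((a⁻¹ : ℝ) : ℂ) with hcc
  have hnc : ENNReal.ofReal ‖cc‖ = (ellpNorm d p y)⁻¹ := by
    rw [hcc, Complex.norm_real, Real.norm_eq_abs, abs_of_nonneg (by positivity),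
      ENNReal.ofReal_inv_of_pos ha0, ha, ENNReal.ofReal_toReal hytop]
  refine ⟨cc • y, X.smul_mem cc hyX, ?_, ?_⟩
  · rw [ellp_smul hp, hnc, ENNReal.inv_mul_cancel hy0 hytop]
  · calc mNorm d p φ (cc • y) ≤ ENNReal.ofReal ‖cc‖ * mNorm d p φ y := mNorm_smul hp φ cc y
      _ ≤ (ellpNorm d p y)⁻¹ * (ENNReal.ofReal (δ/2) * ellpNorm d p y) := by
          rw [hnc]
          exact mul_le_mul_right hmain _
      _ = ENNReal.ofReal (δ/2) * ((ellpNorm d p y)⁻¹ * ellpNorm d p y) := by ring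
      _ = ENNReal.ofReal (δ/2) := by rw [ENNReal.inv_mul_cancel hy0 hytop, mul_one]
      _ ≤ ENNReal.ofReal δ := ENNReal.ofReal_le_ofReal (by linarith)
      _ < ε := hδε
end
end
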